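/- arXiv:2408.09643 — 14 statements merged into one kernel-verified Lean document; each statement's English description precedes it below -/
import Mathlib

section
/- Let $\mathcal{P} = (\mathcal{C}, \mathcal{A})$ be a palette, $k \geq 1$ an integer, and suppose $\mathcal{A}$ does not contain $k$ triples of the form $(a_1,b_1,a_2), (a_2,b_2,a_3), \dots, (a_k,b_k,a_{k+1})$ (with colors not necessarily distinct). Then $|\mathcal{A}| \leq (\frac{1}{2} - \frac{1}{2k})|\mathcal{C}|^3$. -/
open Finset

namespace Stmt1Aux

variable {α : Type*}

def hasWalk (A : Finset (α × α × α)) (v : α) (j : ℕ) : Prop :=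
  ∃ a : Fin (j+1) → α, a 0 = v ∧ ∃ b : Fin j → α,
    ∀ i : Fin j, (a i.castSucc, b i, a i.succ) ∈ A

lemma hasWalk_zero (A : Finset (α × α × α)) (v : α) : hasWalk A v 0 :=
  ⟨fun _ => v, rfl, fun i => i.elim0, fun i => i.elim0⟩

lemma hasWalk_mono {A : Finset (α × α × α)} {v : α} {i j : ℕ} (hij : i ≤ j)
    (h : hasWalk A v j) : hasWalk A v i := by
  obtain ⟨a, ha0, b, hab⟩ := h
  refine ⟨fun m => a (m.castLE (by omega)), by simp [ha0], fun m => b (m.castLE hij),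
    fun m => ?_⟩
  have h1 : ((m.castSucc).castLE (show i+1 ≤ j+1 by omega)) = (m.castLE hij).castSucc := by
    ext; simp
  have h2 : ((m.succ).castLE (show i+1 ≤ j+1 by omega)) = (m.castLE hij).succ := by
    ext; simp
  beta_reduce
  rw [h1, h2]
  exact hab _

lemma hasWalk_cons {A : Finset (α × α × α)} {u v b₀ : α} {j : ℕ}
    (hb : (u, b₀, v) ∈ A) (h : hasWalk A v j) : hasWalk A u (j+1) := by
  obtain ⟨a, ha0, b, hab⟩ := h
  refine ⟨Fin.cons u a, rfl, Fin.cons b₀ b, fun i => ?_⟩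
  induction i using Fin.cases with
  | zero => simpa [ha0] using hb
  | succ m => simpa [← Fin.succ_castSucc] using hab m

end Stmt1Aux

/-- If a palette `(C, A)` contains no chain of `k` triples
`(a₁,b₁,a₂), (a₂,b₂,a₃), …, (a_k,b_k,a_{k+1})`, then
`|A| ≤ (1/2 - 1/(2k))|C|³`. -/
theorem stmt1 {α : Type*} [Fintype α] (A : Finset (α × α × α)) (k : ℕ) (hk : 1 ≤ k)
    (h : ¬ ∃ (a : Fin (k + 1) → α) (b : Fin k → α),
        ∀ i : Fin k, (a i.castSucc, b i, a i.succ) ∈ A) :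
    (A.card : ℚ) ≤ (1 / 2 - 1 / (2 * k)) * (Fintype.card α : ℚ) ^ 3 := by
  classical
  set n := Fintype.card α with hn
  have hnoP : ∀ (v : α) (j : ℕ), Stmt1Aux.hasWalk A v j → j < k := by
    intro v j hw
    by_contra hj
    push_neg at hj
    obtain ⟨a, -, b, hab⟩ := Stmt1Aux.hasWalk_mono hj hw
    exact h ⟨a, b, hab⟩
  set ℓ : α → ℕ := fun v => Nat.findGreatest (Stmt1Aux.hasWalk A v) k with hℓ
  have hspec : ∀ v : α, Stmt1Aux.hasWalk A v (ℓ v) := fun v =>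
    Nat.findGreatest_spec (Nat.zero_le k) (Stmt1Aux.hasWalk_zero A v)
  have hℓlt : ∀ v, ℓ v < k := fun v => hnoP v _ (hspec v)
  have hedge : ∀ {u b w : α}, (u, b, w) ∈ A → ℓ w < ℓ u := by
    intro u b w hm
    have hu : Stmt1Aux.hasWalk A u (ℓ w + 1) := Stmt1Aux.hasWalk_cons hm (hspec w)
    exact Nat.lt_of_succ_le (Nat.le_findGreatest (hℓlt w) hu)
  set f : α → Fin k := fun v => ⟨ℓ v, hℓlt v⟩ with hf
  set LT := univ.filter fun p : α × α => f p.2 < f p.1 with hLT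
  set GT' := univ.filter fun p : α × α => f p.1 < f p.2 with hGT
  set EQ := univ.filter fun p : α × α => f p.1 = f p.2 with hEQ
  have hA : A.card ≤ LT.card * n := by
    calc A.card ≤ (univ.filter fun t : α × α × α => f t.2.2 < f t.1).card := by
          apply card_le_card
          intro t ht
          simp only [mem_filter, mem_univ, true_and, hf, Fin.mk_lt_mk]
          obtain ⟨u, b, w⟩ := t
          exact hedge ht
      _ = LT.card * n := by
          rw [hn, ← Finset.card_univ, ← card_product]
          apply Finset.card_bij (fun t _ => ((t.1, t.2.2), t.2.1))
          · rintro ⟨u, b, w⟩ ht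
            simp only [mem_filter, mem_univ, true_and] at ht
            simp only [mem_product, hLT, mem_filter, mem_univ, true_and]
            exact ⟨ht, trivial⟩
          · rintro ⟨u1, b1, w1⟩ h1 ⟨u2, b2, w2⟩ h2 he
            simp only [Prod.mk.injEq] at he ⊢
            exact ⟨he.1.1, he.2, he.1.2⟩
          · rintro ⟨⟨u, w⟩, b⟩ hp
            simp only [mem_product, hLT, mem_filter, mem_univ, true_and] at hp
            exact ⟨(u, b, w), by simp only [mem_filter, mem_univ, true_and]; exact hp.1, rfl⟩
  have hsymm : LT.card = GT'.card := by
    apply Finset.card_bij (fun p _ => p.swap)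
    · rintro ⟨u, w⟩ hp
      simp only [hLT, mem_filter, mem_univ, true_and] at hp
      simp only [hGT, mem_filter, mem_univ, true_and, Prod.swap]
      exact hp
    · rintro ⟨u1, w1⟩ h1 ⟨u2, w2⟩ h2 he
      simp only [Prod.swap, Prod.mk.injEq] at he
      simp [he.1, he.2]
    · rintro ⟨u, w⟩ hp
      simp only [hGT, mem_filter, mem_univ, true_and] at hp
      refine ⟨(w, u), ?_, rfl⟩
      simp only [hLT, mem_filter, mem_univ, true_and]
      exact hp
  have hsplit : LT.card + GT'.card + EQ.card = n ^ 2 := by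
    have hcover : (LT ∪ GT') ∪ EQ = (univ : Finset (α × α)) := by
      ext ⟨u, w⟩
      simp only [mem_union, hLT, hGT, hEQ, mem_filter, mem_univ, true_and, iff_true]
      rcases lt_trichotomy (f u) (f w) with h1 | h1 | h1
      · exact Or.inl (Or.inr h1)
      · exact Or.inr h1
      · exact Or.inl (Or.inl h1)
    have hd1 : Disjoint LT GT' := by
      rw [Finset.disjoint_left]
      rintro ⟨u, w⟩ h1 h2
      simp only [hLT, hGT, mem_filter, mem_univ, true_and] at h1 h2
      exact absurd h2 (not_lt_of_gt h1)
    have hd2 : Disjoint (LT ∪ GT') EQ := by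
      rw [Finset.disjoint_left]
      rintro ⟨u, w⟩ h1 h2
      simp only [mem_union, hLT, hGT, hEQ, mem_filter, mem_univ, true_and] at h1 h2
      rcases h1 with h1 | h1
      · exact absurd h2.symm (ne_of_lt h1)
      · exact absurd h2 (ne_of_lt h1)
    have hcards : (univ : Finset (α × α)).card = n ^ 2 := by
      rw [Finset.card_univ, Fintype.card_prod, ← hn, sq]
    rw [← hcards, ← hcover, card_union_of_disjoint hd2, card_union_of_disjoint hd1]
  set fib : Fin k → Finset α := fun i => univ.filter fun v => f v = i with hfib
  have hEQcard : EQ.card = ∑ i, (fib i).card ^ 2 := by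
    have heq : EQ = univ.biUnion fun i => fib i ×ˢ fib i := by
      ext ⟨u, w⟩
      simp only [hEQ, mem_filter, mem_univ, true_and, mem_biUnion, mem_product, hfib]
      constructor
      · intro hp
        exact ⟨f u, rfl, hp.symm⟩
      · rintro ⟨i, h1, h2⟩
        rw [h1, h2]
    rw [heq, card_biUnion]
    · exact Finset.sum_congr rfl fun i _ => by rw [card_product, sq]
    · intro i _ j _ hij
      rw [Function.onFun, Finset.disjoint_left]
      rintro ⟨u, w⟩ h1 h2
      simp only [mem_product, hfib, mem_filter, mem_univ, true_and] at h1 h2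
      exact hij (h1.1 ▸ h2.1)
  have hfibsum : ∑ i, (fib i).card = n := by
    rw [hn, ← Finset.card_univ]
    exact (Finset.card_eq_sum_card_fiberwise fun x _ => mem_univ (f x)).symm
  have hCS : (n : ℚ) ^ 2 ≤ (k : ℚ) * (EQ.card : ℚ) := by
    have hcs := sq_sum_le_card_mul_sum_sq (s := (univ : Finset (Fin k)))
      (f := fun i => ((fib i).card : ℚ))
    rw [← Nat.cast_sum, hfibsum] at hcs
    have hcast : ((EQ.card : ℚ)) = ∑ i, ((fib i).card : ℚ) ^ 2 := by
      rw [hEQcard]; push_cast; ring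
    rw [hcast]
    simpa using hcs
  have hk' : (1 : ℚ) ≤ (k : ℚ) := by exact_mod_cast hk
  have hkpos : (0 : ℚ) < (k : ℚ) := by linarith
  have hArat : (A.card : ℚ) ≤ (LT.card : ℚ) * n := by exact_mod_cast hA
  have hsplit' : 2 * (LT.card : ℚ) + (EQ.card : ℚ) = (n : ℚ) ^ 2 := by
    have hs : 2 * LT.card + EQ.card = n ^ 2 := by omega
    exact_mod_cast hs
  have hrw : (1 / 2 - 1 / (2 * (k : ℚ))) = ((k : ℚ) - 1) / (2 * k) := by
    field_simp
  rw [hrw, div_mul_eq_mul_div, le_div_iff₀ (by positivity)]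
  have hNnn : (0 : ℚ) ≤ (n : ℚ) := Nat.cast_nonneg n
  have h1 : (n : ℚ) ^ 2 * ((k : ℚ) * n) ≤ ((k : ℚ) * EQ.card) * ((k : ℚ) * n) := by
    apply mul_le_mul_of_nonneg_right hCS
    positivity
  have h2 : (A.card : ℚ) * (2 * k) ≤ ((LT.card : ℚ) * n) * (2 * k) := by
    apply mul_le_mul_of_nonneg_right hArat
    positivity
  have h3 : (2 * (LT.card : ℚ) + EQ.card) * ((k : ℚ) * n) = (n : ℚ) ^ 2 * ((k : ℚ) * n) := by
    rw [hsplit']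
  nlinarith [h1, h2, h3, sq_nonneg ((n : ℚ)), mul_nonneg hNnn hkpos.le,
    mul_nonneg (mul_nonneg hNnn hNnn) hNnn]
end

section
/- Let $G$ be a finite directed graph (loops allowed) on vertex set $\mathcal{C}$ with no directed walk of length $k$ (i.e., no sequence of $k$ consecutive edges $v_0 \to v_1 \to \cdots \to v_k$, vertices not necessarily distinct). Then the number of directed edges of $G$ is at most $\frac{1}{2}(1 - \frac{1}{k})|\mathcal{C}|^2$. -/
open Finset

/-- A finite directed graph (loops allowed) with no directed walk of length `k`
has at most `(1/2)(1 - 1/k)|C|²` edges. -/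
theorem stmt2 {α : Type*} [Fintype α] (E : Finset (α × α)) (k : ℕ)
    (h : ¬ ∃ v : Fin (k + 1) → α, ∀ i : Fin k, (v i.castSucc, v i.succ) ∈ E) :
    (E.card : ℚ) ≤ (1 / 2) * (1 - 1 / k) * (Fintype.card α : ℚ) ^ 2 := by
  classical
  rcases isEmpty_or_nonempty α with hα | hα
  · have hE : E = ∅ := eq_empty_of_forall_notMem (fun p _ => (IsEmpty.false p.1).elim)
    have hc : Fintype.card α = 0 := Fintype.card_eq_zero
    simp [hE, hc]
  rcases Nat.eq_zero_or_pos k with rfl | hk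
  · exact absurd ⟨fun _ => hα.some, fun i => i.elim0⟩ h
  -- P v m : there is a walk of length m ending at v
  set P : α → ℕ → Prop := fun v m =>
    ∃ w : Fin (m + 1) → α, w (Fin.last m) = v ∧ ∀ i : Fin m, (w i.castSucc, w i.succ) ∈ E with hP
  have Pbound : ∀ v m, P v m → m < k := by
    intro v m ⟨w, _, hw⟩
    by_contra hmk
    push_neg at hmk
    refine h ⟨fun i => w ⟨i.1, by omega⟩, fun i => ?_⟩
    have := hw ⟨i.1, by omega⟩
    convert this using 3 <;> simp [Fin.ext_iff]
  have P0 : ∀ v, P v 0 := fun v => ⟨fun _ => v, rfl, fun i => i.elim0⟩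
  set r : α → ℕ := fun v => Nat.findGreatest (P v) (k - 1) with hr
  have hrP : ∀ v, P v (r v) := fun v => Nat.findGreatest_spec (Nat.zero_le _) (P0 v)
  have hrlt : ∀ v, r v < k := fun v => Pbound v (r v) (hrP v)
  have hedge : ∀ p ∈ E, r p.1 < r p.2 := by
    rintro ⟨u, v⟩ hp
    obtain ⟨w, hwl, hw⟩ := hrP u
    have hPv : P v (r u + 1) := by
      refine ⟨fun i => if hi : i.1 ≤ r u then w ⟨i.1, by omega⟩ else v, ?_, ?_⟩
      · have : ¬ (Fin.last (r u + 1)).1 ≤ r u := by simp [Fin.last]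
        simp [this]
      · intro i
        have h1 : (i.castSucc : Fin (r u + 2)).1 = i.1 := rfl
        have h2 : (i.succ : Fin (r u + 2)).1 = i.1 + 1 := rfl
        by_cases hi : i.1 < r u
        · have := hw ⟨i.1, hi⟩
          simp only [h1, h2]
          rw [dif_pos (by omega), dif_pos (by omega)]
          convert this using 3 <;> simp [Fin.ext_iff]
        · have hi' : i.1 = r u := by omega
          simp only [h1, h2]
          rw [dif_pos (by omega), dif_neg (by omega)]
          have heq : ∀ hh : i.1 < r u + 1, w ⟨i.1, hh⟩ = u := by
            intro hh
            have he : (⟨i.1, hh⟩ : Fin (r u + 1)) = Fin.last (r u) := by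
              ext; simpa using hi'
            rw [he, hwl]
          rw [heq]; exact hp
    have hb := Pbound v _ hPv
    have h5 : r u + 1 ≤ r v := Nat.le_findGreatest (by omega) hPv
    dsimp only
    omega
  -- counting
  set n := Fintype.card α with hn
  set a : ℕ → ℕ := fun i => (univ.filter (fun v => r v = i)).card with ha
  have hsum : ∑ i ∈ range k, a i = n := by
    rw [hn, ← card_univ]
    exact (Finset.card_eq_sum_card_fiberwise (fun v _ => mem_range.2 (hrlt v))).symm
  set S : Finset (α × α) := univ.filter (fun p => r p.1 < r p.2) with hS
  set S' : Finset (α × α) := univ.filter (fun p => r p.2 < r p.1) with hS'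
  set D : Finset (α × α) := univ.filter (fun p => r p.2 = r p.1) with hD
  have hES : E ⊆ S := fun p hp => mem_filter.2 ⟨mem_univ _, hedge p hp⟩
  have hSS' : S.card = S'.card := by
    refine Finset.card_bij' (fun p _ => p.swap) (fun p _ => p.swap) ?_ ?_ ?_ ?_
    · intro p hp
      simp only [hS, hS', mem_filter] at hp ⊢
      exact ⟨mem_univ _, hp.2⟩
    · intro p hp
      simp only [hS, hS', mem_filter] at hp ⊢
      exact ⟨mem_univ _, hp.2⟩
    · intro p _; exact Prod.swap_swap p
    · intro p _; exact Prod.swap_swap p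
  have hpart : S.card + (S'.card + D.card) = n ^ 2 := by
    have h1 := Finset.card_filter_add_card_filter_not
      (s := (univ : Finset (α × α))) (p := fun p => r p.1 < r p.2)
    have h2 : (univ : Finset (α × α)).filter (fun p => ¬ r p.1 < r p.2)
        = S' ∪ D := by
      rw [hS', hD, ← filter_or]
      apply filter_congr
      intro p _
      constructor
      · intro hle; exact (Nat.lt_or_ge (r p.2) (r p.1)).imp id (fun h' => by omega)
      · intro h'; omega
    have h3 : Disjoint S' D := by
      rw [disjoint_filter]
      intro p _ hlt heq; omega
    have h4 : (univ : Finset (α × α)).card = n ^ 2 := by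
      simp [hn, sq]
    rw [h2, card_union_of_disjoint h3, ← hS] at h1
    omega
  have hDcard : D.card = ∑ i ∈ range k, a i ^ 2 := by
    have : D = (range k).biUnion
        (fun i => (univ.filter (fun v => r v = i)) ×ˢ (univ.filter (fun v => r v = i))) := by
      ext p
      simp only [hD, mem_filter, mem_biUnion, mem_range, mem_product, mem_univ, true_and]
      constructor
      · intro hp; exact ⟨r p.1, hrlt p.1, rfl, hp⟩
      · rintro ⟨i, _, h1, h2⟩; omega
    rw [this, card_biUnion]
    · apply Finset.sum_congr rfl
      intro i _
      rw [card_product, sq]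
    · intro i _ j _ hij
      simp only [disjoint_left, mem_product, mem_filter, mem_univ, true_and]
      rintro p ⟨h1, _⟩ ⟨h2, _⟩
      omega
  -- Cauchy-Schwarz
  have hCS : (n : ℚ) ^ 2 ≤ (k : ℚ) * (D.card : ℚ) := by
    have := sq_sum_le_card_mul_sum_sq (s := range k) (f := fun i => (a i : ℚ))
    rw [← Nat.cast_sum, hsum, card_range] at this
    rw [hDcard]
    push_cast
    convert this using 2
  -- final arithmetic
  have hK0 : (0 : ℚ) < (k : ℚ) := by exact_mod_cast hk
  have hqN : 2 * S.card + D.card = n ^ 2 := by omega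
  have hq : 2 * (S.card : ℚ) + (D.card : ℚ) = (n : ℚ) ^ 2 := by exact_mod_cast hqN
  have hEleS : (E.card : ℚ) ≤ (S.card : ℚ) := by exact_mod_cast card_le_card hES
  rw [show (1 / 2 : ℚ) * (1 - 1 / (k : ℚ)) * (n : ℚ) ^ 2
      = ((k : ℚ) * (n : ℚ) ^ 2 - (n : ℚ) ^ 2) / (2 * (k : ℚ)) from by field_simp]
  rw [le_div_iff₀ (by positivity)]
  nlinarith [mul_le_mul_of_nonneg_right hEleS (by positivity : (0:ℚ) ≤ 2 * (k : ℚ)),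
    mul_le_mul_of_nonneg_left hCS (le_of_lt hK0), hq, hCS]
end

section
/- Let $G$ be a finite directed graph (loops allowed) on vertex set $\mathcal{C}$ of size $n$ which contains no three edges of the form $\vec{ab}, \vec{ac}, \vec{bc}$ (vertices $a, b, c$ not necessarily distinct). Then $\sum_{c \in \mathcal{C}} d^-(c)^2 \leq n^3/4$, where $d^-(c)$ denotes the in-degree of $c$. -/
/-- If a finite directed graph (loops allowed) contains no three edges of the form
`a→b`, `a→c`, `b→c` (vertices not necessarily distinct), then the sum of the
squares of the in-degrees is at most `n³/4`. -/
theorem stmt3 {α : Type*} [Fintype α] [DecidableEq α] (E : Finset (α × α))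
    (h : ¬ ∃ a b c : α, (a, b) ∈ E ∧ (a, c) ∈ E ∧ (b, c) ∈ E) :
    (∑ c : α, ((E.filter (fun p => p.2 = c)).card : ℚ) ^ 2)
      ≤ (Fintype.card α : ℚ) ^ 3 / 4 := by
  set n : ℚ := (Fintype.card α : ℚ) with hn
  set din : α → ℚ := fun c => ((E.filter (fun p => p.2 = c)).card : ℚ) with hdin
  set dout : α → ℚ := fun a => ((E.filter (fun p => p.1 = a)).card : ℚ) with hdout
  have hdin_card : ∀ c, (E.filter (fun p => p.2 = c)).card
      = (Finset.univ.filter (fun b => (b, c) ∈ E)).card := by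
    intro c
    apply Finset.card_bij (fun p _ => p.1)
    · intro p hp
      simp only [Finset.mem_filter] at hp ⊢
      refine ⟨Finset.mem_univ _, ?_⟩
      rw [show ((p.1 : α), c) = p from Prod.ext rfl hp.2.symm]; exact hp.1
    · intro p hp q hq hpq
      simp only [Finset.mem_filter] at hp hq
      exact Prod.ext hpq (hp.2.trans hq.2.symm)
    · intro b hb
      simp only [Finset.mem_filter] at hb
      exact ⟨(b, c), Finset.mem_filter.mpr ⟨hb.2, rfl⟩, rfl⟩
  have hdout_card : ∀ a, (E.filter (fun p => p.1 = a)).card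
      = (Finset.univ.filter (fun b => (a, b) ∈ E)).card := by
    intro a
    apply Finset.card_bij (fun p _ => p.2)
    · intro p hp
      simp only [Finset.mem_filter] at hp ⊢
      refine ⟨Finset.mem_univ _, ?_⟩
      rw [show ((a : α), p.2) = p from Prod.ext hp.2.symm rfl]; exact hp.1
    · intro p hp q hq hpq
      simp only [Finset.mem_filter] at hp hq
      exact Prod.ext (hp.2.trans hq.2.symm) hpq
    · intro b hb
      simp only [Finset.mem_filter] at hb
      exact ⟨(a, b), Finset.mem_filter.mpr ⟨hb.2, rfl⟩, rfl⟩
  have key : ∀ p ∈ E, din p.2 ≤ n - dout p.1 := by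
    rintro ⟨a, c⟩ hp
    have hdisj : Disjoint (Finset.univ.filter (fun b => (b, c) ∈ E))
        (Finset.univ.filter (fun b => (a, b) ∈ E)) := by
      rw [Finset.disjoint_left]
      intro b hb1 hb2
      simp only [Finset.mem_filter] at hb1 hb2
      exact h ⟨a, b, c, hb2.2, hp, hb1.2⟩
    have hcard : (Finset.univ.filter (fun b => (b, c) ∈ E)).card
        + (Finset.univ.filter (fun b => (a, b) ∈ E)).card ≤ Fintype.card α := by
      rw [← Finset.card_union_of_disjoint hdisj]
      exact Finset.card_le_univ _
    have := hdin_card c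
    have := hdout_card a
    simp only [hdin, hdout, hn]
    rw [hdin_card c, hdout_card a]
    have := (Nat.cast_le (α := ℚ)).mpr hcard
    push_cast at this ⊢
    linarith
  have step1 : ∑ c : α, din c ^ 2 = ∑ p ∈ E, din p.2 := by
    rw [← Finset.sum_fiberwise_of_maps_to' (g := fun p : α × α => p.2)
      (t := Finset.univ) (fun p _ => Finset.mem_univ _) din]
    refine Finset.sum_congr rfl fun c _ => ?_
    rw [Finset.sum_const, nsmul_eq_mul, sq]
  have step2 : ∑ p ∈ E, (n - dout p.1) = ∑ a : α, dout a * (n - dout a) := by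
    rw [← Finset.sum_fiberwise_of_maps_to' (g := fun p : α × α => p.1)
      (t := Finset.univ) (fun p _ => Finset.mem_univ _) (fun a => n - dout a)]
    refine Finset.sum_congr rfl fun a _ => ?_
    rw [Finset.sum_const, nsmul_eq_mul]
  have step3 : ∑ c : α, din c ^ 2 ≤ ∑ a : α, dout a * (n - dout a) := by
    rw [step1, ← step2]
    exact Finset.sum_le_sum key
  refine step3.trans ?_
  have hterm : ∀ a : α, dout a * (n - dout a) ≤ n ^ 2 / 4 := by
    intro a
    nlinarith [sq_nonneg (n - 2 * dout a)]
  calc ∑ a : α, dout a * (n - dout a) ≤ ∑ _a : α, n ^ 2 / 4 :=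
        Finset.sum_le_sum fun a _ => hterm a
    _ = n * (n ^ 2 / 4) := by rw [Finset.sum_const, nsmul_eq_mul]; simp [hn]
    _ = n ^ 3 / 4 := by ring
end

section
/- Let $K_4^{(3)-}$ be the 3-uniform hypergraph on 4 vertices with exactly 3 edges (obtained from the complete 3-graph on 4 vertices by deleting one edge). Let $\mathcal{Q}$ be the palette with color set $\{1,2\}$ and admissible triples $\{(1,2,1), (2,1,2)\}$. Then $K_4^{(3)-}$ does not admit $\mathcal{Q}$. -/
/-- A 3-graph `E` on vertex set `V` admits a palette with color set `C` and
admissible triples `A ⊆ C³` if there is a linear order on `V` (given by an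
injection into `ℕ`) and a symmetric coloring `φ` of pairs such that every edge
`{u,v,w}` with `u ≺ v ≺ w` satisfies `(φ u v, φ u w, φ v w) ∈ A`. -/
def Admits {V C : Type*} [DecidableEq V] (E : Set (Finset V)) (A : Set (C × C × C)) : Prop :=
  ∃ (f : V → ℕ) (φ : V → V → C), Function.Injective f ∧ (∀ u v, φ u v = φ v u) ∧
    ∀ u v w, ({u, v, w} : Finset V) ∈ E → f u < f v → f v < f w →
      (φ u v, φ u w, φ v w) ∈ A

/-- `K₄⁽³⁾⁻`: the 3-uniform hypergraph on 4 vertices with exactly 3 edges. -/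
def K43minus : Set (Finset (Fin 4)) := {{0, 1, 2}, {0, 1, 3}, {0, 2, 3}}

lemma spoke {f : Fin 4 → ℕ} {φ : Fin 4 → Fin 4 → Fin 2}
    (hf : Function.Injective f) (hsym : ∀ u v, φ u v = φ v u)
    (h' : ∀ u v w, ({u, v, w} : Finset (Fin 4)) ∈ K43minus → f u < f v → f v < f w →
      φ u v = φ v w ∧ φ u v ≠ φ u w)
    {x y : Fin 4} (hx : x ≠ 0) (hy : y ≠ 0) (hxy : x ≠ y)
    (hm : ({0, x, y} : Finset (Fin 4)) ∈ K43minus) :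
    φ 0 x = φ 0 y ↔ ¬ (f x < f 0 ↔ f y < f 0) := by
  have hm1 : ({0, y, x} : Finset (Fin 4)) ∈ K43minus := by
    rwa [Finset.pair_comm y x]
  have hm2 : ({x, 0, y} : Finset (Fin 4)) ∈ K43minus := by
    rwa [Finset.insert_comm]
  have hm3 : ({y, 0, x} : Finset (Fin 4)) ∈ K43minus := by
    rw [Finset.insert_comm, Finset.pair_comm y x]; exact hm
  have hm4 : ({x, y, 0} : Finset (Fin 4)) ∈ K43minus := by
    rw [Finset.pair_comm y 0, Finset.insert_comm]; exact hm
  have hm5 : ({y, x, 0} : Finset (Fin 4)) ∈ K43minus := by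
    rw [Finset.pair_comm x 0, Finset.insert_comm, Finset.pair_comm y x]; exact hm
  have h0x : f 0 ≠ f x := fun h => hx (hf h).symm
  have h0y : f 0 ≠ f y := fun h => hy (hf h).symm
  have hfxy : f x ≠ f y := fun h => hxy (hf h)
  rcases lt_trichotomy (f 0) (f x) with h1 | h1 | h1
  · rcases lt_trichotomy (f 0) (f y) with h2 | h2 | h2
    · -- 0 is the minimum
      have hne : φ 0 x ≠ φ 0 y := by
        rcases hfxy.lt_or_gt with h3 | h3
        · exact (h' 0 x y hm h1 h3).2
        · exact fun hh => (h' 0 y x hm1 h2 h3).2 hh.symm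
      simp [hne, asymm h1, asymm h2]
    · exact absurd h2 h0y
    · -- y < 0 < x
      have heq : φ 0 x = φ 0 y := by
        have e1 := (h' y 0 x hm3 h2 h1).1
        rw [← e1, hsym]
      simp [heq, asymm h1, h2]
  · exact absurd h1 h0x
  · rcases lt_trichotomy (f 0) (f y) with h2 | h2 | h2
    · -- x < 0 < y
      have heq : φ 0 x = φ 0 y := by
        have e1 := (h' x 0 y hm2 h1 h2).1
        rw [hsym 0 x]; exact e1
      simp [heq, h1, asymm h2]
    · exact absurd h2 h0y
    · -- 0 is the maximum
      have hne : φ 0 x ≠ φ 0 y := by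
        rw [hsym 0 x, hsym 0 y]
        rcases hfxy.lt_or_gt with h3 | h3
        · obtain ⟨e1, e2⟩ := h' x y 0 hm4 h3 h2
          exact fun hh => e2 (e1.trans hh.symm)
        · obtain ⟨e1, e2⟩ := h' y x 0 hm5 h3 h1
          exact fun hh => (e2 (e1.trans hh)).elim
      simp [hne, h1, h2]

/-- `K₄⁽³⁾⁻` does not admit the two-color palette with admissible triples
`{(1,2,1), (2,1,2)}` (colors written as `0, 1 : Fin 2`). -/
theorem stmt4 :
    ¬ Admits K43minus
      ({((0 : Fin 2), (1 : Fin 2), (0 : Fin 2)), (1, 0, 1)} :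
        Set (Fin 2 × Fin 2 × Fin 2)) := by
  rintro ⟨f, φ, hf, hsym, h⟩
  have h' : ∀ u v w, ({u, v, w} : Finset (Fin 4)) ∈ K43minus → f u < f v → f v < f w →
      φ u v = φ v w ∧ φ u v ≠ φ u w := by
    intro u v w hm hlt1 hlt2
    have hA := h u v w hm hlt1 hlt2
    simp only [Set.mem_insert_iff, Set.mem_singleton_iff, Prod.mk.injEq] at hA
    rcases hA with ⟨h1, h2, h3⟩ | ⟨h1, h2, h3⟩ <;> rw [h1, h2, h3] <;>
      exact ⟨rfl, by decide⟩
  have m12 : ({0, 1, 2} : Finset (Fin 4)) ∈ K43minus := by simp [K43minus]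
  have m13 : ({0, 1, 3} : Finset (Fin 4)) ∈ K43minus := by simp [K43minus]
  have m23 : ({0, 2, 3} : Finset (Fin 4)) ∈ K43minus := by simp [K43minus]
  have s12 := spoke (x := 1) (y := 2) hf hsym h' (by decide) (by decide) (by decide) m12
  have s13 := spoke (x := 1) (y := 3) hf hsym h' (by decide) (by decide) (by decide) m13
  have s23 := spoke (x := 2) (y := 3) hf hsym h' (by decide) (by decide) (by decide) m23
  have key : ∀ a b c : Fin 2, a = b ↔ ((a = c) ↔ (b = c)) := by decide
  have k := key (φ 0 1) (φ 0 2) (φ 0 3)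
  tauto
end

section
/- Let $\mathcal{P} = (\mathcal{C}, \mathcal{A})$ be a palette such that $K_4^{(3)-}$ does not admit $\mathcal{P}$. Then $|\mathcal{A}| \leq |\mathcal{C}|^3/4$, i.e., $d(\mathcal{P}) \leq 1/4$. -/
open Finset

lemma arithAux (n h q u x d1 d2 : ℤ) (hh : 0 ≤ h) (hd1 : 0 ≤ d1) (hd2 : 0 ≤ d2) (hx : 0 ≤ x)
    (h1 : q = h + d1) (h2 : n = q + d2) (h3 : q ≤ x) (h4 : x < u) (h5 : n < 2*u)
    (h6 : u + x = n) :
    h*(4*u^2) + d1*n^2 + d2*(4*x^2) ≤ n^3 := by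
  have hn : 0 ≤ n := by linarith
  have t1 : 0 ≤ d1 * (4*u^2 - n^2) := mul_nonneg hd1 (by nlinarith)
  have t2 : 0 ≤ (x - q) * (4*u^2 - 4*x^2) := mul_nonneg (by linarith) (by nlinarith)
  have t3 : 0 ≤ n * (u - x)^2 := mul_nonneg hn (sq_nonneg _)
  subst h1 h2
  have hu : u = h + d1 + d2 - x := by linarith
  subst hu
  nlinarith [t1, t2, t3]

lemma seqLemma {α : Type*} [Fintype α] (n : ℕ) (hn : Fintype.card α = n) (s : α → ℕ)
    (hc : ∀ z, s z + (Finset.univ.filter (fun y => n < s y + s z)).card ≤ n) :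
    4 * ∑ z, (s z)^2 ≤ n^3 := by
  classical
  have hsle : ∀ z, s z ≤ n := fun z => le_trans (Nat.le_add_right _ _) (hc z)
  by_cases hall : ∀ z, 2 * s z ≤ n
  · have hb : ∀ z ∈ (univ : Finset α), 4 * (s z)^2 ≤ n^2 := by
      intro z _
      have := hall z
      nlinarith
    calc 4 * ∑ z, (s z)^2 = ∑ z, 4 * (s z)^2 := by rw [Finset.mul_sum]
      _ ≤ ∑ _z : α, n^2 := Finset.sum_le_sum hb
      _ = n * n^2 := by rw [Finset.sum_const, card_univ, hn, smul_eq_mul]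
      _ = n^3 := by ring
  · push_neg at hall
    obtain ⟨z0, hz0⟩ := hall
    set H : Finset α := univ.filter (fun z => n < 2 * s z) with hH
    have hHne : H.Nonempty := ⟨z0, by simp [hH, hz0]⟩
    obtain ⟨zs, hzsH, hzsmax⟩ := Finset.exists_max_image H s hHne
    set u := s zs with hu
    have hun : n < 2 * u := (mem_filter.mp hzsH).2
    have huln : u ≤ n := hsle zs
    set x := n - u with hx
    have hxu : x < u := by omega
    have h2x : 2 * x < n := by omega
    set Q : Finset α := univ.filter (fun y => x < s y) with hQdef
    have hQx : Q.card ≤ x := by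
      have heq : (univ.filter (fun y => n < s y + s zs)) = Q := by
        apply Finset.filter_congr
        intro y _
        constructor <;> intro <;> omega
      have := hc zs
      rw [heq] at this
      omega
    have hHQ : H ⊆ Q := by
      intro z hz
      simp only [hH, mem_filter, mem_univ, true_and] at hz
      simp only [hQdef, mem_filter, mem_univ, true_and]
      omega
    have hsplit : ∑ z, 4 * (s z)^2 =
        (∑ z ∈ H, 4 * (s z)^2) + (∑ z ∈ Q \ H, 4 * (s z)^2) + (∑ z ∈ univ \ Q, 4 * (s z)^2) := by
      rw [← Finset.sum_sdiff (subset_univ Q), ← Finset.sum_sdiff hHQ]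
      ring
    have e2 : ∑ z ∈ H, 4 * (s z)^2 ≤ H.card * (4 * u^2) := by
      apply Finset.sum_le_card_nsmul
      intro z hz
      have := hzsmax z hz
      nlinarith
    have e1 : ∑ z ∈ Q \ H, 4 * (s z)^2 ≤ (Q.card - H.card) * n^2 := by
      rw [← Finset.card_sdiff_of_subset hHQ]
      apply Finset.sum_le_card_nsmul
      intro z hz
      have hzH : z ∉ H := (Finset.mem_sdiff.mp hz).2
      have hno : ¬ (n < 2 * s z) := by
        intro hcon
        exact hzH (by simp [hH, hcon])
      nlinarith [hsle z]
    have e3 : ∑ z ∈ univ \ Q, 4 * (s z)^2 ≤ (n - Q.card) * (4 * x^2) := by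
      have hcard : (univ \ Q).card = n - Q.card := by
        rw [Finset.card_sdiff_of_subset (subset_univ Q), card_univ, hn]
      rw [← hcard]
      apply Finset.sum_le_card_nsmul
      intro z hz
      have hzQ : z ∉ Q := (Finset.mem_sdiff.mp hz).2
      have hno : ¬ (x < s z) := by
        intro hcon
        exact hzQ (by simp [hQdef, hcon])
      nlinarith
    have hhq : H.card ≤ Q.card := Finset.card_le_card hHQ
    have hqn : Q.card ≤ n := by
      have := Finset.card_le_card (subset_univ Q)
      rwa [card_univ, hn] at this
    obtain ⟨d1, hd1⟩ : ∃ d1, Q.card = H.card + d1 := ⟨Q.card - H.card, by omega⟩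
    obtain ⟨d2, hd2⟩ : ∃ d2, n = Q.card + d2 := ⟨n - Q.card, by omega⟩
    have hux : u + x = n := by omega
    have harith : H.card * (4 * u^2) + (Q.card - H.card) * n^2 + (n - Q.card) * (4 * x^2)
        ≤ n^3 := by
      have hqsub : Q.card - H.card = d1 := by omega
      have hnsub : n - Q.card = d2 := by omega
      rw [hqsub, hnsub]
      have goal' : (H.card : ℤ) * (4*(u:ℤ)^2) + (d1:ℤ) * (n:ℤ)^2 + (d2:ℤ) * (4*(x:ℤ)^2)
          ≤ (n:ℤ)^3 := by
        apply arithAux (q := (Q.card : ℤ))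
        · exact Int.ofNat_nonneg H.card
        · exact Int.ofNat_nonneg d1
        · exact Int.ofNat_nonneg d2
        · exact Int.ofNat_nonneg x
        · exact_mod_cast hd1
        · exact_mod_cast hd2
        · exact_mod_cast hQx
        · exact_mod_cast hxu
        · exact_mod_cast hun
        · exact_mod_cast hux
      exact_mod_cast goal'
    calc 4 * ∑ z, (s z)^2 = ∑ z, 4 * (s z)^2 := by rw [Finset.mul_sum]
      _ = (∑ z ∈ H, 4 * (s z)^2) + (∑ z ∈ Q \ H, 4 * (s z)^2) + (∑ z ∈ univ \ Q, 4 * (s z)^2) :=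
        hsplit
      _ ≤ H.card * (4 * u^2) + (Q.card - H.card) * n^2 + (n - Q.card) * (4 * x^2) :=
        add_le_add (add_le_add e2 e1) e3
      _ ≤ n^3 := harith

lemma noTT12 {γ : Type*} (A : Set (γ × γ × γ)) (h : ¬ Admits K43minus A)
    (a b c w1 w2 w3 : γ) (h1 : (a,b,w1) ∈ A) (h2 : (a,c,w2) ∈ A) (h3 : (b,c,w3) ∈ A) :
    False := by
  apply h
  classical
  set F : ℕ → γ := fun e => if e = 1 then a else if e = 2 then b else if e = 3 then c
    else if e = 5 then w1 else if e = 7 then w2 else w3 with hF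
  refine ⟨Fin.val, fun u v => F (u.val * v.val + u.val + v.val), Fin.val_injective, ?_, ?_⟩
  · intro u v
    show F (u.val * v.val + u.val + v.val) = F (v.val * u.val + v.val + u.val)
    congr 1
    ring
  · intro u v w hmem hu hv
    fin_cases u <;> fin_cases v <;> fin_cases w <;>
      first
        | exact absurd hu (by decide)
        | exact absurd hv (by decide)
        | exact absurd hmem (by simp only [K43minus, Set.mem_insert_iff,
            Set.mem_singleton_iff]; decide)
        | (norm_num [hF]; first | exact h1 | exact h2 | exact h3)

lemma noTT23 {γ : Type*} (A : Set (γ × γ × γ)) (h : ¬ Admits K43minus A)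
    (a b c w1 w2 w3 : γ) (h1 : (w1,a,b) ∈ A) (h2 : (w2,a,c) ∈ A) (h3 : (w3,b,c) ∈ A) :
    False := by
  apply h
  classical
  set F : ℕ → γ := fun e => if e = 1 then a else if e = 2 then b else if e = 3 then c
    else if e = 5 then w1 else if e = 7 then w2 else w3 with hF
  refine ⟨![3,0,1,2], fun u v => F (u.val * v.val + u.val + v.val), by decide, ?_, ?_⟩
  · intro u v
    show F (u.val * v.val + u.val + v.val) = F (v.val * u.val + v.val + u.val)
    congr 1
    ring
  · intro u v w hmem hu hv
    fin_cases u <;> fin_cases v <;> fin_cases w <;>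
      first
        | exact absurd hu (by decide)
        | exact absurd hv (by decide)
        | exact absurd hmem (by simp only [K43minus, Set.mem_insert_iff,
            Set.mem_singleton_iff]; decide)
        | (norm_num [hF]; first | exact h1 | exact h2 | exact h3)

/-- If `K₄⁽³⁾⁻` does not admit a palette `(C, A)`, then `|A| ≤ |C|³/4`. -/
theorem stmt5 {γ : Type*} [Fintype γ] (A : Finset (γ × γ × γ))
    (h : ¬ Admits K43minus (↑A : Set (γ × γ × γ))) :
    (A.card : ℚ) ≤ (Fintype.card γ : ℚ) ^ 3 / 4 := by
  classical
  set n := Fintype.card γ with hn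
  set G12 : Finset (γ × γ) := A.image (fun x => (x.1, x.2.1)) with hG12
  set G23 : Finset (γ × γ) := A.image (fun x => (x.2.1, x.2.2)) with hG23
  have memG12 : ∀ y z : γ, (y, z) ∈ G12 → ∃ w, (y, z, w) ∈ A := by
    intro y z hyz
    rw [hG12, Finset.mem_image] at hyz
    obtain ⟨x, hx, hxe⟩ := hyz
    refine ⟨x.2.2, ?_⟩
    have h1 : x.1 = y := congrArg Prod.fst hxe
    have h2 : x.2.1 = z := congrArg Prod.snd hxe
    rw [← h1, ← h2]
    simpa using hx
  have memG23 : ∀ y z : γ, (y, z) ∈ G23 → ∃ w, (w, y, z) ∈ A := by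
    intro y z hyz
    rw [hG23, Finset.mem_image] at hyz
    obtain ⟨x, hx, hxe⟩ := hyz
    refine ⟨x.1, ?_⟩
    have h1 : x.2.1 = y := congrArg Prod.fst hxe
    have h2 : x.2.2 = z := congrArg Prod.snd hxe
    rw [← h1, ← h2]
    simpa using hx
  set s : γ → ℕ := fun b => (univ.filter (fun a => (a, b) ∈ G12)).card with hs
  set t : γ → ℕ := fun b => (univ.filter (fun c => (b, c) ∈ G23)).card with ht
  -- degree condition for s
  have hcond_s : ∀ z, s z + (univ.filter (fun y => n < s y + s z)).card ≤ n := by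
    intro z
    have hdisj : ∀ y, (y, z) ∈ G12 →
        Disjoint (univ.filter (fun x => (x, y) ∈ G12)) (univ.filter (fun x => (x, z) ∈ G12)) := by
      intro y hyz
      rw [Finset.disjoint_left]
      intro x hxy hxz
      simp only [mem_filter, mem_univ, true_and] at hxy hxz
      obtain ⟨w1, hw1⟩ := memG12 _ _ hxy
      obtain ⟨w2, hw2⟩ := memG12 _ _ hxz
      obtain ⟨w3, hw3⟩ := memG12 _ _ hyz
      exact noTT12 (↑A) h x y z w1 w2 w3 (by exact_mod_cast hw1) (by exact_mod_cast hw2)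
        (by exact_mod_cast hw3)
    have hsub : (univ.filter (fun y => (y, z) ∈ G12)) ⊆
        (univ.filter (fun y => ¬ (n < s y + s z))) := by
      intro y hy
      simp only [mem_filter, mem_univ, true_and] at hy ⊢
      have hcard : s y + s z ≤ n := by
        have hd := hdisj y hy
        have := Finset.card_union_of_disjoint hd
        have hle : ((univ.filter (fun x => (x, y) ∈ G12)) ∪
            (univ.filter (fun x => (x, z) ∈ G12))).card ≤ n :=
          le_trans (Finset.card_le_card (subset_univ _)) (le_of_eq Finset.card_univ)
        rw [this] at hle
        exact hle
      omega
    have h1 : s z ≤ (univ.filter (fun y => ¬ (n < s y + s z))).card :=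
      le_trans (le_of_eq rfl) (Finset.card_le_card hsub)
    have h2 := Finset.card_filter_add_card_filter_not
      (s := (univ : Finset γ)) (p := fun y => n < s y + s z)
    rw [card_univ] at h2
    omega
  have hcond_t : ∀ z, t z + (univ.filter (fun y => n < t y + t z)).card ≤ n := by
    intro z
    have hdisj : ∀ y, (z, y) ∈ G23 →
        Disjoint (univ.filter (fun x => (z, x) ∈ G23)) (univ.filter (fun x => (y, x) ∈ G23)) := by
      intro y hzy
      rw [Finset.disjoint_left]
      intro x hzx hyx
      simp only [mem_filter, mem_univ, true_and] at hzx hyx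
      obtain ⟨w1, hw1⟩ := memG23 _ _ hzy
      obtain ⟨w2, hw2⟩ := memG23 _ _ hzx
      obtain ⟨w3, hw3⟩ := memG23 _ _ hyx
      exact noTT23 (↑A) h z y x w1 w2 w3 (by exact_mod_cast hw1) (by exact_mod_cast hw2)
        (by exact_mod_cast hw3)
    have hsub : (univ.filter (fun y => (z, y) ∈ G23)) ⊆
        (univ.filter (fun y => ¬ (n < t y + t z))) := by
      intro y hy
      simp only [mem_filter, mem_univ, true_and] at hy ⊢
      have hcard : t y + t z ≤ n := by
        have hd := (hdisj y hy).symm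
        have := Finset.card_union_of_disjoint hd
        have hle : ((univ.filter (fun x => (y, x) ∈ G23)) ∪
            (univ.filter (fun x => (z, x) ∈ G23))).card ≤ n :=
          le_trans (Finset.card_le_card (subset_univ _)) (le_of_eq Finset.card_univ)
        rw [this] at hle
        exact hle
      omega
    have h1 : t z ≤ (univ.filter (fun y => ¬ (n < t y + t z))).card :=
      Finset.card_le_card hsub
    have h2 := Finset.card_filter_add_card_filter_not
      (s := (univ : Finset γ)) (p := fun y => n < t y + t z)
    rw [card_univ] at h2
    omega
  -- step A
  have hA : A.card ≤ ∑ b, s b * t b := by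
    rw [Finset.card_eq_sum_card_fiberwise (f := fun x : γ × γ × γ => x.2.1)
      (t := univ) (fun x _ => mem_univ _)]
    apply Finset.sum_le_sum
    intro b _
    have : s b * t b = ((univ.filter (fun a => (a, b) ∈ G12)) ×ˢ
        (univ.filter (fun c => (b, c) ∈ G23))).card := by
      rw [Finset.card_product]
    rw [this]
    apply Finset.card_le_card_of_injOn (fun x => (x.1, x.2.2))
    · intro x hx
      simp only [mem_coe, mem_filter, mem_univ, true_and] at hx ⊢
      obtain ⟨hxA, hxb⟩ := hx
      rw [Finset.mem_product]
      constructor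
      · simp only [mem_filter, mem_univ, true_and]
        rw [hG12, Finset.mem_image]
        exact ⟨x, hxA, by rw [hxb]⟩
      · simp only [mem_filter, mem_univ, true_and]
        rw [hG23, Finset.mem_image]
        exact ⟨x, hxA, by rw [hxb]⟩
    · intro x hx y hy hxy
      simp only [mem_coe, mem_filter] at hx hy
      have hxy' : (x.1, x.2.2) = (y.1, y.2.2) := hxy
      obtain ⟨h1, h2⟩ := Prod.ext_iff.mp hxy'
      have h3 : x.2.1 = y.2.1 := by rw [hx.2, hy.2]
      exact Prod.ext h1 (Prod.ext h3 h2)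
  -- Cauchy-Schwarz and conclusion
  have hcs : (∑ b, s b * t b)^2 ≤ (∑ b, (s b)^2) * (∑ b, (t b)^2) :=
    Finset.sum_mul_sq_le_sq_mul_sq univ s t
  have hs4 : 4 * ∑ b, (s b)^2 ≤ n^3 := seqLemma n hn.symm s hcond_s
  have ht4 : 4 * ∑ b, (t b)^2 ≤ n^3 := seqLemma n hn.symm t hcond_t
  have hfinal : 4 * A.card ≤ n^3 := by
    have h16 : (4 * ∑ b, s b * t b)^2 ≤ (n^3)^2 := by
      calc (4 * ∑ b, s b * t b)^2 = 16 * (∑ b, s b * t b)^2 := by ring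
        _ ≤ 16 * ((∑ b, (s b)^2) * (∑ b, (t b)^2)) := Nat.mul_le_mul_left 16 hcs
        _ = (4 * ∑ b, (s b)^2) * (4 * ∑ b, (t b)^2) := by ring
        _ ≤ n^3 * n^3 := Nat.mul_le_mul hs4 ht4
        _ = (n^3)^2 := by ring
    have := (Nat.pow_le_pow_iff_left (n := 2) (by norm_num)).mp h16
    omega
  rw [le_div_iff₀ (by norm_num : (0:ℚ) < 4)]
  have : ((A.card : ℚ)) * 4 = ((4 * A.card : ℕ) : ℚ) := by push_cast; ring
  rw [this]
  calc ((4 * A.card : ℕ) : ℚ) ≤ ((n^3 : ℕ) : ℚ) := by exact_mod_cast hfinal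
    _ = (n : ℚ)^3 := by push_cast; ring
end

section
/- Let $\mathcal{P} = (\mathcal{C}, \mathcal{A})$ be a palette with density $d(\mathcal{P}) > \frac{1}{2} - \frac{1}{2k}$ for some integer $k \geq 1$. Then $\mathcal{A}$ contains $k$ triples of the form $(a_1, b_1, a_2), (a_2, b_2, a_3), \dots, (a_k, b_k, a_{k+1})$, where the colors $a_i$ and $b_j$ are not necessarily distinct. -/
open Finset

/-- A chain of `m` triples in `A` starting at `v`. -/
def PChain {α : Type*} (A : Finset (α × α × α)) (m : ℕ) (v : α) : Prop :=
  ∃ (a : Fin (m + 1) → α) (b : Fin m → α), a 0 = v ∧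
    ∀ i : Fin m, (a i.castSucc, b i, a i.succ) ∈ A

lemma pchain_zero {α : Type*} (A : Finset (α × α × α)) (v : α) : PChain A 0 v :=
  ⟨fun _ => v, Fin.elim0, rfl, fun i => i.elim0⟩

lemma pchain_cons {α : Type*} {A : Finset (α × α × α)} {m : ℕ} {x y z : α}
    (hxyz : (x, y, z) ∈ A) (h : PChain A m z) : PChain A (m + 1) x := by
  obtain ⟨a, b, ha0, hab⟩ := h
  refine ⟨Fin.cases x a, Fin.cases y b, by simp, ?_⟩
  intro i
  induction i using Fin.cases with
  | zero =>
    simp only [Fin.castSucc_zero, Fin.cases_zero, Fin.cases_succ, ha0]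
    exact hxyz
  | succ j =>
    simp only [← Fin.succ_castSucc, Fin.cases_succ]
    exact hab j

/-- Any palette `(C, A)` with density greater than `1/2 - 1/(2k)` contains a chain
of `k` triples `(a₁,b₁,a₂), (a₂,b₂,a₃), …, (a_k,b_k,a_{k+1})`. -/
theorem stmt6 {α : Type*} [Fintype α] [Nonempty α] (A : Finset (α × α × α))
    (k : ℕ) (hk : 1 ≤ k)
    (hd : (1 / 2 - 1 / (2 * k) : ℚ) < (A.card : ℚ) / (Fintype.card α : ℚ) ^ 3) :
    ∃ (a : Fin (k + 1) → α) (b : Fin k → α),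
      ∀ i : Fin k, (a i.castSucc, b i, a i.succ) ∈ A := by
  classical
  by_contra hcon
  -- no chain of length k starting anywhere
  have hnochain : ∀ v : α, ¬ PChain A k v := by
    rintro v ⟨a, b, _, hab⟩
    exact hcon ⟨a, b, hab⟩
  set n := Fintype.card α with hn
  -- the rank function
  set f : α → ℕ := fun v => Nat.findGreatest (fun m => PChain A m v) (k - 1) with hf
  have hfle : ∀ v, f v ≤ k - 1 := fun v => Nat.findGreatest_le _
  have hfltk : ∀ v, f v < k := fun v => lt_of_le_of_lt (hfle v) (Nat.sub_lt hk one_pos)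
  have hfchain : ∀ v, PChain A (f v) v := fun v =>
    Nat.findGreatest_spec (P := fun m => PChain A m v) (m := 0) (Nat.zero_le _)
      (pchain_zero A v)
  have hfdec : ∀ x y z : α, (x, y, z) ∈ A → f z < f x := by
    intro x y z hxyz
    have hch : PChain A (f z + 1) x := pchain_cons hxyz (hfchain z)
    have h5 := hfle z
    have hle : f z + 1 ≤ k - 1 := by
      by_contra hgt
      have : f z + 1 = k := by omega
      exact hnochain x (this ▸ hch)
    have h6 : f z + 1 ≤ f x := Nat.le_findGreatest (P := fun m => PChain A m x) hle hch
    omega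
  -- counting
  set Sset : Finset (α × α) := univ.filter (fun p => f p.2 < f p.1) with hSset
  set S'set : Finset (α × α) := univ.filter (fun p => f p.1 < f p.2) with hS'set
  set Dset : Finset (α × α) := univ.filter (fun p => f p.1 = f p.2) with hDset
  have hswap : Sset.card = S'set.card := by
    apply Finset.card_nbij' (fun p => p.swap) (fun p => p.swap)
    · intro p hp; simp only [Finset.mem_coe, hSset, hS'set, mem_filter, mem_univ, true_and] at hp ⊢
      exact hp
    · intro p hp; simp only [Finset.mem_coe, hSset, hS'set, mem_filter, mem_univ, true_and] at hp ⊢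
      exact hp
    · intro p _; simp
    · intro p _; simp
  have hsplit : Dset.card + Sset.card + S'set.card = n ^ 2 := by
    have h1 : (univ : Finset (α × α)).card = n ^ 2 := by
      simp [Finset.card_univ, Fintype.card_prod, hn, sq]
    have h2 : Sset.card + (univ.filter (fun p : α × α => ¬ f p.2 < f p.1)).card
        = (univ : Finset (α × α)).card :=
      Finset.card_filter_add_card_filter_not _
    have h3 : (univ.filter (fun p : α × α => ¬ f p.2 < f p.1)) =
        Dset ∪ S'set := by
      ext p
      simp only [mem_filter, mem_univ, true_and, hDset, hS'set, mem_union]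
      omega
    have h4 : Disjoint Dset S'set := by
      rw [Finset.disjoint_filter]
      intro p _ h
      omega
    rw [h3, Finset.card_union_of_disjoint h4] at h2
    omega
  -- fibers: Dset.card ≥ n²/k
  have hDbig : (n : ℚ) ^ 2 ≤ (k : ℚ) * Dset.card := by
    set c : ℕ → ℕ := fun i => (univ.filter (fun x : α => f x = i)).card with hc
    have hsum : ∑ i ∈ Finset.range k, c i = n := by
      have h := Finset.card_eq_sum_card_fiberwise (s := (univ : Finset α))
        (t := Finset.range k) (f := f) (fun x _ => Finset.mem_range.2 (hfltk x))
      simpa [hc, hn] using h.symm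
    have hsumsq : ∑ i ∈ Finset.range k, c i ^ 2 = Dset.card := by
      have hfib : ∀ p ∈ Dset, f p.1 ∈ Finset.range k := fun p _ =>
        Finset.mem_range.2 (hfltk p.1)
      rw [Finset.card_eq_sum_card_fiberwise hfib]
      refine Finset.sum_congr rfl ?_
      intro i _
      have : Dset.filter (fun p => f p.1 = i) =
          (univ.filter (fun x : α => f x = i)) ×ˢ (univ.filter (fun x : α => f x = i)) := by
        ext p
        simp only [hDset, mem_filter, mem_univ, true_and, Finset.mem_product, Finset.filter_filter]
        constructor
        · rintro ⟨h1, h2⟩; exact ⟨h2 ▸ rfl, by omega⟩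
        · rintro ⟨h1, h2⟩; exact ⟨by omega, h1⟩
      rw [this, Finset.card_product, hc, sq]
    have hcs := sq_sum_le_card_mul_sum_sq (s := Finset.range k) (f := fun i => (c i : ℚ))
    rw [← Nat.cast_sum, hsum] at hcs
    have : ∑ i ∈ Finset.range k, (c i : ℚ) ^ 2 = (Dset.card : ℚ) := by
      rw [← hsumsq]; push_cast; ring
    rw [this, Finset.card_range] at hcs
    exact_mod_cast hcs
  -- |A| ≤ n * Sset.card
  have hAcard : A.card ≤ n * Sset.card := by
    have hsub : A ⊆ univ.filter (fun t : α × α × α => f t.2.2 < f t.1) := by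
      intro t ht
      simp only [mem_filter, mem_univ, true_and]
      exact hfdec t.1 t.2.1 t.2.2 (by rwa [show (t.1, t.2.1, t.2.2) = t from rfl])
    have hcardB : (univ.filter (fun t : α × α × α => f t.2.2 < f t.1)).card
        = ((univ : Finset α) ×ˢ Sset).card := by
      apply Finset.card_nbij' (fun t => (t.2.1, (t.1, t.2.2))) (fun p => (p.2.1, p.1, p.2.2))
      · intro t ht
        simp only [Finset.mem_coe, mem_filter, mem_univ, true_and] at ht
        simp [hSset, ht]
      · intro p hp
        simp only [Finset.mem_coe, Finset.mem_product, mem_univ, true_and, hSset, mem_filter] at hp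
        simp [hp]
      · intro t _; rfl
      · intro p _; rfl
    calc A.card ≤ (univ.filter (fun t : α × α × α => f t.2.2 < f t.1)).card :=
          Finset.card_le_card hsub
      _ = n * Sset.card := by
          rw [hcardB, Finset.card_product, Finset.card_univ]
  -- final arithmetic
  have hnpos : 0 < n := Fintype.card_pos
  have hnQ : (1 : ℚ) ≤ (n : ℚ) := by exact_mod_cast hnpos
  have hkQ : (1 : ℚ) ≤ (k : ℚ) := by exact_mod_cast hk
  have hAQ : (A.card : ℚ) ≤ (n : ℚ) * Sset.card := by exact_mod_cast hAcard
  have hsplitQ : (Dset.card : ℚ) + 2 * Sset.card = (n : ℚ) ^ 2 := by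
    have h : Dset.card + 2 * Sset.card = n ^ 2 := by omega
    exact_mod_cast h
  have hn3 : (0 : ℚ) < (n : ℚ) ^ 3 := by positivity
  have hd' : ((1 : ℚ) / 2 - 1 / (2 * k)) * (n : ℚ) ^ 3 < (A.card : ℚ) := by
    rw [lt_div_iff₀ hn3] at hd
    exact hd
  have hk0 : (0 : ℚ) < (k : ℚ) := by linarith
  have h2S : 2 * (Sset.card : ℚ) * k ≤ ((k : ℚ) - 1) * (n : ℚ) ^ 2 := by
    nlinarith [hDbig, hsplitQ]
  have key : ((k : ℚ) - 1) * (n : ℚ) ^ 3 < 2 * (k : ℚ) * (A.card : ℚ) := by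
    have h2 := mul_lt_mul_of_pos_left hd' (by positivity : (0 : ℚ) < 2 * (k : ℚ))
    calc ((k : ℚ) - 1) * (n : ℚ) ^ 3
        = (2 * (k : ℚ)) * (((1 : ℚ) / 2 - 1 / (2 * k)) * (n : ℚ) ^ 3) := by
          field_simp
      _ < 2 * (k : ℚ) * (A.card : ℚ) := h2
  have h3 : (n : ℚ) * (2 * (Sset.card : ℚ) * k) ≤ (n : ℚ) * (((k : ℚ) - 1) * (n : ℚ) ^ 2) :=
    mul_le_mul_of_nonneg_left h2S (by positivity)
  have h4 : 2 * (k : ℚ) * (A.card : ℚ) ≤ 2 * (k : ℚ) * ((n : ℚ) * Sset.card) :=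
    mul_le_mul_of_nonneg_left hAQ (by positivity)
  nlinarith [key, h3, h4]
end

section
/- For every $k \geq 2$, the 3-graph $F_k$ constructed as follows does not admit the palette $\mathcal{P}_k = ([k], \{(x,y,z) : x < z\})$: take any linear $(k+2)$-uniform hypergraph $H$ on $[n]$ such that for every permutation $\sigma$ of $[n]$ some edge of $H$ is monotone under $\sigma$; for each edge of $H$ with vertices $v_1 < v_2 < \cdots < v_{k+2}$, place 3-edges $v_i v_{i+1} v_{i+2}$ for $i \in [k]$. -/
/-- The 3-graph `F_k` obtained from a `(k+2)`-uniform hypergraph `H` on `[n]`: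
for every edge of `H` with vertices `v₁ < v₂ < ⋯ < v_{k+2}`, place the 3-edges
`vᵢ v_{i+1} v_{i+2}` for `i ∈ [k]`, i.e. all consecutive triples of an edge. -/
def Fk {n : ℕ} (H : Finset (Finset (Fin n))) : Set (Finset (Fin n)) :=
  {t | ∃ e ∈ H, ∃ u v w : Fin n, t = {u, v, w} ∧ u < v ∧ v < w ∧
    u ∈ e ∧ v ∈ e ∧ w ∈ e ∧
    (∀ x ∈ e, ¬(u < x ∧ x < v)) ∧ (∀ x ∈ e, ¬(v < x ∧ x < w))}

/-- If `H` is a linear `(k+2)`-uniform hypergraph on `[n]` such that every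
permutation of `[n]` is monotone on some edge of `H`, then the 3-graph `F_k` does
not admit the palette `P_k = ([k], {(x,y,z) : x < z})`. -/
theorem stmt9 (k : ℕ) (hk : 2 ≤ k) (n : ℕ) (H : Finset (Finset (Fin n)))
    (huni : ∀ e ∈ H, e.card = k + 2)
    (hlin : ∀ e ∈ H, ∀ f ∈ H, e ≠ f → (e ∩ f).card ≤ 1)
    (hmono : ∀ σ : Equiv.Perm (Fin n), ∃ e ∈ H,
      StrictMonoOn σ (↑e : Set (Fin n)) ∨ StrictAntiOn σ (↑e : Set (Fin n))) :
    ¬ Admits (Fk H) {t : Fin k × Fin k × Fin k | t.1 < t.2.2} := by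
  rintro ⟨f, φ, hf, hφ, hA⟩
  -- ranking permutation
  set τ : Equiv.Perm (Fin n) := (Tuple.sort f)⁻¹ with hτ
  have hsm : StrictMono (f ∘ Tuple.sort f) :=
    (Tuple.monotone_sort f).strictMono_of_injective (hf.comp (Equiv.injective _))
  have key : ∀ u v : Fin n, τ u < τ v ↔ f u < f v := by
    intro u v
    constructor
    · intro h
      have := hsm h
      simpa [τ] using this
    · intro h
      by_contra h'
      rcases lt_or_eq_of_le (not_lt.mp h') with h2 | h2
      · have := hsm h2
        simp only [Function.comp_apply, Equiv.Perm.inv_def, Equiv.apply_symm_apply, τ] at this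
        omega
      · have huv : u = v := τ.injective h2.symm
        rw [huv] at h
        exact lt_irrefl _ h
  obtain ⟨e, he, hcase⟩ := hmono τ
  have hcard : e.card = k + 2 := huni e he
  set g := e.orderIsoOfFin hcard with hg
  set v : Fin (k + 2) → Fin n := fun j => (g j : Fin n) with hv
  have hvm : StrictMono v := fun a b h => by
    exact_mod_cast g.strictMono h
  have hvmem : ∀ j, v j ∈ e := fun j => (g j).2
  -- no element of e strictly between consecutive v's
  have hbet : ∀ (a : Fin (k + 1)), ∀ x ∈ e, ¬(v a.castSucc < x ∧ x < v a.succ) := by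
    rintro a x hx ⟨h1, h2⟩
    set j := g.symm ⟨x, hx⟩ with hj
    have hxj : x = v j := by simp [v, j]
    rw [hxj] at h1 h2
    have l1 : a.castSucc < j := by
      by_contra hc
      exact absurd (hvm.le_iff_le.mpr (not_lt.mp hc)) (not_le.mpr h1)
    have l2 : j < a.succ := by
      by_contra hc
      exact absurd (hvm.le_iff_le.mpr (not_lt.mp hc)) (not_le.mpr h2)
    have := Fin.castSucc_lt_iff_succ_le.mp l1
    omega
  -- triples are edges of Fk
  have hFk : ∀ i : Fin k,
      ({v i.castSucc.castSucc, v i.castSucc.succ, v i.succ.succ} : Finset (Fin n)) ∈ Fk H := by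
    intro i
    refine ⟨e, he, v i.castSucc.castSucc, v i.castSucc.succ, v i.succ.succ, rfl,
      hvm (by simp [Fin.lt_def]), hvm (by simp [Fin.lt_def]), hvmem _, hvmem _, hvmem _, ?_, ?_⟩
    · have := hbet i.castSucc
      simpa using this
    · have h := hbet i.succ
      intro x hx
      have := h x hx
      simpa using this
  -- f monotone or antitone on v
  rcases hcase with hmon | hanti
  · have hfm : ∀ a b : Fin (k+2), a < b → f (v a) < f (v b) := by
      intro a b h
      exact (key _ _).mp (hmon (hvmem a) (hvmem b) (hvm h))
    set c : Fin (k + 1) → Fin k := fun i =>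
      φ (v i.castSucc) (v i.succ) with hc
    have hcm : StrictMono c := by
      rw [Fin.strictMono_iff_lt_succ]
      intro i
      have h := hA (v i.castSucc.castSucc) (v i.castSucc.succ) (v i.succ.succ) (hFk i)
        (hfm _ _ (by simp [Fin.lt_def])) (hfm _ _ (by simp [Fin.lt_def]))
      simp only [Set.mem_setOf_eq] at h
      simpa [c] using h
    have := hcm.injective
    have hcard := Fintype.card_le_of_injective c this
    simp at hcard
  · have hfm : ∀ a b : Fin (k+2), a < b → f (v b) < f (v a) := by
      intro a b h
      exact (key _ _).mp (hanti (hvmem a) (hvmem b) (hvm h))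
    set c : Fin (k + 1) → Fin k := fun i =>
      φ (v i.succ) (v i.castSucc) with hc
    have hcm : StrictAnti c := by
      rw [Fin.strictAnti_iff_succ_lt]
      intro i
      have heq : ({v i.succ.succ, v i.castSucc.succ, v i.castSucc.castSucc} : Finset (Fin n))
          = {v i.castSucc.castSucc, v i.castSucc.succ, v i.succ.succ} := by
        ext x; simp; tauto
      have h := hA (v i.succ.succ) (v i.castSucc.succ) (v i.castSucc.castSucc)
        (heq ▸ hFk i)
        (hfm _ _ (by simp [Fin.lt_def])) (hfm _ _ (by simp [Fin.lt_def]))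
      simp only [Set.mem_setOf_eq] at h
      simpa [c, hφ] using h
    have := hcm.injective
    have hcard := Fintype.card_le_of_injective c this
    simp at hcard
end

section
/- For every $k \geq 2$, the 3-graph $F_k$ constructed as follows admits every palette $\mathcal{P} = (\mathcal{C}, \mathcal{A})$ of density $d(\mathcal{P}) > \frac{1}{2} - \frac{1}{2k}$: take any linear $(k+2)$-uniform hypergraph $H$ on $[n]$, and for each edge of $H$ with vertices $v_1 < v_2 < \cdots < v_{k+2}$, place 3-edges $v_i v_{i+1} v_{i+2}$ for $i \in [k]$. -/
open Finset

lemma chain_exists {γ : Type*} [Fintype γ] (A : Finset (γ × γ × γ)) (k : ℕ) (hk : 2 ≤ k)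
    (hd : (1 / 2 - 1 / (2 * k) : ℚ) < (A.card : ℚ) / (Fintype.card γ : ℚ) ^ 3) :
    ∃ a b : ℕ → γ, ∀ i < k, (a i, b i, a (i + 1)) ∈ A := by
  classical
  have hkQ : (2:ℚ) ≤ (k:ℚ) := by exact_mod_cast hk
  have hkq : (0:ℚ) < 1/2 - 1/(2*(k:ℚ)) := by
    have h1 : 1/(2*(k:ℚ)) ≤ 1/4 := by
      rw [div_le_div_iff₀ (by linarith) (by norm_num)]
      linarith
    linarith
  have hNpos : 0 < Fintype.card γ := by
    by_contra h
    have hN0 : Fintype.card γ = 0 := by omega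
    have hz : ((Fintype.card γ : ℚ))^3 = 0 := by rw [hN0]; norm_num
    rw [hz, div_zero] at hd
    linarith
  have hne : Nonempty γ := Fintype.card_pos_iff.mp hNpos
  set N := Fintype.card γ with hNdef
  by_contra hno
  push_neg at hno
  set R : γ → γ → Prop := fun x y => ∃ c, (x, c, y) ∈ A with hRdef
  have hnoc : ¬ ∃ a : ℕ → γ, ∀ i < k, R (a i) (a (i+1)) := by
    rintro ⟨a, ha⟩
    have hb : ∀ i, ∃ c, i < k → (a i, c, a (i+1)) ∈ A := by
      intro i
      by_cases hi : i < k
      · obtain ⟨c, hc⟩ := ha i hi; exact ⟨c, fun _ => hc⟩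
      · exact ⟨Classical.arbitrary γ, fun h => absurd h hi⟩
    choose b hbs using hb
    obtain ⟨i, hik, hmem⟩ := hno a b
    exact hmem (hbs i hik)
  set W : γ → ℕ → Prop := fun v ℓ => ∃ a : ℕ → γ, a 0 = v ∧ ∀ i < ℓ, R (a i) (a (i+1)) with hWdef
  have hW0 : ∀ v, W v 0 := fun v => ⟨fun _ => v, rfl, by omega⟩
  have hWk : ∀ v ℓ, k ≤ ℓ → ¬ W v ℓ := by
    rintro v ℓ hkl ⟨aw, _, ha⟩
    exact hnoc ⟨aw, fun i hi => ha i (lt_of_lt_of_le hi hkl)⟩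
  set r : γ → ℕ := fun v => Nat.findGreatest (W v) (k-1) with hrdef
  have hWr : ∀ v, W v (r v) := fun v => Nat.findGreatest_spec (Nat.zero_le _) (hW0 v)
  have hrk : ∀ v, r v < k := fun v => lt_of_le_of_lt (Nat.findGreatest_le _) (by omega)
  have hstep : ∀ x y, R x y → r y < r x := by
    intro x y hxy
    obtain ⟨aw, h0, ha⟩ := hWr y
    have hWx : W x (r y + 1) := by
      refine ⟨fun i => if i = 0 then x else aw (i-1), rfl, ?_⟩
      intro i hi
      rcases Nat.eq_zero_or_pos i with h|h
      · subst h; simpa [h0] using hxy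
      · have h1 : i ≠ 0 := by omega
        have h2 : i + 1 ≠ 0 := by omega
        simp only [if_neg h1, if_neg h2]
        have h3 : i + 1 - 1 = (i - 1) + 1 := by omega
        rw [h3]
        exact ha _ (by omega)
    have hle : r y + 1 ≤ k - 1 := by
      by_contra hgt
      exact hWk x (r y + 1) (by have := hrk y; omega) hWx
    exact lt_of_lt_of_le (Nat.lt_succ_self _) (Nat.le_findGreatest hle hWx)
  set Sgt : Finset (γ × γ) := univ.filter (fun p => r p.2 < r p.1) with hSgt
  set Slt : Finset (γ × γ) := univ.filter (fun p => r p.1 < r p.2) with hSlt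
  set D : Finset (γ × γ) := univ.filter (fun p => r p.1 = r p.2) with hD
  have f1 : A.card ≤ N * Sgt.card := by
    calc A.card ≤ ((univ : Finset γ) ×ˢ Sgt).card := by
          apply Finset.card_le_card_of_injOn (fun t : γ×γ×γ => (t.2.1, (t.1, t.2.2)))
          · intro t ht
            simp only [Finset.mem_coe, Finset.mem_product, Finset.mem_univ, true_and, hSgt,
              Finset.mem_filter]
            exact hstep t.1 t.2.2 ⟨t.2.1, ht⟩
          · intro t1 _ t2 _ h
            simp only [Prod.ext_iff] at h ⊢
            tauto
      _ = N * Sgt.card := by rw [Finset.card_product, Finset.card_univ]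
  have fswap : Sgt.card = Slt.card := by
    have himg : Slt = Sgt.image Prod.swap := by
      ext ⟨x, y⟩
      simp only [hSlt, hSgt, Finset.mem_filter, Finset.mem_univ, true_and,
        Finset.mem_image, Prod.exists, Prod.swap_prod_mk, Prod.mk.injEq]
      constructor
      · intro h; exact ⟨y, x, h, rfl, rfl⟩
      · rintro ⟨a, b, h, rfl, rfl⟩; exact h
    rw [himg, Finset.card_image_of_injective _ Prod.swap_injective]
  have fsplit : Sgt.card + Slt.card + D.card = N^2 := by
    have h2 : (univ : Finset (γ × γ)).filter (fun p => ¬ r p.2 < r p.1) = Slt ∪ D := by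
      ext p
      simp only [Finset.mem_filter, Finset.mem_univ, true_and, Finset.mem_union, hSlt, hD]
      omega
    have h3 : (Slt ∪ D).card = Slt.card + D.card := by
      apply Finset.card_union_of_disjoint
      rw [Finset.disjoint_left]
      intro p hp1 hp2
      simp only [hSlt, hD, Finset.mem_filter] at hp1 hp2
      omega
    have hU : (univ : Finset (γ × γ)).card = N^2 := by
      rw [Finset.card_univ, Fintype.card_prod, sq, hNdef]
    have h1 : Sgt.card + (Slt.card + D.card) = N^2 := by
      rw [← h3, ← h2, hSgt, Finset.card_filter_add_card_filter_not, hU]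
    omega
  set cnt : ℕ → ℕ := fun i => (univ.filter (fun v => r v = i)).card with hcnt
  have hsum : ∑ i ∈ Finset.range k, cnt i = N := by
    rw [hNdef, ← Finset.card_univ (α := γ)]
    exact (Finset.card_eq_sum_card_fiberwise
      (fun x _ => Finset.mem_range.mpr (hrk x))).symm
  have hDsum : D.card = ∑ i ∈ Finset.range k, cnt i ^ 2 := by
    rw [Finset.card_eq_sum_card_fiberwise
      (f := fun p : γ × γ => r p.1) (t := Finset.range k)
      (fun p _ => Finset.mem_range.mpr (hrk p.1))]
    apply Finset.sum_congr rfl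
    intro i _
    have hfib : D.filter (fun p => r p.1 = i)
        = (univ.filter (fun v => r v = i)) ×ˢ (univ.filter (fun v => r v = i)) := by
      ext ⟨x, y⟩
      simp only [hD, Finset.mem_filter, Finset.mem_univ, true_and, Finset.mem_product]
      omega
    rw [hfib, Finset.card_product, sq]
  have hCS : N^2 ≤ k * D.card := by
    have := sq_sum_le_card_mul_sum_sq (s := Finset.range k)
      (f := fun i => (cnt i : ℚ))
    rw [Finset.card_range] at this
    have hcast : ((∑ i ∈ Finset.range k, cnt i : ℕ) : ℚ)^2
        ≤ (k : ℚ) * ((∑ i ∈ Finset.range k, cnt i ^ 2 : ℕ) : ℚ) := by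
      push_cast
      exact this
    rw [hsum, ← hDsum] at hcast
    exact_mod_cast hcast
  have f2 : 2 * Sgt.card + D.card = N^2 := by omega
  have key : A.card * (2*k) + N^3 ≤ k * N^3 := by
    calc A.card * (2*k) + N^3
        ≤ (N * Sgt.card) * (2*k) + N^3 := by
          have := Nat.mul_le_mul_right (2*k) f1; omega
      _ = N * (Sgt.card * (2*k) + N^2) := by ring
      _ ≤ N * (Sgt.card * (2*k) + k * D.card) := by
          apply Nat.mul_le_mul_left
          omega
      _ = N * (k * (2 * Sgt.card + D.card)) := by ring
      _ = k * N^3 := by rw [f2]; ring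
  have hkne : (k:ℚ) ≠ 0 := by positivity
  have hrw : (1/2 - 1/(2*(k:ℚ))) = ((k:ℚ)-1)/(2*(k:ℚ)) := by
    field_simp
  rw [hrw] at hd
  have hNQ : (0:ℚ) < (N:ℚ) := by exact_mod_cast hNpos
  have hN3 : (0:ℚ) < (N:ℚ)^3 := by positivity
  rw [div_lt_div_iff₀ (by linarith) hN3] at hd
  have keyq : (A.card : ℚ) * (2*(k:ℚ)) + (N:ℚ)^3 ≤ (k:ℚ) * (N:ℚ)^3 := by
    exact_mod_cast key
  nlinarith [hd, keyq]


section Aux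

variable {n : ℕ}

/-- Position (0-indexed) of `u` within edge `e`. -/
def posIn (e : Finset (Fin n)) (u : Fin n) : ℕ := (e.filter (· < u)).card

lemma posIn_succ {e : Finset (Fin n)} {u v : Fin n} (hu : u ∈ e)
    (huv : u < v) (hgap : ∀ x ∈ e, ¬(u < x ∧ x < v)) :
    posIn e v = posIn e u + 1 := by
  have hfe : e.filter (· < v) = insert u (e.filter (· < u)) := by
    ext x
    simp only [Finset.mem_filter, Finset.mem_insert]
    constructor
    · rintro ⟨hxe, hxv⟩
      rcases lt_trichotomy x u with h | h | h
      · exact Or.inr ⟨hxe, h⟩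
      · exact Or.inl h
      · exact absurd ⟨h, hxv⟩ (hgap x hxe)
    · rintro (rfl | ⟨hxe, hxu⟩)
      · exact ⟨hu, huv⟩
      · exact ⟨hxe, hxu.trans huv⟩
  rw [posIn, posIn, hfe, Finset.card_insert_of_notMem (by simp)]

lemma posIn_lt_card {e : Finset (Fin n)} {v : Fin n} (hv : v ∈ e) :
    posIn e v < e.card := by
  apply Finset.card_lt_card
  constructor
  · exact Finset.filter_subset _ _
  · intro hsub
    have := hsub hv
    simp at this

lemma triple_eq {α : Type*} [LinearOrder α] {u v w u' v' w' : α}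
    (h : ∀ x : α, (x = u ∨ x = v ∨ x = w) ↔ (x = u' ∨ x = v' ∨ x = w'))
    (h1 : u < v) (h2 : v < w) (h3 : u' < v') (h4 : v' < w') :
    u = u' ∧ v = v' ∧ w = w' := by
  have mu : u = u' ∨ u = v' ∨ u = w' := (h u).mp (Or.inl rfl)
  have mv : v = u' ∨ v = v' ∨ v = w' := (h v).mp (Or.inr (Or.inl rfl))
  have mw : w = u' ∨ w = v' ∨ w = w' := (h w).mp (Or.inr (Or.inr rfl))
  have mu' : u' = u ∨ u' = v ∨ u' = w := by
    have := (h u').mpr (Or.inl rfl)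
    tauto
  have mw' : w' = u ∨ w' = v ∨ w' = w := by
    have := (h w').mpr (Or.inr (Or.inr rfl))
    tauto
  have huu : u ≤ u' := by
    rcases mu' with rfl | rfl | rfl
    · exact le_rfl
    · exact h1.le
    · exact (h1.trans h2).le
  have huu2 : u' ≤ u := by
    rcases mu with rfl | rfl | rfl
    · exact le_rfl
    · exact h3.le
    · exact (h3.trans h4).le
  have hu : u = u' := le_antisymm huu huu2
  have hww2 : w ≤ w' := by
    rcases mw with rfl | rfl | rfl
    · exact (h3.trans h4).le
    · exact h4.le
    · exact le_rfl
  have hww : w' ≤ w := by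
    rcases mw' with rfl | rfl | rfl
    · exact (h1.trans h2).le
    · exact h2.le
    · exact le_rfl
  have hw : w = w' := le_antisymm hww2 hww
  refine ⟨hu, ?_, hw⟩
  rcases mv with rfl | rfl | rfl
  · exact absurd h1 (by rw [hu]; exact lt_irrefl _)
  · rfl
  · exact absurd h2 (by rw [hw]; exact lt_irrefl _)

variable {γ : Type*}

/-- The coloring of the pair `(u, v)` (assuming `u < v`): look up the edge
containing both and color by position. -/
noncomputable def psi (H : Finset (Finset (Fin n))) (a b : ℕ → γ) [Nonempty γ]
    (u v : Fin n) : γ :=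
  if h : ∃ e, e ∈ H ∧ u ∈ e ∧ v ∈ e then
    (if posIn h.choose v = posIn h.choose u + 1 then a (posIn h.choose u)
     else b (posIn h.choose u))
  else a 0

lemma psi_eq (H : Finset (Finset (Fin n))) (a b : ℕ → γ) [Nonempty γ]
    (hlin : ∀ e ∈ H, ∀ f ∈ H, e ≠ f → (e ∩ f).card ≤ 1)
    {e : Finset (Fin n)} (he : e ∈ H) {u v : Fin n} (hu : u ∈ e) (hv : v ∈ e)
    (huv : u ≠ v) :
    psi H a b u v
      = if posIn e v = posIn e u + 1 then a (posIn e u) else b (posIn e u) := by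
  have h : ∃ e', e' ∈ H ∧ u ∈ e' ∧ v ∈ e' := ⟨e, he, hu, hv⟩
  rw [psi, dif_pos h]
  obtain ⟨he', hu', hv'⟩ := h.choose_spec
  have hce : h.choose = e := by
    by_contra hne
    have hsub : ({u, v} : Finset (Fin n)) ⊆ h.choose ∩ e := by
      intro x hx
      rcases Finset.mem_insert.mp hx with rfl | hx
      · exact Finset.mem_inter.mpr ⟨hu', hu⟩
      · rw [Finset.mem_singleton] at hx
        subst hx
        exact Finset.mem_inter.mpr ⟨hv', hv⟩
    have hc := Finset.card_le_card hsub
    rw [Finset.card_pair huv] at hc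
    have := hlin _ he' _ he hne
    omega
  rw [hce]

end Aux



/-- If `H` is a linear `(k+2)`-uniform hypergraph on `[n]`, then the 3-graph `F_k`
admits every palette of density greater than `1/2 - 1/(2k)`. -/
theorem stmt10 (k : ℕ) (hk : 2 ≤ k) (n : ℕ) (H : Finset (Finset (Fin n)))
    (huni : ∀ e ∈ H, e.card = k + 2)
    (hlin : ∀ e ∈ H, ∀ f ∈ H, e ≠ f → (e ∩ f).card ≤ 1)
    {γ : Type*} [Fintype γ] (A : Finset (γ × γ × γ))
    (hd : (1 / 2 - 1 / (2 * k) : ℚ) < (A.card : ℚ) / (Fintype.card γ : ℚ) ^ 3) :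
    Admits (Fk H) (↑A : Set (γ × γ × γ)) := by

  classical
  have hkq : (0:ℚ) < 1/2 - 1/(2*(k:ℚ)) := by
    have hkQ : (2:ℚ) ≤ (k:ℚ) := by exact_mod_cast hk
    have h1 : 1/(2*(k:ℚ)) ≤ 1/4 := by
      rw [div_le_div_iff₀ (by linarith) (by norm_num)]
      linarith
    linarith
  have hApos : A.Nonempty := by
    rw [Finset.nonempty_iff_ne_empty]
    rintro rfl
    simp only [Finset.card_empty, Nat.cast_zero, zero_div] at hd
    linarith
  have hγ : Nonempty γ := ⟨hApos.choose.1⟩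
  obtain ⟨a, b, hab⟩ := chain_exists A k hk hd
  refine ⟨Fin.val, fun u v => if u ≤ v then psi H a b u v else psi H a b v u,
    Fin.val_injective, ?_, ?_⟩
  · intro u v
    rcases lt_trichotomy u v with h | rfl | h
    · simp only [if_pos h.le, if_neg (not_le.mpr h)]
    · simp
    · simp only [if_neg (not_le.mpr h), if_pos h.le]
  · intro u v w hE huv hvw
    have huv' : u < v := huv
    have hvw' : v < w := hvw
    simp only [Fk, Set.mem_setOf_eq] at hE
    obtain ⟨e, he, u', v', w', ht, h1, h2, hu'e, hv'e, hw'e, hgap1, hgap2⟩ := hE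
    have hmem : ∀ x : Fin n, (x = u ∨ x = v ∨ x = w) ↔ (x = u' ∨ x = v' ∨ x = w') := by
      intro x
      have := Finset.ext_iff.mp ht x
      simpa using this
    obtain ⟨rfl, rfl, rfl⟩ :
        u = u' ∧ v = v' ∧ w = w' := triple_eq hmem huv' hvw' h1 h2
    have hpv : posIn e v = posIn e u + 1 := posIn_succ hu'e huv' hgap1
    have hpw : posIn e w = posIn e v + 1 := posIn_succ hv'e hvw' hgap2
    have hwc : posIn e w < k + 2 := by rw [← huni e he]; exact posIn_lt_card hw'e
    have hik : posIn e u < k := by omega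
    have huw : u < w := huv'.trans hvw'
    have e1 : (if u ≤ v then psi H a b u v else psi H a b v u) = a (posIn e u) := by
      rw [if_pos huv'.le,
        psi_eq H a b hlin he hu'e hv'e (ne_of_lt huv'), if_pos hpv]
    have e2 : (if u ≤ w then psi H a b u w else psi H a b w u) = b (posIn e u) := by
      rw [if_pos huw.le,
        psi_eq H a b hlin he hu'e hw'e (ne_of_lt huw), if_neg (by omega)]
    have e3 : (if v ≤ w then psi H a b v w else psi H a b w v) = a (posIn e u + 1) := by
      rw [if_pos hvw'.le,
        psi_eq H a b hlin he hv'e hw'e (ne_of_lt hvw'), if_pos (by omega), hpv]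
    have hfin := hab _ hik
    rw [← e1, ← e2, ← e3] at hfin
    exact hfin
end

section
/- For every $k \geq 3$ there exists a positive integer $n$ and a linear $k$-uniform hypergraph $H$ on vertex set $[n]$ such that for every permutation $\sigma$ of $[n]$ there exists an edge $e$ of $H$ on whose vertices $\sigma$ is monotone (increasing or decreasing with respect to the natural order). -/
open Finset

namespace Stmt11Aux

variable {n : ℕ}

/-- monotonicity of `σ` on the finset `e` -/
def Mo (σ : Fin n → Fin n) (e : Finset (Fin n)) : Prop :=
  StrictMonoOn σ (↑e : Set (Fin n)) ∨ StrictAntiOn σ (↑e : Set (Fin n))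

lemma mo_mono {σ : Fin n → Fin n} {e T : Finset (Fin n)} (h : Mo σ e) (hT : T ⊆ e) : Mo σ T := by
  rcases h with h | h
  · exact Or.inl (h.mono (coe_subset.2 hT))
  · exact Or.inr (h.mono (coe_subset.2 hT))

lemma erdos_szekeres {k : ℕ} (hk : 1 ≤ k) (σ : Fin n → Fin n) (hσ : Function.Injective σ)
    (S : Finset (Fin n)) (hS : (k-1)*(k-1)+1 ≤ S.card) :
    ∃ T ⊆ S, T.card = k ∧ Mo σ T := by
  classical
  by_contra hcon
  push_neg at hcon
  set C1 : Fin n → Finset (Finset (Fin n)) := fun a =>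
    S.powerset.filter (fun T => a ∈ T ∧ (∀ x ∈ T, x ≤ a) ∧ StrictMonoOn σ (↑T : Set (Fin n)))
    with hC1
  set C2 : Fin n → Finset (Finset (Fin n)) := fun a =>
    S.powerset.filter (fun T => a ∈ T ∧ (∀ x ∈ T, x ≤ a) ∧ StrictAntiOn σ (↑T : Set (Fin n)))
    with hC2
  set f : Fin n → ℕ := fun a => (C1 a).sup Finset.card with hf
  set g : Fin n → ℕ := fun a => (C2 a).sup Finset.card with hg
  have hsing1 : ∀ a ∈ S, {a} ∈ C1 a := by
    intro a ha
    simp only [hC1, mem_filter, mem_powerset]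
    refine ⟨singleton_subset_iff.2 ha, mem_singleton_self a, ?_, ?_⟩
    · intro x hx; rw [mem_singleton] at hx; exact le_of_eq hx
    · intro x hx y hy hlt
      simp only [coe_singleton, Set.mem_singleton_iff] at hx hy
      subst hx; subst hy; exact absurd hlt (lt_irrefl _)
  have hsing2 : ∀ a ∈ S, {a} ∈ C2 a := by
    intro a ha
    simp only [hC2, mem_filter, mem_powerset]
    refine ⟨singleton_subset_iff.2 ha, mem_singleton_self a, ?_, ?_⟩
    · intro x hx; rw [mem_singleton] at hx; exact le_of_eq hx
    · intro x hx y hy hlt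
      simp only [coe_singleton, Set.mem_singleton_iff] at hx hy
      subst hx; subst hy; exact absurd hlt (lt_irrefl _)
  have hf1 : ∀ a ∈ S, 1 ≤ f a := by
    intro a ha
    have h : ({a} : Finset (Fin n)).card ≤ f a := Finset.le_sup (hsing1 a ha)
    rw [card_singleton] at h
    exact h
  have hg1 : ∀ a ∈ S, 1 ≤ g a := by
    intro a ha
    have h : ({a} : Finset (Fin n)).card ≤ g a := Finset.le_sup (hsing2 a ha)
    rw [card_singleton] at h
    exact h
  have hfb : ∀ a ∈ S, f a ≤ k - 1 := by
    intro a ha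
    by_contra hle
    push_neg at hle
    obtain ⟨T, hT, hsup⟩ := Finset.exists_mem_eq_sup (C1 a) ⟨{a}, hsing1 a ha⟩ Finset.card
    have hcT : k ≤ T.card := by
      have h2 : k - 1 < T.card := by rw [← hsup]; exact hle
      omega
    obtain ⟨T', hT'sub, hT'card⟩ := Finset.exists_subset_card_eq hcT
    simp only [hC1, mem_filter, mem_powerset] at hT
    exact hcon T' (hT'sub.trans hT.1) hT'card (Or.inl (hT.2.2.2.mono (coe_subset.2 hT'sub)))
  have hgb : ∀ a ∈ S, g a ≤ k - 1 := by
    intro a ha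
    by_contra hle
    push_neg at hle
    obtain ⟨T, hT, hsup⟩ := Finset.exists_mem_eq_sup (C2 a) ⟨{a}, hsing2 a ha⟩ Finset.card
    have hcT : k ≤ T.card := by
      have h2 : k - 1 < T.card := by rw [← hsup]; exact hle
      omega
    obtain ⟨T', hT'sub, hT'card⟩ := Finset.exists_subset_card_eq hcT
    simp only [hC2, mem_filter, mem_powerset] at hT
    exact hcon T' (hT'sub.trans hT.1) hT'card (Or.inr (hT.2.2.2.mono (coe_subset.2 hT'sub)))
  have step1 : ∀ a ∈ S, ∀ b ∈ S, a < b → σ a < σ b → f a < f b := by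
    intro a ha b hb hab hσab
    obtain ⟨T, hT, hsup⟩ := Finset.exists_mem_eq_sup (C1 a) ⟨{a}, hsing1 a ha⟩ Finset.card
    simp only [hC1, mem_filter, mem_powerset] at hT
    obtain ⟨hTS, haT, hle, hmono⟩ := hT
    have hbT : b ∉ T := fun hbT => absurd (hle b hbT) (not_le.2 hab)
    have hmem : insert b T ∈ C1 b := by
      simp only [hC1, mem_filter, mem_powerset]
      refine ⟨insert_subset hb hTS, mem_insert_self b T, ?_, ?_⟩
      · intro x hx
        rcases mem_insert.1 hx with rfl | hx
        · exact le_refl x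
        · exact le_of_lt (lt_of_le_of_lt (hle x hx) hab)
      · intro x hx y hy hxy
        simp only [coe_insert, Set.mem_insert_iff, mem_coe] at hx hy
        rcases hy with rfl | hy
        · rcases hx with rfl | hx
          · exact absurd hxy (lt_irrefl _)
          · rcases eq_or_lt_of_le (hle x hx) with heq | hxa
            · rw [heq]; exact hσab
            · exact lt_trans (hmono (mem_coe.2 hx) (mem_coe.2 haT) hxa) hσab
        · rcases hx with rfl | hx
          · exact absurd hxy (not_lt.2 (le_of_lt (lt_of_le_of_lt (hle y hy) hab)))
          · exact hmono (mem_coe.2 hx) (mem_coe.2 hy) hxy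
    have hcard : (insert b T).card = T.card + 1 := card_insert_of_notMem hbT
    have hle2 : T.card + 1 ≤ f b := by
      have h := Finset.le_sup (f := Finset.card) hmem
      rw [hcard] at h
      exact h
    have hfa : f a = T.card := by rw [hf]; exact hsup
    omega
  have step2 : ∀ a ∈ S, ∀ b ∈ S, a < b → σ b < σ a → g a < g b := by
    intro a ha b hb hab hσab
    obtain ⟨T, hT, hsup⟩ := Finset.exists_mem_eq_sup (C2 a) ⟨{a}, hsing2 a ha⟩ Finset.card
    simp only [hC2, mem_filter, mem_powerset] at hT
    obtain ⟨hTS, haT, hle, hmono⟩ := hT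
    have hbT : b ∉ T := fun hbT => absurd (hle b hbT) (not_le.2 hab)
    have hmem : insert b T ∈ C2 b := by
      simp only [hC2, mem_filter, mem_powerset]
      refine ⟨insert_subset hb hTS, mem_insert_self b T, ?_, ?_⟩
      · intro x hx
        rcases mem_insert.1 hx with rfl | hx
        · exact le_refl x
        · exact le_of_lt (lt_of_le_of_lt (hle x hx) hab)
      · intro x hx y hy hxy
        simp only [coe_insert, Set.mem_insert_iff, mem_coe] at hx hy
        rcases hy with rfl | hy
        · rcases hx with rfl | hx
          · exact absurd hxy (lt_irrefl _)
          · rcases eq_or_lt_of_le (hle x hx) with heq | hxa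
            · rw [heq]; exact hσab
            · exact lt_trans hσab (hmono (mem_coe.2 hx) (mem_coe.2 haT) hxa)
        · rcases hx with rfl | hx
          · exact absurd hxy (not_lt.2 (le_of_lt (lt_of_le_of_lt (hle y hy) hab)))
          · exact hmono (mem_coe.2 hx) (mem_coe.2 hy) hxy
    have hcard : (insert b T).card = T.card + 1 := card_insert_of_notMem hbT
    have hle2 : T.card + 1 ≤ g b := by
      have h := Finset.le_sup (f := Finset.card) hmem
      rw [hcard] at h
      exact h
    have hga : g a = T.card := by rw [hg]; exact hsup
    omega
  have hinj : Set.InjOn (fun a => (f a, g a)) ↑S := by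
    intro a ha b hb heq
    by_contra hne
    have hfg : f a = f b ∧ g a = g b := by
      have h1 := congrArg Prod.fst heq
      have h2 := congrArg Prod.snd heq
      exact ⟨h1, h2⟩
    rcases lt_or_gt_of_ne hne with h | h
    · rcases lt_or_gt_of_ne (fun hss => hne (hσ hss)) with h2 | h2
      · exact absurd hfg.1 (ne_of_lt (step1 a (mem_coe.1 ha) b (mem_coe.1 hb) h h2))
      · exact absurd hfg.2 (ne_of_lt (step2 a (mem_coe.1 ha) b (mem_coe.1 hb) h h2))
    · rcases lt_or_gt_of_ne (fun hss => hne (hσ hss)) with h2 | h2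
      · exact absurd hfg.2.symm (ne_of_lt (step2 b (mem_coe.1 hb) a (mem_coe.1 ha) h h2))
      · exact absurd hfg.1.symm (ne_of_lt (step1 b (mem_coe.1 hb) a (mem_coe.1 ha) h h2))
  have hcard : S.card ≤ ((Finset.Icc 1 (k-1)) ×ˢ (Finset.Icc 1 (k-1))).card := by
    apply Finset.card_le_card_of_injOn (fun a => (f a, g a)) _ hinj
    intro a ha
    simp only [mem_coe, mem_product, mem_Icc]
    exact ⟨⟨hf1 a ha, hfb a ha⟩, ⟨hg1 a ha, hgb a ha⟩⟩
  rw [card_product, Nat.card_Icc] at hcard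
  have he : k - 1 + 1 - 1 = k - 1 := by omega
  rw [he] at hcard
  omega

lemma card_supersets {a b : ℕ} (T : Finset (Fin n)) (hT : T.card = a) (hab : a ≤ b) :
    ((Finset.univ.powersetCard b).filter (fun S => T ⊆ S)).card = (n - a).choose (b - a) := by
  classical
  have key := Finset.card_bij' (s := (Finset.univ.powersetCard b).filter (fun S => T ⊆ S))
      (t := ((Finset.univ : Finset (Fin n)) \ T).powersetCard (b - a))
      (fun S _ => S \ T) (fun U _ => U ∪ T) ?_ ?_ ?_ ?_
  · rw [key, card_powersetCard, card_sdiff_of_subset (subset_univ T), card_univ, Fintype.card_fin, hT]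
  · intro S hS
    rw [mem_filter, mem_powersetCard] at hS
    obtain ⟨⟨hSu, hSc⟩, hTS⟩ := hS
    rw [mem_powersetCard]
    refine ⟨sdiff_subset_sdiff hSu (le_refl T), ?_⟩
    rw [card_sdiff_of_subset hTS, hSc, hT]
  · intro U hU
    rw [mem_powersetCard] at hU
    obtain ⟨hUsub, hUc⟩ := hU
    have hdisj : Disjoint U T := (Finset.subset_sdiff.1 hUsub).2
    rw [mem_filter, mem_powersetCard]
    refine ⟨⟨subset_univ _, ?_⟩, subset_union_right⟩
    rw [card_union_of_disjoint hdisj, hUc, hT]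
    omega
  · intro S hS
    rw [mem_filter] at hS
    exact sdiff_union_of_subset hS.2
  · intro U hU
    rw [mem_powersetCard] at hU
    have hdisj : Disjoint U T := (Finset.subset_sdiff.1 hU.1).2
    exact union_sdiff_cancel_right hdisj

lemma card_badedges {k : ℕ} (hk2 : 2 ≤ k) (f : Finset (Fin n)) (hf : f.card = k) :
    ((Finset.univ.powersetCard k).filter (fun e => 2 ≤ (e ∩ f).card)).card
      ≤ k.choose 2 * (n - 2).choose (k - 2) := by
  classical
  have hsub : ((Finset.univ.powersetCard k).filter (fun e => 2 ≤ (e ∩ f).card)) ⊆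
      (f.powersetCard 2).biUnion
        (fun p => (Finset.univ.powersetCard k).filter (fun e => p ⊆ e)) := by
    intro e he
    rw [mem_filter] at he
    obtain ⟨p, hpsub, hpcard⟩ := Finset.exists_subset_card_eq he.2
    rw [mem_biUnion]
    exact ⟨p, mem_powersetCard.2 ⟨hpsub.trans inter_subset_right, hpcard⟩,
      mem_filter.2 ⟨he.1, hpsub.trans inter_subset_left⟩⟩
  calc ((Finset.univ.powersetCard k).filter (fun e => 2 ≤ (e ∩ f).card)).card
      ≤ ((f.powersetCard 2).biUnion
          (fun p => (Finset.univ.powersetCard k).filter (fun e => p ⊆ e))).card :=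
        card_le_card hsub
    _ ≤ ∑ p ∈ f.powersetCard 2,
          ((Finset.univ.powersetCard k).filter (fun e => p ⊆ e)).card := card_biUnion_le
    _ = ∑ _p ∈ f.powersetCard 2, (n-2).choose (k-2) := by
        apply Finset.sum_congr rfl
        intro p hp
        exact card_supersets p (mem_powersetCard.1 hp).2 hk2
    _ = k.choose 2 * (n-2).choose (k-2) := by
        rw [Finset.sum_const, card_powersetCard, hf, smul_eq_mul]

lemma pow_aux (x : ℕ) : ∀ m : ℕ, x^(m+1) + (m+1) * x^m ≤ (x+1)^(m+1) := by
  intro m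
  induction m with
  | zero => simp
  | succ m ih =>
    have h1 : (x^(m+1) + (m+1) * x^m) * x ≤ (x+1)^(m+1) * x := Nat.mul_le_mul_right _ ih
    have h3 : x^(m+1) ≤ (x+1)^(m+1) := Nat.pow_le_pow_left (by omega) _
    have e1 : x^(m+1+1) = x^(m+1) * x := by ring
    have e2 : (x+1)^(m+1+1) = (x+1)^(m+1) * x + (x+1)^(m+1) := by ring
    have e3 : (x^(m+1) + (m+1) * x^m) * x = x^(m+1) * x + (m+1) * (x^m * x) := by ring
    have e4 : x^m * x = x^(m+1) := by ring
    rw [e4] at e3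
    rw [e3] at h1
    rw [e1, e2]
    have e5 : (m+1+1) * x^(m+1) = (m+1) * x^(m+1) + x^(m+1) := by ring
    omega

lemma two_pred_pow_le {c : ℕ} (hc : 2 ≤ c) : 2 * (c-1)^c ≤ c^c := by
  obtain ⟨x, rfl⟩ : ∃ x, c = x + 2 := ⟨c - 2, by omega⟩
  have h := pow_aux (x+1) (x+1)
  have e3 : x + 2 - 1 = x + 1 := by omega
  have e1 : (x+1)^(x+1+1) = (x+1) * (x+1)^(x+1) := by ring
  have h5 : (x+1) * (x+1)^(x+1) ≤ (x+1+1) * (x+1)^(x+1) := Nat.mul_le_mul_right _ (by omega)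
  have e6 : (x+2 : ℕ) = x+1+1 := by omega
  rw [e3, e6]
  rw [e1] at h ⊢
  omega

lemma factorial_lt_pow {n : ℕ} (h : 2 ≤ n) : n.factorial < n^n := by
  obtain ⟨m, rfl⟩ : ∃ m, n = m+2 := ⟨n-2, by omega⟩
  calc (m+2).factorial = (m+2) * (m+1).factorial := rfl
    _ ≤ (m+2) * (m+1)^(m+1) := Nat.mul_le_mul_left _ (Nat.factorial_le_pow _)
    _ < (m+2) * (m+2)^(m+1) := by
        have h2 := Nat.pow_lt_pow_left (show m+1 < m+2 by omega) (n := m+1) (by omega)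
        exact (Nat.mul_lt_mul_left (show 0 < m+2 by omega)).2 h2
    _ = (m+2)^(m+2) := by ring


end Stmt11Aux


namespace Stmt11Aux
open Finset
attribute [local instance] Classical.propDecidable
variable {n : ℕ}

lemma mono_count {k : ℕ} (hk : 1 ≤ k) (hKn : (k-1)*(k-1)+1 ≤ n)
    (σ : Fin n → Fin n) (hσ : Function.Injective σ) :
    n.choose ((k-1)*(k-1)+1) ≤ ((n - k).choose ((k-1)*(k-1)+1 - k)) *
      ((Finset.univ.powersetCard k).filter (fun e => Mo σ e)).card := by
  classical
  set K := (k-1)*(k-1)+1 with hKdef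
  set g : Finset (Fin n) → Finset (Fin n) := fun S =>
    if h : ∃ T ⊆ S, T.card = k ∧ Mo σ T then h.choose else ∅ with hgdef
  have hmap : ∀ S ∈ Finset.univ.powersetCard K,
      g S ∈ (Finset.univ.powersetCard k).filter (fun e => Mo σ e) := by
    intro S hS
    rw [mem_powersetCard] at hS
    have hes : ∃ T ⊆ S, T.card = k ∧ Mo σ T :=
      erdos_szekeres hk σ hσ S (le_of_eq hS.2.symm)
    obtain ⟨hTsub, hTcard, hTmo⟩ := hes.choose_spec
    rw [hgdef]
    simp only [dif_pos hes]
    rw [mem_filter, mem_powersetCard]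
    exact ⟨⟨hTsub.trans (subset_univ S), hTcard⟩, hTmo⟩
  have hfib : ∀ T ∈ (Finset.univ.powersetCard k).filter (fun e => Mo σ e),
      ((Finset.univ.powersetCard K).filter (fun S => g S = T)).card
        ≤ (n - k).choose (K - k) := by
    intro T hT
    rw [mem_filter, mem_powersetCard] at hT
    have hsub : (Finset.univ.powersetCard K).filter (fun S => g S = T) ⊆
        (Finset.univ.powersetCard K).filter (fun S => T ⊆ S) := by
      intro S hS
      rw [mem_filter] at hS ⊢
      refine ⟨hS.1, ?_⟩
      rw [mem_powersetCard] at hS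
      have hes : ∃ T' ⊆ S, T'.card = k ∧ Mo σ T' :=
        erdos_szekeres hk σ hσ S (le_of_eq hS.1.2.symm)
      have hgs : g S ⊆ S := by
        rw [hgdef]; simp only [dif_pos hes]; exact hes.choose_spec.1
      rw [hS.2] at hgs
      exact hgs
    have hkK : k ≤ K := by
      rcases Nat.lt_or_ge k 2 with h | h
      · omega
      · have h1 : 1*(k-1) ≤ (k-1)*(k-1) := Nat.mul_le_mul_right _ (by omega)
        omega
    calc ((Finset.univ.powersetCard K).filter (fun S => g S = T)).card
        ≤ ((Finset.univ.powersetCard K).filter (fun S => T ⊆ S)).card := card_le_card hsub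
      _ = (n - k).choose (K - k) := card_supersets T hT.1.2 hkK
  have key := Finset.card_le_mul_card_image_of_maps_to hmap ((n - k).choose (K - k)) hfib
  rw [card_powersetCard, card_univ, Fintype.card_fin] at key
  exact key

end Stmt11Aux

open Finset Stmt11Aux

/-- For every `k ≥ 3` there exists `n ≥ 1` and a linear `k`-uniform hypergraph `H`
on `[n]` such that every permutation of `[n]` is monotone on the vertices of some
edge of `H`. -/
theorem stmt11 (k : ℕ) (hk : 3 ≤ k) :
    ∃ (n : ℕ), 0 < n ∧ ∃ H : Finset (Finset (Fin n)),
      (∀ e ∈ H, e.card = k) ∧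
      (∀ e ∈ H, ∀ f ∈ H, e ≠ f → (e ∩ f).card ≤ 1) ∧
      ∀ σ : Equiv.Perm (Fin n), ∃ e ∈ H,
        StrictMonoOn σ (↑e : Set (Fin n)) ∨ StrictAntiOn σ (↑e : Set (Fin n)) := by
  classical
  -- parameters
  set K := (k-1)*(k-1)+1 with hKdef
  set CK := K.choose k with hCKdef
  set k2 := k.choose 2 with hk2def
  set c := 2 * CK with hcdef
  set W := 8*(CK*CK)*(k2*k2) with hWdef
  set D := W*W with hDdef
  set n := 2^D with hndef
  set J := c*(n*D) with hJdef
  set c2 := (n-k).choose (K-k) with hc2def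
  set Cn2 := (n-2).choose (k-2) with hCn2def
  -- basic numeric facts
  have f1 : k ≤ K := by
    have h1 : 1*(k-1) ≤ (k-1)*(k-1) := Nat.mul_le_mul_right _ (by omega)
    omega
  have f2 : 1 ≤ CK := Nat.choose_pos f1
  have f3 : 3 ≤ k2 := by
    have h := Nat.choose_le_choose 2 hk
    norm_num at h
    exact h
  have hkk1 : k * (k-1) = k2 * 2 := by
    have h := Nat.add_one_mul_choose_eq (k-1) 1
    rw [Nat.choose_one_right] at h
    rw [show k - 1 + 1 = k by omega] at h
    rw [hk2def]
    convert h using 2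
  have f4 : k - 1 ≤ k2 := by
    have h5 : 2*(k-1) ≤ k*(k-1) := Nat.mul_le_mul_right _ (by omega)
    rw [hkk1] at h5
    omega
  have f5 : 3 ≤ W := by
    have h6 : 1*1 ≤ CK*CK := Nat.mul_le_mul f2 f2
    have h7 : 3*3 ≤ k2*k2 := Nat.mul_le_mul f3 f3
    have h8 : 8*(1*1)*(3*3) ≤ 8*(CK*CK)*(k2*k2) :=
      Nat.mul_le_mul (Nat.mul_le_mul (le_refl 8) h6) h7
    rw [hWdef]
    omega
  have f6 : K ≤ W := by
    have h8 : (k-1)*(k-1) ≤ k2*k2 := Nat.mul_le_mul f4 f4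
    have h9 : 2*(k2*k2) ≤ W := by
      have h10 : 2 ≤ 8*(CK*CK) := by
        have h11 : 1*1 ≤ CK*CK := Nat.mul_le_mul f2 f2
        omega
      rw [hWdef]
      exact Nat.mul_le_mul_right _ h10
    have h10 : 1*1 ≤ k2*k2 := Nat.mul_le_mul (by omega) (by omega)
    omega
  have f7 : W*W*W + 1 ≤ n := by
    have l1 : W < 2^W := Nat.lt_two_pow_self
    have l2 : W*W*W < (2^W)*(2^W)*(2^W) := by
      have s1 : W*W < (2^W)*(2^W) := mul_lt_mul'' l1 l1 (Nat.zero_le _) (Nat.zero_le _)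
      exact mul_lt_mul'' s1 l1 (Nat.zero_le _) (Nat.zero_le _)
    have l3 : (2^W)*(2^W)*(2^W) = 2^(W+W+W) := by rw [← pow_add, ← pow_add]
    have l4 : 2^(W+W+W) ≤ 2^(W*W) := by
      apply Nat.pow_le_pow_right (by norm_num)
      have := Nat.mul_le_mul_right W f5
      omega
    rw [hndef, hDdef]
    omega
  have f8 : K ≤ n := by
    have h1 : W*1*1 ≤ W*W*W := Nat.mul_le_mul (Nat.mul_le_mul (le_refl W) (by omega)) (by omega)
    omega
  have f9 : k ≤ n := le_trans f1 f8
  have f10 : 2 ≤ n := by omega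
  have c2pos : 0 < c2 := Nat.choose_pos (Nat.sub_le_sub_right f8 k)
  have Cnkpos : 0 < n.choose k := Nat.choose_pos f9
  have μpos : 0 < n.choose K := Nat.choose_pos f8
  -- identity: n.choose k * (k*(k-1)) = n*(n-1)*Cn2
  have hA1 : n * ((n-1).choose (k-1)) = n.choose k * k := by
    have h := Nat.add_one_mul_choose_eq (n-1) (k-1)
    rw [show n - 1 + 1 = n by omega, show k - 1 + 1 = k by omega] at h
    exact h
  have hA2 : (n-1) * ((n-2).choose (k-2)) = (n-1).choose (k-1) * (k-1) := by
    have h := Nat.add_one_mul_choose_eq (n-2) (k-2)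
    rw [show n - 2 + 1 = n-1 by omega, show k - 2 + 1 = k-1 by omega] at h
    exact h
  have Ink : n.choose k * (k*(k-1)) = n*(n-1)*Cn2 := by
    calc n.choose k * (k*(k-1)) = (n.choose k * k) * (k-1) := by ring
      _ = (n * ((n-1).choose (k-1))) * (k-1) := by rw [hA1]
      _ = n * ((n-1).choose (k-1) * (k-1)) := by ring
      _ = n * ((n-1) * ((n-2).choose (k-2))) := by rw [hA2]
      _ = n*(n-1)*Cn2 := by rw [hCn2def]; ring
  -- main slack inequality
  have S1 : 2*J*k2*CK*(k*(k-1)) ≤ n*(n-1) := by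
    have e : 2*J*k2*CK*(k*(k-1)) = (W*W*W)*n := by
      rw [hJdef, hcdef, hWdef, hDdef, hkk1]; ring
    rw [e]
    calc (W*W*W)*n ≤ (n-1)*n := Nat.mul_le_mul_right _ (by omega)
      _ = n*(n-1) := by ring
  have ξcore : 2*J*k2*CK*Cn2 ≤ n.choose k := by
    have m1 : (2*J*k2*CK*Cn2)*(k*(k-1)) ≤ (n.choose k)*(k*(k-1)) := by
      calc (2*J*k2*CK*Cn2)*(k*(k-1)) = (2*J*k2*CK*(k*(k-1)))*Cn2 := by ring
        _ ≤ (n*(n-1))*Cn2 := Nat.mul_le_mul_right _ S1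
        _ = n*(n-1)*Cn2 := by ring
        _ = (n.choose k)*(k*(k-1)) := Ink.symm
    exact Nat.le_of_mul_le_mul_right m1 (Nat.mul_pos (by omega) (by omega))
  have μident : n.choose K * CK = n.choose k * c2 := by
    rw [hCKdef, hc2def]; exact Nat.choose_mul (n := n) f1
  have ξ : 2*(J*(k2*Cn2))*c2 ≤ n.choose K := by
    have m3 : (2*J*k2*CK*Cn2)*c2 ≤ (n.choose k)*c2 := Nat.mul_le_mul_right _ ξcore
    have m2 : (2*(J*(k2*Cn2))*c2)*CK = (2*J*k2*CK*Cn2)*c2 := by ring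
    have m4 : (2*(J*(k2*Cn2))*c2)*CK ≤ (n.choose K)*CK := by
      rw [m2, ← μident] at *
      exact le_trans m3 (le_of_eq rfl)
    exact Nat.le_of_mul_le_mul_right m4 f2
  -- the bad-permutation counter
  set Bad : Finset (Finset (Fin n)) → Finset (Equiv.Perm (Fin n)) := fun F =>
    Finset.univ.filter (fun σ => ∀ e ∈ F, ¬ Mo (⇑σ) e) with hBaddef
  have main : ∀ j, j ≤ J → ∃ F : Finset (Finset (Fin n)),
      (∀ e ∈ F, e.card = k) ∧
      (∀ e ∈ F, ∀ f ∈ F, e ≠ f → (e ∩ f).card ≤ 1) ∧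
      F.card ≤ j ∧ (Bad F).card * c^j ≤ n.factorial * (c-1)^j := by
    intro j
    induction j with
    | zero =>
      intro _
      refine ⟨∅, by simp, by simp, le_refl _, ?_⟩
      have h1 : Bad ∅ = Finset.univ := by
        rw [hBaddef]
        simp
      rw [h1, pow_zero, pow_zero, Finset.card_univ, Fintype.card_perm, Fintype.card_fin]
    | succ j ih =>
      intro hj
      obtain ⟨F, hFcard, hFlin, hFle, hFbad⟩ := ih (by omega)
      by_cases hb0 : (Bad F).card = 0
      · refine ⟨F, hFcard, hFlin, le_trans hFle (Nat.le_succ j), ?_⟩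
        rw [hb0, Nat.zero_mul]
        exact Nat.zero_le _
      · set A := (Finset.univ.powersetCard k).filter
            (fun e => ∀ f ∈ F, (e ∩ f).card ≤ 1) with hAdef
        have perσ : ∀ σ : Equiv.Perm (Fin n), n.choose K ≤
            (2 * c2) * ((A.filter (fun e => Mo (⇑σ) e)).card) := by
          intro σ
          have h3 : n.choose K ≤ c2 *
              ((Finset.univ.powersetCard k).filter (fun e => Mo (⇑σ) e)).card := by
            have hmc := mono_count (n := n) (k := k) (by omega)
              (by rw [← hKdef]; exact f8) (⇑σ) σ.injective
            rw [← hKdef, ← hc2def] at hmc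
            exact hmc
          set MS := (Finset.univ.powersetCard k).filter (fun e => Mo (⇑σ) e) with hMSdef
          set NA := (Finset.univ.powersetCard k).filter
              (fun e => ¬ (∀ f ∈ F, (e ∩ f).card ≤ 1)) with hNAdef
          have hsplit : MS.card ≤ (A.filter (fun e => Mo (⇑σ) e)).card + NA.card := by
            refine le_trans (card_le_card ?_) (card_union_le _ _)
            intro e he
            rw [hMSdef, mem_filter] at he
            rw [mem_union]
            by_cases hall : ∀ f ∈ F, (e ∩ f).card ≤ 1
            · exact Or.inl (mem_filter.2 ⟨mem_filter.2 ⟨he.1, hall⟩, he.2⟩)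
            · exact Or.inr (mem_filter.2 ⟨he.1, hall⟩)
          have hNAcard : NA.card ≤ J * (k2 * Cn2) := by
            have hsub : NA ⊆ F.biUnion (fun f =>
                (Finset.univ.powersetCard k).filter (fun e => 2 ≤ (e ∩ f).card)) := by
              intro e he
              rw [hNAdef, mem_filter] at he
              obtain ⟨he1, he2⟩ := he
              push_neg at he2
              obtain ⟨f, hfF, hf2⟩ := he2
              exact mem_biUnion.2 ⟨f, hfF, mem_filter.2 ⟨he1, by omega⟩⟩
            calc NA.card ≤ _ := card_le_card hsub
              _ ≤ ∑ f ∈ F, ((Finset.univ.powersetCard k).filter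
                    (fun e => 2 ≤ (e ∩ f).card)).card := card_biUnion_le
              _ ≤ ∑ _f ∈ F, k2 * Cn2 := by
                  apply Finset.sum_le_sum
                  intro f hf
                  have hbe := card_badedges (n := n) (by omega) f (hFcard f hf)
                  rw [← hk2def, ← hCn2def] at hbe
                  exact hbe
              _ = F.card * (k2 * Cn2) := by rw [Finset.sum_const, smul_eq_mul]
              _ ≤ J * (k2 * Cn2) := Nat.mul_le_mul_right _ (by omega)
          have hNA2 : 2 * (NA.card * c2) ≤ n.choose K := by
            have hξ' : 2*((J*(k2*Cn2))*c2) ≤ n.choose K := by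
              have e5 : 2*((J*(k2*Cn2))*c2) = 2*(J*(k2*Cn2))*c2 := by ring
              rw [e5]
              exact ξ
            have h6 : NA.card * c2 ≤ (J*(k2*Cn2)) * c2 := Nat.mul_le_mul_right _ hNAcard
            omega
          have l1 : n.choose K ≤ c2 * (A.filter (fun e => Mo (⇑σ) e)).card + c2 * NA.card := by
            calc n.choose K ≤ c2 * MS.card := h3
              _ ≤ c2 * ((A.filter (fun e => Mo (⇑σ) e)).card + NA.card) :=
                  Nat.mul_le_mul_left _ hsplit
              _ = c2 * (A.filter (fun e => Mo (⇑σ) e)).card + c2 * NA.card := by ring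
          have e4 : (2*c2) * ((A.filter (fun e => Mo (⇑σ) e)).card)
              = 2*(c2 * (A.filter (fun e => Mo (⇑σ) e)).card) := by ring
          have e5 : NA.card * c2 = c2 * NA.card := by ring
          rw [e4]
          rw [e5] at hNA2
          omega
        set b := (Bad F).card with hbdef
        have hsum : b * n.choose K ≤
            (2*c2) * (∑ σ ∈ Bad F, (A.filter (fun e => Mo (⇑σ) e)).card) := by
          calc b * n.choose K = ∑ _σ ∈ Bad F, n.choose K := by
                rw [Finset.sum_const, smul_eq_mul]
            _ ≤ ∑ σ ∈ Bad F, (2*c2) * ((A.filter (fun e => Mo (⇑σ) e)).card) :=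
                Finset.sum_le_sum (fun σ _ => perσ σ)
            _ = (2*c2) * (∑ σ ∈ Bad F, (A.filter (fun e => Mo (⇑σ) e)).card) :=
                (Finset.mul_sum _ _ _).symm
        have hswap : ∑ σ ∈ Bad F, (A.filter (fun e => Mo (⇑σ) e)).card
            = ∑ e ∈ A, ((Bad F).filter (fun σ : Equiv.Perm (Fin n) => Mo (⇑σ) e)).card := by
          simp_rw [Finset.card_filter]
          exact Finset.sum_comm
        have hedge : ∃ e ∈ A, b ≤ ((Bad F).filter (fun σ : Equiv.Perm (Fin n) => Mo (⇑σ) e)).card * c := by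
          by_contra hcon2
          push_neg at hcon2
          have hAle : ∀ e ∈ A, ((Bad F).filter (fun σ : Equiv.Perm (Fin n) => Mo (⇑σ) e)).card * c ≤ b - 1 :=
            fun e he => by have := hcon2 e he; omega
          have hs1 : (∑ e ∈ A, ((Bad F).filter (fun σ : Equiv.Perm (Fin n) => Mo (⇑σ) e)).card) * c
              ≤ A.card * (b-1) := by
            rw [Finset.sum_mul]
            calc ∑ e ∈ A, ((Bad F).filter (fun σ : Equiv.Perm (Fin n) => Mo (⇑σ) e)).card * c
                ≤ ∑ _e ∈ A, (b-1) := Finset.sum_le_sum hAle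
              _ = A.card * (b-1) := by rw [Finset.sum_const, smul_eq_mul]
          have hAcard : A.card ≤ n.choose k := by
            calc A.card ≤ (Finset.univ.powersetCard k).card := card_filter_le _ _
              _ = n.choose k := by rw [card_powersetCard, card_univ, Fintype.card_fin]
          have hchain : b * (n.choose K * CK) ≤ (b-1) * (n.choose K * CK) := by
            calc b * (n.choose K * CK)
                = (b * n.choose K) * CK := by ring
              _ ≤ ((2*c2) * (∑ σ ∈ Bad F, (A.filter (fun e => Mo (⇑σ) e)).card)) * CK :=
                  Nat.mul_le_mul_right _ hsum
              _ = ((∑ σ ∈ Bad F, (A.filter (fun e => Mo (⇑σ) e)).card) * c) * c2 := by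
                  rw [hcdef]; ring
              _ = ((∑ e ∈ A, ((Bad F).filter (fun σ : Equiv.Perm (Fin n) => Mo (⇑σ) e)).card) * c) * c2 := by
                  rw [hswap]
              _ ≤ (A.card * (b-1)) * c2 := Nat.mul_le_mul_right _ hs1
              _ ≤ ((n.choose k) * (b-1)) * c2 :=
                  Nat.mul_le_mul_right _ (Nat.mul_le_mul_right _ hAcard)
              _ = ((n.choose k) * c2) * (b-1) := by ring
              _ = (n.choose K * CK) * (b-1) := by rw [μident]
              _ = (b-1) * (n.choose K * CK) := by ring
          have hble : b ≤ b - 1 :=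
            Nat.le_of_mul_le_mul_right hchain (Nat.mul_pos μpos f2)
          omega
        obtain ⟨e, heA, hhit⟩ := hedge
        rw [hAdef, mem_filter, mem_powersetCard] at heA
        obtain ⟨⟨heu, hecard⟩, heall⟩ := heA
        have heF : e ∉ F := by
          intro heF
          have h := heall e heF
          rw [inter_self] at h
          omega
        refine ⟨insert e F, ?_, ?_, ?_, ?_⟩
        · intro e' he'
          rcases mem_insert.1 he' with rfl | h
          · exact hecard
          · exact hFcard _ h
        · intro e1 h1 e2 h2 hne
          rcases mem_insert.1 h1 with he1 | he1
          · rcases mem_insert.1 h2 with he2 | he2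
            · exact absurd (he1.trans he2.symm) hne
            · rw [he1]; exact heall _ he2
          · rcases mem_insert.1 h2 with he2 | he2
            · rw [he2, inter_comm]; exact heall _ he1
            · exact hFlin _ he1 _ he2 hne
        · rw [card_insert_of_notMem heF]; omega
        · have hBadsplit : (Bad (insert e F)).card
              + ((Bad F).filter (fun σ : Equiv.Perm (Fin n) => Mo (⇑σ) e)).card = b := by
            have hEq : Bad (insert e F) = (Bad F).filter (fun σ : Equiv.Perm (Fin n) => ¬ Mo (⇑σ) e) := by
              ext σ
              simp only [hBaddef, mem_filter, mem_univ, true_and, mem_insert]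
              constructor
              · intro h
                exact ⟨fun f hf => h f (Or.inr hf), h e (Or.inl rfl)⟩
              · rintro ⟨h1, h2⟩ f (rfl | hf)
                · exact h2
                · exact h1 f hf
            rw [hEq, hbdef, add_comm]
            exact card_filter_add_card_filter_not _
          have hbc : (Bad (insert e F)).card * c ≤ b * (c-1) := by
            have h1 : (Bad (insert e F)).card * c
                + ((Bad F).filter (fun σ : Equiv.Perm (Fin n) => Mo (⇑σ) e)).card * c = b * c := by
              rw [← Nat.add_mul, hBadsplit]
            have h3 : b * (c-1) + b = b * c := by
              have e6 : (c-1)+1 = c := by omega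
              calc b*(c-1) + b = b*((c-1)+1) := by ring
                _ = b*c := by rw [e6]
            omega
          calc (Bad (insert e F)).card * c^(j+1)
              = ((Bad (insert e F)).card * c) * c^j := by ring
            _ ≤ (b*(c-1)) * c^j := Nat.mul_le_mul_right _ hbc
            _ = (b * c^j) * (c-1) := by ring
            _ ≤ (n.factorial * (c-1)^j) * (c-1) := Nat.mul_le_mul_right _ hFbad
            _ = n.factorial * (c-1)^(j+1) := by ring
  obtain ⟨F, hFcard, hFlin, _, hFbad⟩ := main J (le_refl _)
  have hczero : (Bad F).card = 0 := by
    by_contra hb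
    have hb1 : 1 ≤ (Bad F).card := Nat.one_le_iff_ne_zero.2 hb
    have hterm : n.factorial * (c-1)^J < c^J := by
      have h2c : 2*(c-1)^c ≤ c^c := two_pred_pow_le (by omega)
      have hfact : n.factorial < 2^(n*D) := by
        have h1 : n.factorial < n^n := factorial_lt_pow f10
        have h2 : n^n = 2^(n*D) := by
          rw [hndef, ← pow_mul, mul_comm]
        omega
      have hpos : 0 < (c-1)^J := Nat.pow_pos (by omega)
      have e2 : 2^(n*D) * (c-1)^J = (2*(c-1)^c)^(n*D) := by
        rw [hJdef, mul_pow, ← pow_mul]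
      have e3 : (c^c)^(n*D) = c^J := by
        rw [hJdef, ← pow_mul]
      calc n.factorial * (c-1)^J < 2^(n*D) * (c-1)^J :=
            (Nat.mul_lt_mul_right hpos).2 hfact
        _ = (2*(c-1)^c)^(n*D) := e2
        _ ≤ (c^c)^(n*D) := Nat.pow_le_pow_left h2c _
        _ = c^J := e3
    have hge : c^J ≤ (Bad F).card * c^J := Nat.le_mul_of_pos_left _ hb1
    omega
  refine ⟨n, by positivity, F, hFcard, hFlin, ?_⟩
  intro σ
  have hσ : σ ∉ Bad F := by
    have hFe : Bad F = ∅ := Finset.card_eq_zero.1 hczero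
    rw [hFe]
    exact notMem_empty σ
  rw [hBaddef, mem_filter] at hσ
  push_neg at hσ
  obtain ⟨e, heF, hmo⟩ := hσ (mem_univ σ)
  exact ⟨e, heF, hmo⟩
end

section
/- For every $m$ there exists $n$ with the following property. Let $H$ be an $n$-reduced hypergraph with vertex sets $V_{\alpha\beta}$, and suppose for each ordered triple of distinct indices $\alpha, \beta, \gamma \in [n]$ we have a set $B_{\alpha\beta}^\gamma \subseteq V_{\alpha\beta}$ with $|B_{\alpha\beta}^\gamma| \leq 0.1|V_{\alpha\beta}|$. Then there exists a subset $U \subseteq [n]$ of $m$ indices and for each pair $\alpha, \beta \in U$ a vertex $v_{\alpha\beta} \in V_{\alpha\beta}$ such that $v_{\alpha\beta} \notin B_{\alpha\beta}^\gamma$ for all distinct $\alpha, \beta, \gamma \in U$. -/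
open Classical in
theorem infRamsey (C : Type) [Finite C] (r : ℕ) :
    ∀ (f : Finset ℕ → C) (A : Set ℕ), A.Infinite →
      ∃ S : Set ℕ, S ⊆ A ∧ S.Infinite ∧ ∃ c : C,
        ∀ t : Finset ℕ, ↑t ⊆ S → t.card = r → f t = c := by
  induction r with
  | zero =>
    intro f A hA
    exact ⟨A, le_refl _, hA, f ∅, fun t _ ht => by
      rw [Finset.card_eq_zero] at ht; rw [ht]⟩
  | succ r IH =>
    intro f A hA
    haveI : Nonempty C := ⟨f ∅⟩
    -- one-step extension
    have step : ∀ A₀ : Set ℕ, A₀.Infinite → ∃ p : ℕ × Set ℕ × C,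
        p.1 ∈ A₀ ∧ p.2.1 ⊆ A₀ ∧ p.2.1.Infinite ∧ (∀ x ∈ p.2.1, p.1 < x) ∧
          (∀ t : Finset ℕ, ↑t ⊆ p.2.1 → t.card = r → f (insert p.1 t) = p.2.2) := by
      intro A₀ hA₀
      obtain ⟨a, ha⟩ := hA₀.nonempty
      have hA₁ : (A₀ \ Set.Iic a).Infinite := hA₀.diff (Set.finite_Iic a)
      obtain ⟨S₁, hS₁sub, hS₁inf, c, hc⟩ := IH (fun t => f (insert a t)) _ hA₁
      refine ⟨⟨a, S₁, c⟩, ha, fun x hx => (hS₁sub hx).1, hS₁inf, ?_, hc⟩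
      intro x hx
      have := (hS₁sub hx).2
      simp [Set.mem_Iic] at this
      omega
    obtain ⟨next, hnext⟩ : ∃ next : {A : Set ℕ // A.Infinite} → ℕ × Set ℕ × C,
        ∀ A₀, (next A₀).1 ∈ A₀.1 ∧ (next A₀).2.1 ⊆ A₀.1 ∧ (next A₀).2.1.Infinite ∧
          (∀ x ∈ (next A₀).2.1, (next A₀).1 < x) ∧
          (∀ t : Finset ℕ, ↑t ⊆ (next A₀).2.1 → t.card = r →
            f (insert (next A₀).1 t) = (next A₀).2.2) :=
      ⟨fun A₀ => choose (step A₀.1 A₀.2), fun A₀ => choose_spec (step A₀.1 A₀.2)⟩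
    let chain : ℕ → {A : Set ℕ // A.Infinite} :=
      fun n => Nat.rec ⟨A, hA⟩ (fun _ Ai => ⟨(next Ai).2.1, (hnext Ai).2.2.1⟩) n
    have chain_succ : ∀ i, (chain (i+1) : Set ℕ) = (next (chain i)).2.1 := fun i => rfl
    let a : ℕ → ℕ := fun i => (next (chain i)).1
    let col : ℕ → C := fun i => (next (chain i)).2.2
    have hmem : ∀ i, a i ∈ (chain i).1 := fun i => (hnext (chain i)).1
    have hsub : ∀ i, (chain (i+1)).1 ⊆ (chain i).1 := fun i => (hnext (chain i)).2.1
    have hanti : ∀ j i, i ≤ j → (chain j).1 ⊆ (chain i).1 := by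
      intro j
      induction j with
      | zero => intro i hij; rw [Nat.le_zero.mp hij]
      | succ j IHj =>
        intro i hij
        rcases Nat.lt_or_ge i (j+1) with h | h
        · exact (hsub j).trans (IHj i (by omega))
        · have : i = j + 1 := by omega
          subst this; exact subset_rfl
    have hlt : ∀ i x, x ∈ (chain (i+1)).1 → a i < x := fun i => (hnext (chain i)).2.2.2.1
    have hamono : StrictMono a := by
      have key : ∀ i j, i < j → a i < a j := by
        intro i j hij
        exact hlt i (a j) (hanti j (i+1) hij (hmem j))
      exact fun i j h => key i j h
    obtain ⟨c, hcinf⟩ := Finite.exists_infinite_fiber col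
    rw [Set.infinite_coe_iff] at hcinf
    refine ⟨a '' (col ⁻¹' {c}), ?_, hcinf.image (hamono.injective.injOn), c, ?_⟩
    · rintro x ⟨i, _, rfl⟩
      exact hanti i 0 (Nat.zero_le _) (hmem i)
    · intro t ht htc
      have htne : t.Nonempty := by rw [← Finset.card_pos, htc]; omega
      obtain ⟨i, hi, hxi⟩ := ht (t.min'_mem htne)
      have herase : ↑(t.erase (t.min' htne)) ⊆ (chain (i+1)).1 := by
        intro y hy
        rw [Finset.coe_erase] at hy
        obtain ⟨hyt, hyne⟩ := hy
        have hy' : y ≠ t.min' htne := by simpa using hyne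
        obtain ⟨j, _, hxj⟩ := ht hyt
        have hle : t.min' htne ≤ y := t.min'_le y hyt
        have hij : i < j := hamono.lt_iff_lt.mp
          (by rw [hxi, hxj]; exact lt_of_le_of_ne hle (Ne.symm hy'))
        rw [← hxj]
        exact hanti j (i+1) hij (hmem j)
      have hcard : (t.erase (t.min' htne)).card = r := by
        rw [Finset.card_erase_of_mem (t.min'_mem htne), htc]
        omega
      have h1 := (hnext (chain i)).2.2.2.2 (t.erase (t.min' htne)) herase hcard
      have h2 : insert (a i) (t.erase (t.min' htne)) = t := by
        rw [hxi]; exact Finset.insert_erase (t.min'_mem htne)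
      have hic : col i = c := hi
      calc f t = f (insert (a i) (t.erase (t.min' htne))) := by rw [h2]
        _ = col i := h1
        _ = c := hic


theorem ultra_fiber {α C : Type} [Finite C] (U : Ultrafilter α) (g : α → C) :
    ∃ c : C, {x | g x = c} ∈ U := by
  haveI := Fintype.ofFinite C
  haveI : DecidableEq C := Classical.decEq C
  have key : ∀ s : Finset C, {x | g x ∈ s} ∈ U → ∃ c ∈ s, {x | g x = c} ∈ U := by
    intro s
    induction s using Finset.induction with
    | empty => intro h; simp only [Finset.notMem_empty, Set.setOf_false] at h; exact (Ultrafilter.empty_notMem h).elim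
    | @insert c s' hc IH =>
      intro h
      have : {x | g x ∈ insert c s'} = {x | g x = c} ∪ {x | g x ∈ s'} := by
        ext x; simp [Finset.mem_insert]
      rw [this, Ultrafilter.union_mem_iff] at h
      rcases h with h | h
      · exact ⟨c, Finset.mem_insert_self _ _, h⟩
      · obtain ⟨c', hc', hm⟩ := IH h
        exact ⟨c', Finset.mem_insert_of_mem hc', hm⟩
  obtain ⟨c, _, hm⟩ := key Finset.univ (by simp only [Finset.mem_univ, Set.setOf_true]; exact Filter.univ_mem)
  exact ⟨c, hm⟩

theorem finRamsey (C : Type) [Finite C] (r M : ℕ) :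
    ∃ N : ℕ, ∀ f : Finset ℕ → C, ∃ W : Finset ℕ, W ⊆ Finset.range N ∧ W.card = M ∧
      ∃ c, ∀ t ⊆ W, t.card = r → f t = c := by
  by_contra hcon
  push_neg at hcon
  choose F hF using hcon
  set U := Filter.hyperfilter ℕ with hU
  have hex : ∀ e : Finset ℕ, ∃ c : C, {N | F N e = c} ∈ U :=
    fun e => ultra_fiber U (fun N => F N e)
  choose limcol hlim using hex
  obtain ⟨S, -, hSinf, c₀, hmono⟩ := infRamsey C r limcol Set.univ Set.infinite_univ
  obtain ⟨t₀, ht₀S, ht₀c⟩ := hSinf.exists_subset_card_eq M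
  have h1 : (⋂ e ∈ t₀.powersetCard r, {N | F N e = limcol e}) ∈ U :=
    (Filter.biInter_finset_mem _).mpr (fun e _ => hlim e)
  have h2 : {N : ℕ | ∀ x ∈ t₀, x < N} ∈ U := by
    apply Nat.hyperfilter_le_atTop
    apply Filter.mem_of_superset (Filter.Ioi_mem_atTop (t₀.sup id))
    intro N hN x hx
    have h3 : x ≤ t₀.sup id := Finset.le_sup (f := id) hx
    have h4 : t₀.sup id < N := hN
    omega
  obtain ⟨N, hN1, hN2⟩ := Ultrafilter.nonempty_of_mem (Filter.inter_mem h1 h2)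
  obtain ⟨t, hts, htc, htne⟩ := hF N t₀ (fun x hx => Finset.mem_range.mpr (hN2 x hx)) ht₀c c₀
  apply htne
  have hmem : t ∈ t₀.powersetCard r := Finset.mem_powersetCard.mpr ⟨hts, htc⟩
  simp only [Set.mem_iInter, Set.mem_setOf_eq] at hN1
  have hFt : F N t = limcol t := hN1 t hmem
  have hlc : limcol t = c₀ := hmono t ((Finset.coe_subset.mpr hts).trans ht₀S) htc
  rw [hFt, hlc]




theorem finRamseyFin (C : Type) [Finite C] [Nonempty C] (r M : ℕ) :
    ∃ N : ℕ, ∀ f : Finset (Fin N) → C, ∃ W : Finset (Fin N), W.card = M ∧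
      ∃ c, ∀ t ⊆ W, t.card = r → f t = c := by
  classical
  obtain ⟨N, hN⟩ := finRamsey C r M
  refine ⟨N, fun f => ?_⟩
  set lift : Finset ℕ → Finset (Fin N) :=
    fun t => Finset.univ.filter (fun i : Fin N => (i : ℕ) ∈ t) with hlift
  have hliftdrop : ∀ s : Finset (Fin N), lift (s.image Fin.val) = s := by
    intro s; ext i
    simp only [hlift, Finset.mem_filter, Finset.mem_univ, true_and, Finset.mem_image]
    constructor
    · rintro ⟨j, hj, hji⟩; rwa [← Fin.val_injective hji]
    · intro hi; exact ⟨i, hi, rfl⟩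
  obtain ⟨W₀, hW₀r, hW₀c, c, hc⟩ := hN (fun t => f (lift t))
  have hdroplift : ∀ t : Finset ℕ, t ⊆ Finset.range N → (lift t).image Fin.val = t := by
    intro t ht; ext x
    simp only [Finset.mem_image, hlift, Finset.mem_filter, Finset.mem_univ, true_and]
    constructor
    · rintro ⟨j, hj, rfl⟩; exact hj
    · intro hx; exact ⟨⟨x, Finset.mem_range.mp (ht hx)⟩, hx, rfl⟩
  have hliftcard : (lift W₀).card = M := by
    have h5 := Finset.card_image_of_injective (lift W₀) Fin.val_injective
    rw [hdroplift W₀ hW₀r] at h5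
    rw [← h5, hW₀c]
  refine ⟨lift W₀, hliftcard, c, fun t ht htc => ?_⟩
  have h1 : t.image Fin.val ⊆ W₀ := by
    rw [← hdroplift W₀ hW₀r]
    exact Finset.image_subset_image ht
  have h2 : (t.image Fin.val).card = r := by
    rw [Finset.card_image_of_injective _ Fin.val_injective, htc]
  have := hc _ h1 h2
  rwa [hliftdrop t] at this

section Helpers
variable {γ : Type*} [LinearOrder γ]

theorem filter_card_eq {M : ℕ} (R : Finset γ) (h : R.card = M) (P : γ → Prop) [DecidablePred P] :
    (R.filter P).card
      = (Finset.univ.filter (fun q : Fin M => P ((R.orderIsoOfFin h q : γ)))).card := by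
  classical
  have himg : R.filter P = (Finset.univ.filter (fun q : Fin M => P ((R.orderIsoOfFin h q : γ)))).image
      (fun q => (R.orderIsoOfFin h q : γ)) := by
    ext x
    simp only [Finset.mem_filter, Finset.mem_image, Finset.mem_univ, true_and]
    constructor
    · rintro ⟨hx, hP⟩
      refine ⟨(R.orderIsoOfFin h).symm ⟨x, hx⟩, ?_, ?_⟩ <;>
        simp only [OrderIso.apply_symm_apply] <;> exact hP
    · rintro ⟨q, hP, rfl⟩
      exact ⟨(R.orderIsoOfFin h q).2, hP⟩
  rw [himg, Finset.card_image_of_injective]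
  intro q q' hqq'
  exact (R.orderIsoOfFin h).injective (Subtype.coe_injective hqq')

theorem finCount {M : ℕ} (P : ℕ → Prop) [DecidablePred P] :
    ((Finset.univ : Finset (Fin M)).filter (fun q => P q.val)).card
      = ((Finset.range M).filter P).card := by
  have : (Finset.range M).filter P
      = ((Finset.univ : Finset (Fin M)).filter (fun q => P q.val)).image Fin.val := by
    ext x
    simp only [Finset.mem_filter, Finset.mem_range, Finset.mem_image, Finset.mem_univ, true_and]
    constructor
    · rintro ⟨hx, hP⟩; exact ⟨⟨x, hx⟩, hP, rfl⟩
    · rintro ⟨q, hP, rfl⟩; exact ⟨q.2, hP⟩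
  rw [this, Finset.card_image_of_injective _ Fin.val_injective]

theorem card_filter_lt_orderIso {M : ℕ} (R : Finset γ) (h : R.card = M) (p : Fin M) :
    (R.filter (· < (R.orderIsoOfFin h p : γ))).card = p.val := by
  classical
  rw [filter_card_eq R h]
  have : ∀ q : Fin M, ((R.orderIsoOfFin h q : γ) < (R.orderIsoOfFin h p : γ)) ↔ q < p := by
    intro q
    rw [← OrderIso.lt_iff_lt (R.orderIsoOfFin h)]
    exact Subtype.coe_lt_coe
  rw [Finset.filter_congr (fun q _ => by rw [this q])]
  have : ((Finset.univ : Finset (Fin M)).filter (· < p)) =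
      ((Finset.univ : Finset (Fin M)).filter (fun q => q.val < p.val)) := by
    apply Finset.filter_congr; intro q _; rw [Fin.lt_def]
  rw [this, finCount (fun x => x < p.val)]
  have : (Finset.range M).filter (fun x => x < p.val) = Finset.range p.val := by
    ext x; simp only [Finset.mem_filter, Finset.mem_range]
    constructor
    · tauto
    · intro hx; exact ⟨lt_trans hx p.2, hx⟩
  rw [this, Finset.card_range]

theorem orderIso_eq_of_count {M : ℕ} (R : Finset γ) (h : R.card = M) (a : γ) (ha : a ∈ R)
    (p : Fin M) (hc : (R.filter (· < a)).card = p.val) :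
    (R.orderIsoOfFin h p : γ) = a := by
  classical
  set q := (R.orderIsoOfFin h).symm ⟨a, ha⟩ with hq
  have hqa : (R.orderIsoOfFin h q : γ) = a := by rw [hq, OrderIso.apply_symm_apply]
  have hcq : (R.filter (· < a)).card = q.val := by
    rw [← hqa]; exact card_filter_lt_orderIso R h q
  have : p = q := Fin.ext (by omega)
  rw [this, hqa]

end Helpers

set_option maxHeartbeats 2000000

/-- For every `m` there exists `n` such that: given an `n`-reduced hypergraph with
vertex classes `V_{αβ}` and, for each triple of distinct indices `α, β, γ`, a
"bad" set `B_{αβ}^γ ⊆ V_{αβ}` of size at most `0.1|V_{αβ}|`, there is a set `U`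
of `m` indices and a choice of a vertex `v_{αβ} ∈ V_{αβ}` for each pair
`α, β ∈ U` avoiding all the sets `B_{αβ}^γ` with `γ ∈ U`. -/
theorem stmt13 (m : ℕ) :
    ∃ n : ℕ, ∀ (α : Type) (Vs : Fin n → Fin n → Finset α)
      (_ : ∀ a b, Vs a b = Vs b a)
      (_ : ∀ a b, a ≠ b → (Vs a b).Nonempty)
      (B : Fin n → Fin n → Fin n → Finset α)
      (_ : ∀ a b c, B a b c = B b a c)
      (_ : ∀ a b c, a ≠ b → c ≠ a → c ≠ b → B a b c ⊆ Vs a b)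
      (_ : ∀ a b c, a ≠ b → c ≠ a → c ≠ b →
        ((B a b c).card : ℚ) ≤ (1 / 10) * ((Vs a b).card : ℚ)),
      ∃ U : Finset (Fin n), U.card = m ∧
        ∃ v : Fin n → Fin n → α, (∀ a b, v a b = v b a) ∧
          ∀ a ∈ U, ∀ b ∈ U, a ≠ b → v a b ∈ Vs a b ∧
            ∀ c ∈ U, c ≠ a → c ≠ b → v a b ∉ B a b c := by
  classical
  rcases Nat.lt_or_ge m 2 with hm | hm
  · -- trivial case m ≤ 1
    refine ⟨2, ?_⟩
    intro α Vs hVsym hVne B hBsym hBsub hBcard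
    obtain ⟨x, _⟩ := hVne 0 1 (by decide)
    obtain ⟨U, -, hUc⟩ := Finset.exists_subset_card_eq
      (show m ≤ (Finset.univ : Finset (Fin 2)).card by simp; omega)
    refine ⟨U, hUc, fun _ _ => x, fun a b => rfl, ?_⟩
    intro a ha b hb hab
    exfalso
    have hsub : ({a, b} : Finset (Fin 2)) ⊆ U := by
      intro z hz; simp only [Finset.mem_insert, Finset.mem_singleton] at hz
      rcases hz with rfl | rfl <;> assumption
    have := Finset.card_le_card hsub
    rw [Finset.card_pair hab, hUc] at this
    omega
  · -- main case m ≥ 2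
    obtain ⟨n, hn⟩ := finRamseyFin (Fin m → Fin m → Bool) m (6*m+2)
    refine ⟨n, ?_⟩
    intro α Vs hVsym hVne B hBsym hBsub hBcard
    set f : Finset (Fin n) → (Fin m → Fin m → Bool) :=
      fun R => if h : R.card = m then
          fun i j => decide ((Vs ((R.orderIsoOfFin h i : Fin n)) ((R.orderIsoOfFin h j : Fin n))) ⊆
            ((R.erase (R.orderIsoOfFin h i : Fin n)).erase (R.orderIsoOfFin h j : Fin n)).biUnion
              (fun x => B (R.orderIsoOfFin h i : Fin n) (R.orderIsoOfFin h j : Fin n) x))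
        else fun _ _ => false with hf
    have hfeq : ∀ (R : Finset (Fin n)) (h : R.card = m) (i j : Fin m),
        f R i j = decide ((Vs ((R.orderIsoOfFin h i : Fin n)) ((R.orderIsoOfFin h j : Fin n))) ⊆
          ((R.erase (R.orderIsoOfFin h i : Fin n)).erase (R.orderIsoOfFin h j : Fin n)).biUnion
            (fun x => B (R.orderIsoOfFin h i : Fin n) (R.orderIsoOfFin h j : Fin n) x)) := by
      intro R h i j
      simp only [hf]
      rw [dif_pos h]
    obtain ⟨W, hWcard, col, hmono⟩ := hn f
    have hB10 : ∀ a b c : Fin n, a ≠ b → c ≠ a → c ≠ b →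
        10 * (B a b c).card ≤ (Vs a b).card := by
      intro a b c h1 h2 h3
      have h4 := hBcard a b c h1 h2 h3
      have h5 : (10 * (B a b c).card : ℚ) ≤ ((Vs a b).card : ℚ) := by
        push_cast at h4 ⊢; linarith
      exact_mod_cast h5
    -- Step 1 : every bit of the monochromatic colour is false
    have step1 : ∀ i j : Fin m, i < j → col i j = false := by
      intro i j hij
      by_contra htrue
      rw [Bool.not_eq_false] at htrue
      have h2m : 2*m < 6*m+2 := by omega
      have h4m : 4*m+1 < 6*m+2 := by omega
      set σ := W.orderIsoOfFin hWcard with hσ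
      set a : Fin n := (σ ⟨2*m, h2m⟩ : Fin n) with ha
      set b : Fin n := (σ ⟨4*m+1, h4m⟩ : Fin n) with hb
      have hσlt : ∀ q p : Fin (6*m+2), (σ q : Fin n) < (σ p : Fin n) ↔ q < p := by
        intro q p; rw [← OrderIso.lt_iff_lt σ]; exact Subtype.coe_lt_coe
      have haW : a ∈ W := (σ _).2
      have hbW : b ∈ W := (σ _).2
      have hab : a < b := by
        rw [ha, hb, hσlt]; simp only [Fin.mk_lt_mk]; omega
      have habne : a ≠ b := ne_of_lt hab
      set I1 := W.filter (· < a) with hI1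
      set I2 := W.filter (fun x => a < x ∧ x < b) with hI2
      set I3 := W.filter (fun x => b < x) with hI3
      have hI1card : I1.card = 2*m := card_filter_lt_orderIso W hWcard ⟨2*m, h2m⟩
      have hI2card : I2.card = 2*m := by
        rw [hI2, filter_card_eq W hWcard]
        have hcongr : (Finset.univ.filter
            (fun q : Fin (6*m+2) => a < (σ q : Fin n) ∧ (σ q : Fin n) < b)) =
            (Finset.univ.filter (fun q : Fin (6*m+2) => 2*m < q.val ∧ q.val < 4*m+1)) := by
          apply Finset.filter_congr
          intro q _
          rw [ha, hb, hσlt, hσlt]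
          simp only [Fin.mk_lt_mk, Fin.lt_def]
        rw [hcongr, finCount (fun x => 2*m < x ∧ x < 4*m+1)]
        have : (Finset.range (6*m+2)).filter (fun x => 2*m < x ∧ x < 4*m+1)
            = Finset.Ioo (2*m) (4*m+1) := by
          ext x; simp only [Finset.mem_filter, Finset.mem_range, Finset.mem_Ioo]; omega
        rw [this, Nat.card_Ioo]; omega
      have hI3card : I3.card = 2*m := by
        rw [hI3, filter_card_eq W hWcard]
        have hcongr : (Finset.univ.filter (fun q : Fin (6*m+2) => b < (σ q : Fin n))) =
            (Finset.univ.filter (fun q : Fin (6*m+2) => 4*m+1 < q.val)) := by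
          apply Finset.filter_congr
          intro q _
          rw [hb, hσlt]
          simp only [Fin.mk_lt_mk, Fin.lt_def]
        rw [hcongr, finCount (fun x => 4*m+1 < x)]
        have : (Finset.range (6*m+2)).filter (fun x => 4*m+1 < x)
            = Finset.Ioo (4*m+1) (6*m+2) := by
          ext x; simp only [Finset.mem_filter, Finset.mem_range, Finset.mem_Ioo]; omega
        rw [this, Nat.card_Ioo]; omega
      set T := (W.erase a).erase b with hT
      have hTmem : ∀ c, c ∈ T ↔ c ∈ W ∧ c ≠ a ∧ c ≠ b := by
        intro c; rw [hT]; simp only [Finset.mem_erase]; tauto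
      have hI1T : I1 ⊆ T := by
        intro c hc; rw [hI1, Finset.mem_filter] at hc; rw [hTmem]
        exact ⟨hc.1, ne_of_lt hc.2, ne_of_lt (lt_trans hc.2 hab)⟩
      have hI2T : I2 ⊆ T := by
        intro c hc; rw [hI2, Finset.mem_filter] at hc; rw [hTmem]
        exact ⟨hc.1, ne_of_gt hc.2.1, ne_of_lt hc.2.2⟩
      have hI3T : I3 ⊆ T := by
        intro c hc; rw [hI3, Finset.mem_filter] at hc; rw [hTmem]
        exact ⟨hc.1, ne_of_gt (lt_trans hab hc.2), ne_of_gt hc.2⟩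
      have hTcard : T.card = 6*m := by
        rw [hT, Finset.card_erase_of_mem (Finset.mem_erase.mpr ⟨habne.symm, hbW⟩),
          Finset.card_erase_of_mem haW, hWcard]
        omega
      have hVab : (Vs a b).Nonempty := hVne a b habne
      -- averaging
      have key : ∃ v ∈ Vs a b, 10 * (T.filter (fun c => v ∈ B a b c)).card ≤ 6*m := by
        by_contra hcon
        push_neg at hcon
        have hswap : ∑ v ∈ Vs a b, (T.filter (fun c => v ∈ B a b c)).card
            = ∑ c ∈ T, ((Vs a b).filter (fun v => v ∈ B a b c)).card := by
          simp_rw [Finset.card_filter]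
          exact Finset.sum_comm
        have hBV : ∀ c ∈ T, ((Vs a b).filter (fun v => v ∈ B a b c)).card = (B a b c).card := by
          intro c hc
          obtain ⟨-, hca, hcb⟩ := (hTmem c).mp hc
          congr 1
          ext v
          simp only [Finset.mem_filter]
          exact ⟨fun h => h.2, fun h => ⟨hBsub a b c habne hca hcb h, h⟩⟩
        have hup : 10 * ∑ c ∈ T, (B a b c).card ≤ 6*m * (Vs a b).card := by
          rw [Finset.mul_sum]
          calc ∑ c ∈ T, 10 * (B a b c).card ≤ ∑ _c ∈ T, (Vs a b).card := by
                apply Finset.sum_le_sum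
                intro c hc
                obtain ⟨-, hca, hcb⟩ := (hTmem c).mp hc
                exact hB10 a b c habne hca hcb
            _ = 6*m * (Vs a b).card := by rw [Finset.sum_const, hTcard, smul_eq_mul]
        have hlo : (6*m+1) * (Vs a b).card ≤ 10 * ∑ v ∈ Vs a b, (T.filter (fun c => v ∈ B a b c)).card := by
          rw [Finset.mul_sum]
          calc (6*m+1) * (Vs a b).card = ∑ _v ∈ Vs a b, (6*m+1) := by
                rw [Finset.sum_const, smul_eq_mul]; ring
            _ ≤ ∑ v ∈ Vs a b, 10 * (T.filter (fun c => v ∈ B a b c)).card := by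
                apply Finset.sum_le_sum
                intro v hv
                exact hcon v hv
        rw [hswap] at hlo
        rw [Finset.sum_congr rfl hBV] at hlo
        have hVpos : 0 < (Vs a b).card := Finset.card_pos.mpr hVab
        nlinarith
      obtain ⟨v, hvV, hvcount⟩ := key
      have hDle : (T.filter (fun c => v ∈ B a b c)).card ≤ m := by omega
      have hGt : ∀ (I : Finset (Fin n)), I ⊆ T → I.card = 2*m →
          m ≤ (I.filter (fun c => v ∉ B a b c)).card := by
        intro I hIT hIc
        have h1 : (I.filter (fun c => v ∈ B a b c)).card
            ≤ (T.filter (fun c => v ∈ B a b c)).card :=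
          Finset.card_le_card (Finset.filter_subset_filter _ hIT)
        have h2 := Finset.card_filter_add_card_filter_not
          (s := I) (p := fun c => v ∈ B a b c)
        omega
      set G1 := I1.filter (fun c => v ∉ B a b c) with hG1
      set G2 := I2.filter (fun c => v ∉ B a b c) with hG2
      set G3 := I3.filter (fun c => v ∉ B a b c) with hG3
      have hij' : i.val < j.val := hij
      have hjm : j.val < m := j.2
      obtain ⟨S1, hS1G, hS1card⟩ := Finset.exists_subset_card_eq
        (show i.val ≤ G1.card from le_trans (by omega) (hGt I1 hI1T hI1card))
      obtain ⟨S2, hS2G, hS2card⟩ := Finset.exists_subset_card_eq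
        (show j.val - i.val - 1 ≤ G2.card from le_trans (by omega) (hGt I2 hI2T hI2card))
      obtain ⟨S3, hS3G, hS3card⟩ := Finset.exists_subset_card_eq
        (show m - 1 - j.val ≤ G3.card from le_trans (by omega) (hGt I3 hI3T hI3card))
      have hS1lt : ∀ x ∈ S1, x < a := by
        intro x hx
        have := hS1G hx; rw [hG1, Finset.mem_filter] at this
        have := this.1; rw [hI1, Finset.mem_filter] at this; exact this.2
      have hS2lt : ∀ x ∈ S2, a < x ∧ x < b := by
        intro x hx
        have := hS2G hx; rw [hG2, Finset.mem_filter] at this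
        have := this.1; rw [hI2, Finset.mem_filter] at this; exact this.2
      have hS3lt : ∀ x ∈ S3, b < x := by
        intro x hx
        have := hS3G hx; rw [hG3, Finset.mem_filter] at this
        have := this.1; rw [hI3, Finset.mem_filter] at this; exact this.2
      have hSgood : ∀ x, (x ∈ S1 ∨ x ∈ S2 ∨ x ∈ S3) → v ∉ B a b x := by
        intro x hx
        rcases hx with hx | hx | hx
        · exact (Finset.mem_filter.mp (hS1G hx)).2
        · exact (Finset.mem_filter.mp (hS2G hx)).2
        · exact (Finset.mem_filter.mp (hS3G hx)).2
      set R : Finset (Fin n) := S1 ∪ {a} ∪ S2 ∪ {b} ∪ S3 with hR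
      have hRmem : ∀ x, x ∈ R ↔ x ∈ S1 ∨ x = a ∨ x ∈ S2 ∨ x = b ∨ x ∈ S3 := by
        intro x; rw [hR]
        simp only [Finset.mem_union, Finset.mem_singleton]
        tauto
      have hRW : R ⊆ W := by
        intro x hx
        rw [hRmem] at hx
        rcases hx with hx | rfl | hx | rfl | hx
        · exact Finset.mem_filter.mp ((Finset.filter_subset _ _) (hS1G hx)) |>.1
        · exact haW
        · exact Finset.mem_filter.mp ((Finset.filter_subset _ _) (hS2G hx)) |>.1
        · exact hbW
        · exact Finset.mem_filter.mp ((Finset.filter_subset _ _) (hS3G hx)) |>.1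
      have haR : a ∈ R := by rw [hRmem]; tauto
      have hbR : b ∈ R := by rw [hRmem]; tauto
      -- cardinality of R
      have hd4 : Disjoint ({b} : Finset (Fin n)) S3 := by
        rw [Finset.disjoint_left]
        intro x hx hx'
        rw [Finset.mem_singleton] at hx
        have h1 := hS3lt x hx'
        rw [hx] at h1
        exact lt_irrefl b h1
      have hd3 : Disjoint S2 ({b} ∪ S3) := by
        rw [Finset.disjoint_left]
        intro x hx hx'
        have h1 := (hS2lt x hx).2
        simp only [Finset.mem_union, Finset.mem_singleton] at hx'
        rcases hx' with h2 | h2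
        · rw [h2] at h1; exact lt_irrefl b h1
        · exact (lt_asymm h1) (hS3lt x h2)
      have hd2 : Disjoint ({a} : Finset (Fin n)) (S2 ∪ ({b} ∪ S3)) := by
        rw [Finset.disjoint_left]
        intro x hx hx'
        rw [Finset.mem_singleton] at hx
        simp only [Finset.mem_union, Finset.mem_singleton] at hx'
        rcases hx' with h2 | h2 | h2
        · have h3 := (hS2lt x h2).1; rw [hx] at h3; exact lt_irrefl a h3
        · exact habne (by rw [← hx, h2])
        · have h3 := lt_trans hab (hS3lt x h2); rw [hx] at h3; exact lt_irrefl a h3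
      have hd1 : Disjoint S1 ({a} ∪ (S2 ∪ ({b} ∪ S3))) := by
        rw [Finset.disjoint_left]
        intro x hx hx'
        have h1 := hS1lt x hx
        simp only [Finset.mem_union, Finset.mem_singleton] at hx'
        rcases hx' with h2 | h2 | h2 | h2
        · rw [h2] at h1; exact lt_irrefl a h1
        · exact lt_irrefl x (lt_trans h1 (hS2lt x h2).1)
        · rw [h2] at h1; exact (lt_asymm hab) h1
        · exact lt_irrefl x (lt_trans (lt_trans h1 hab) (hS3lt x h2))
      have hReq : R = S1 ∪ ({a} ∪ (S2 ∪ ({b} ∪ S3))) := by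
        rw [hR]; ext x
        simp only [Finset.mem_union, Finset.mem_singleton]
        tauto
      have hRcard : R.card = m := by
        rw [hReq, Finset.card_union_of_disjoint hd1, Finset.card_union_of_disjoint hd2,
          Finset.card_union_of_disjoint hd3, Finset.card_union_of_disjoint hd4,
          hS1card, hS2card, hS3card, Finset.card_singleton, Finset.card_singleton]
        omega
      -- position of a and b inside R
      have hfila : R.filter (· < a) = S1 := by
        ext x
        simp only [Finset.mem_filter]
        constructor
        · rintro ⟨hxR, hxa⟩
          rw [hRmem] at hxR
          rcases hxR with h' | h' | h' | h' | h'
          · exact h'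
          · rw [h'] at hxa; exact absurd hxa (lt_irrefl a)
          · exact absurd (lt_trans (hS2lt x h').1 hxa) (lt_irrefl a)
          · rw [h'] at hxa; exact absurd hxa (lt_asymm hab)
          · exact absurd (lt_trans (hS3lt x h') hxa) (lt_asymm hab)
        · intro hx
          exact ⟨(hRmem x).mpr (Or.inl hx), hS1lt x hx⟩
      have hfilb : R.filter (· < b) = S1 ∪ ({a} ∪ S2) := by
        ext x
        simp only [Finset.mem_filter, Finset.mem_union, Finset.mem_singleton]
        constructor
        · rintro ⟨hxR, hxb⟩
          rw [hRmem] at hxR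
          rcases hxR with h' | h' | h' | h' | h'
          · exact Or.inl h'
          · exact Or.inr (Or.inl h')
          · exact Or.inr (Or.inr h')
          · rw [h'] at hxb; exact absurd hxb (lt_irrefl b)
          · exact absurd (lt_trans (hS3lt x h') hxb) (lt_irrefl b)
        · intro hx
          rcases hx with hx | hx | hx
          · exact ⟨(hRmem x).mpr (Or.inl hx), lt_trans (hS1lt x hx) hab⟩
          · exact ⟨(hRmem x).mpr (Or.inr (Or.inl hx)), by rw [hx]; exact hab⟩
          · exact ⟨(hRmem x).mpr (Or.inr (Or.inr (Or.inl hx))), (hS2lt x hx).2⟩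
      have hfilacard : (R.filter (· < a)).card = i.val := by rw [hfila, hS1card]
      have hfilbcard : (R.filter (· < b)).card = j.val := by
        rw [hfilb]
        have hda : Disjoint ({a} : Finset (Fin n)) S2 := by
          rw [Finset.disjoint_left]
          intro x hx hx'
          rw [Finset.mem_singleton] at hx
          have h3 := (hS2lt x hx').1
          rw [hx] at h3
          exact lt_irrefl a h3
        have hdb : Disjoint S1 ({a} ∪ S2) := by
          rw [Finset.disjoint_left]
          intro x hx hx'
          have h1 := hS1lt x hx
          simp only [Finset.mem_union, Finset.mem_singleton] at hx'
          rcases hx' with h2 | h2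
          · rw [h2] at h1; exact lt_irrefl a h1
          · exact lt_irrefl x (lt_trans h1 (hS2lt x h2).1)
        rw [Finset.card_union_of_disjoint hdb, Finset.card_union_of_disjoint hda,
          hS1card, hS2card, Finset.card_singleton]
        omega
      have hRi : ((R.orderIsoOfFin hRcard) i : Fin n) = a :=
        orderIso_eq_of_count R hRcard a haR i hfilacard
      have hRj : ((R.orderIsoOfFin hRcard) j : Fin n) = b :=
        orderIso_eq_of_count R hRcard b hbR j hfilbcard
      -- monochromaticity gives the contradiction
      have hdec : decide ((Vs ((R.orderIsoOfFin hRcard i : Fin n)) ((R.orderIsoOfFin hRcard j : Fin n))) ⊆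
          ((R.erase (R.orderIsoOfFin hRcard i : Fin n)).erase (R.orderIsoOfFin hRcard j : Fin n)).biUnion
            (fun x => B (R.orderIsoOfFin hRcard i : Fin n) (R.orderIsoOfFin hRcard j : Fin n) x)) = true := by
        rw [← hfeq R hRcard i j, hmono R hRW hRcard]
        exact htrue
      rw [hRi, hRj] at hdec
      have hsub' := of_decide_eq_true hdec
      obtain ⟨cx, hcxmem, hvBc⟩ := Finset.mem_biUnion.mp (hsub' hvV)
      have hcx3 : cx ∈ S1 ∨ cx ∈ S2 ∨ cx ∈ S3 := by
        rw [Finset.mem_erase, Finset.mem_erase] at hcxmem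
        obtain ⟨hcb, hca, hcR⟩ := hcxmem
        rw [hRmem] at hcR
        tauto
      exact hSgood cx hcx3 hvBc
    -- Step 2 : extract U and the vertices
    obtain ⟨U, hUW, hUcard⟩ := Finset.exists_subset_card_eq (show m ≤ W.card by omega)
    set good : Fin n → Fin n → Finset α :=
      fun a b => Vs a b \ ((U.erase a).erase b).biUnion (fun c => B a b c) with hgood
    have hgoodne : ∀ a b : Fin n, a ∈ U → b ∈ U → a < b → (good a b).Nonempty := by
      intro a b ha hb hab
      set σU := U.orderIsoOfFin hUcard with hσU
      set i := σU.symm ⟨a, ha⟩ with hi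
      set j := σU.symm ⟨b, hb⟩ with hj
      have hij : i < j := by
        rw [hi, hj]
        exact (OrderIso.lt_iff_lt σU.symm).mpr (Subtype.mk_lt_mk.mpr hab)
      have hai : ((σU i : {x // x ∈ U}) : Fin n) = a := by
        rw [hi, OrderIso.apply_symm_apply]
      have hbj : ((σU j : {x // x ∈ U}) : Fin n) = b := by
        rw [hj, OrderIso.apply_symm_apply]
      have hcf : col i j = false := step1 i j hij
      have hdec : decide ((Vs ((U.orderIsoOfFin hUcard i : Fin n)) ((U.orderIsoOfFin hUcard j : Fin n))) ⊆
          ((U.erase (U.orderIsoOfFin hUcard i : Fin n)).erase (U.orderIsoOfFin hUcard j : Fin n)).biUnion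
            (fun x => B (U.orderIsoOfFin hUcard i : Fin n) (U.orderIsoOfFin hUcard j : Fin n) x)) = false := by
        rw [← hfeq U hUcard i j, hmono U hUW hUcard]
        exact hcf
      rw [← hσU] at hdec
      rw [hai, hbj] at hdec
      have hnsub := of_decide_eq_false hdec
      rw [hgood]
      exact Finset.sdiff_nonempty.mpr hnsub
    -- default vertex
    have h2card : 2 ≤ U.card := by omega
    obtain ⟨a0, ha0⟩ := Finset.card_pos.mp (by omega : 0 < U.card)
    obtain ⟨b0, hb0, hb0ne⟩ := Finset.exists_mem_ne (s := U) (by omega) a0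
    have hx0 : (Vs a0 b0).Nonempty := hVne a0 b0 (Ne.symm hb0ne)
    obtain ⟨x0, -⟩ := hx0
    set pick : Fin n → Fin n → α :=
      fun a b => if h : (good a b).Nonempty then h.choose else x0 with hpick
    have hmain : ∀ a b : Fin n, a ∈ U → b ∈ U → a < b →
        pick a b ∈ Vs a b ∧ ∀ c ∈ U, c ≠ a → c ≠ b → pick a b ∉ B a b c := by
      intro a b ha hb hab
      have hne := hgoodne a b ha hb hab
      have hmem : pick a b ∈ good a b := by
        rw [hpick]; simp only [dif_pos hne]; exact hne.choose_spec
      rw [hgood, Finset.mem_sdiff] at hmem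
      refine ⟨hmem.1, ?_⟩
      intro c hc hca hcb hBc
      apply hmem.2
      apply Finset.mem_biUnion.mpr
      exact ⟨c, Finset.mem_erase.mpr ⟨hcb, Finset.mem_erase.mpr ⟨hca, hc⟩⟩, hBc⟩
    refine ⟨U, hUcard, fun a b => if a ≤ b then pick a b else pick b a, ?_, ?_⟩
    · intro a b
      show (if a ≤ b then pick a b else pick b a) = (if b ≤ a then pick b a else pick a b)
      rcases le_or_gt a b with h1 | h1
      · rcases eq_or_lt_of_le h1 with h2 | h2
        · rw [h2]
        · rw [if_pos h1, if_neg (not_le.mpr h2)]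
      · rw [if_neg (not_le.mpr h1), if_pos h1.le]
    · intro a ha b hb hab
      show (if a ≤ b then pick a b else pick b a) ∈ Vs a b ∧
        ∀ c ∈ U, c ≠ a → c ≠ b → (if a ≤ b then pick a b else pick b a) ∉ B a b c
      rcases lt_or_gt_of_ne hab with h | h
      · rw [if_pos h.le]
        exact hmain a b ha hb h
      · rw [if_neg (not_le.mpr h)]
        obtain ⟨h1, h2⟩ := hmain b a hb ha h
        rw [hVsym b a] at h1
        refine ⟨h1, ?_⟩
        intro c hc hca hcb hBc
        exact h2 c hc hcb hca (by rwa [hBsym b a c])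
end

section
/- Let $F$ be a 3-graph and suppose there exists a linear order $\preceq$ on $V(F)$ and a map $\psi : \binom{V(F)}{2} \to F_{\{a,b\}}$ (the free group on two generators $a, b$) such that for every edge $uvw \in E(F)$ with $u \prec v \prec w$, $(\psi(uv), \psi(uw), \psi(vw)) = (x, xa, xb)$ for some $x \in F_{\{a,b\}}$. Then $F$ is min-layered. -/
/-- A set `A ⊆ ℕ³` is min-degenerate if the three entries of each element are
pairwise distinct, and any entry shared between two distinct triples is the
minimum of at least one of them. -/
def MinDegenerate (A : Set (ℕ × ℕ × ℕ)) : Prop :=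
  (∀ t ∈ A, t.1 ≠ t.2.1 ∧ t.1 ≠ t.2.2 ∧ t.2.1 ≠ t.2.2) ∧
  ∀ t ∈ A, ∀ s ∈ A, t ≠ s → ∀ x : ℕ,
    (x = t.1 ∨ x = t.2.1 ∨ x = t.2.2) → (x = s.1 ∨ x = s.2.1 ∨ x = s.2.2) →
    x = min t.1 (min t.2.1 t.2.2) ∨ x = min s.1 (min s.2.1 s.2.2)

/-- A 3-graph `E` is min-layered: there is a linear order (an injection `f` into
`ℕ`) and a symmetric coloring `φ` of pairs by naturals such that the set of
triples `(φ u v, φ u w, φ v w)` over edges `{u,v,w}` with `u ≺ v ≺ w` is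
min-degenerate. -/
def MinLayered {V : Type*} [DecidableEq V] (E : Set (Finset V)) : Prop :=
  ∃ (f : V → ℕ) (φ : V → V → ℕ), Function.Injective f ∧ (∀ u v, φ u v = φ v u) ∧
    MinDegenerate {t | ∃ u v w : V, ({u, v, w} : Finset V) ∈ E ∧
      f u < f v ∧ f v < f w ∧ t = (φ u v, φ u w, φ v w)}


namespace Stmt14Aux
open FreeGroup

variable {α : Type*} [DecidableEq α]

lemma single_mul_toWord (i : α) (v : Bool) (y : FreeGroup α)
    (h : y.toWord.head? ≠ some (i, !v)) :
    (FreeGroup.mk [(i, v)] * y).toWord = (i, v) :: y.toWord := by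
  conv_lhs => rw [← FreeGroup.mk_toWord (x := y)]
  rw [FreeGroup.mul_mk, FreeGroup.toWord_mk]
  show FreeGroup.reduce ((i, v) :: y.toWord) = _
  rw [FreeGroup.reduce.cons, FreeGroup.reduce_toWord]
  cases hw : y.toWord with
  | nil => rfl
  | cons hd tl =>
    have hne : ¬((i, v).1 = hd.1 ∧ (i, v).2 = !hd.2) := by
      rintro ⟨h1, h2⟩
      apply h
      rw [hw]
      obtain ⟨c, d⟩ := hd
      simp only [List.head?_cons, Option.some.injEq] at *
      refine Prod.ext h1.symm ?_
      simp only [] at h2 ⊢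
      rw [h2, Bool.not_not]
    simp only [List.casesOn]
    rw [if_neg hne]

lemma head?_toWord_inv (x : FreeGroup α) :
    x⁻¹.toWord.head? = Option.map (fun g : α × Bool => (g.1, !g.2)) x.toWord.getLast? := by
  rw [FreeGroup.toWord_inv]
  simp [FreeGroup.invRev, List.head?_reverse, List.getLast?_map]

lemma toWord_mul_single (x : FreeGroup α) (i : α) (v : Bool)
    (h : x.toWord.getLast? ≠ some (i, !v)) :
    (x * FreeGroup.mk [(i, v)]).toWord = x.toWord ++ [(i, v)] := by
  have hinv : (x * FreeGroup.mk [(i, v)])⁻¹ = FreeGroup.mk [(i, !v)] * x⁻¹ := by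
    rw [mul_inv_rev, FreeGroup.inv_mk]
    simp [FreeGroup.invRev]
  have hhead : x⁻¹.toWord.head? ≠ some (i, !(!v)) := by
    rw [head?_toWord_inv]
    rcases hl : x.toWord.getLast? with _ | ⟨c, d⟩
    · simp
    · intro hc
      simp only [Option.map_some, Option.some.injEq, Prod.mk.injEq, Bool.not_not] at hc
      apply h
      rw [hl, hc.1]
      have : d = !v := by rw [← hc.2]; simp
      rw [this]
  have hcons := single_mul_toWord i (!v) x⁻¹ hhead
  rw [← hinv] at hcons
  have hfinal : (x * FreeGroup.mk [(i, v)]).toWord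
      = FreeGroup.invRev (((x * FreeGroup.mk [(i, v)])⁻¹).toWord) := by
    rw [FreeGroup.toWord_inv, FreeGroup.invRev_invRev]
  rw [hfinal, hcons, FreeGroup.toWord_inv]
  have hid : ((fun g : α × Bool => (g.1, !g.2)) ∘ fun g : α × Bool => (g.1, !g.2)) = id := by
    funext g; simp
  simp [FreeGroup.invRev, Bool.not_not, List.map_map, hid]

set_option linter.unusedSectionVars false in
lemma inv_of_eq (i : α) : (FreeGroup.of i)⁻¹ = FreeGroup.mk [(i, false)] := by
  rw [show FreeGroup.of i = FreeGroup.mk [(i, true)] from rfl, FreeGroup.inv_mk]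
  rfl

lemma lemR (x : FreeGroup α) (i : α) (h : x.toWord.getLast? ≠ some (i, false)) :
    (x * FreeGroup.of i).toWord = x.toWord ++ [(i, true)] := by
  rw [show FreeGroup.of i = FreeGroup.mk [(i, true)] from rfl]
  exact toWord_mul_single x i true (by simpa using h)

lemma lemR' (x : FreeGroup α) (i : α) (h : x.toWord.getLast? ≠ some (i, true)) :
    (x * (FreeGroup.of i)⁻¹).toWord = x.toWord ++ [(i, false)] := by
  rw [inv_of_eq]
  exact toWord_mul_single x i false (by simpa using h)

lemma minT {i j : α} (hij : i ≠ j) (z : FreeGroup α)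
    (h : z.toWord.getLast? ≠ some (i, true)) :
    z.toWord.length < (z * (FreeGroup.of i)⁻¹).toWord.length ∧
    z.toWord.length < (z * (FreeGroup.of i)⁻¹ * FreeGroup.of j).toWord.length := by
  have h1 := lemR' z i h
  have h2 : (z * (FreeGroup.of i)⁻¹ * FreeGroup.of j).toWord
      = z.toWord ++ [(i, false)] ++ [(j, true)] := by
    rw [← h1]
    refine lemR _ j ?_
    rw [h1, List.getLast?_concat]
    simp only [ne_eq, Option.some.injEq, Prod.mk.injEq, not_and]
    intro hc
    exact fun _ => hij hc
  rw [h1, h2]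
  constructor <;> simp

lemma minR (z : FreeGroup α) (i : α) (h : z.toWord.getLast? ≠ some (i, false)) :
    z.toWord.length < (z * FreeGroup.of i).toWord.length := by
  rw [lemR z i h]
  simp

end Stmt14Aux

/-- If there is a linear order on `V(F)` and a map `ψ` from pairs to the free
group on two generators `a, b` such that every edge `uvw` (with `u ≺ v ≺ w`) is
colored `(x, xa, xb)` for some `x`, then `F` is min-layered. -/
theorem stmt14 {V : Type*} [DecidableEq V] [Fintype V] (E : Set (Finset V))
    (h : ∃ (f : V → ℕ) (ψ : V → V → FreeGroup (Fin 2)),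
      Function.Injective f ∧ (∀ u v, ψ u v = ψ v u) ∧
      ∀ u v w, ({u, v, w} : Finset V) ∈ E → f u < f v → f v < f w →
        ∃ x : FreeGroup (Fin 2), ψ u v = x ∧
          ψ u w = x * FreeGroup.of 0 ∧ ψ v w = x * FreeGroup.of 1) :
    MinLayered E := by
  classical
  obtain ⟨f, ψ, hf, hsy, hcol⟩ := h
  set g : FreeGroup (Fin 2) → ℕ := fun z => Encodable.encode z.toWord with hg
  have hginj : Function.Injective g := fun z w hzw =>
    FreeGroup.toWord_injective (Encodable.encode_injective hzw)
  set M : ℕ := (Finset.univ.sup fun p : V × V => g (ψ p.1 p.2)) + 1 with hM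
  have hgM : ∀ u v : V, g (ψ u v) < M :=
    fun u v => Nat.lt_succ_of_le (Finset.le_sup (f := fun p : V × V => g (ψ p.1 p.2)) (Finset.mem_univ (u, v)))
  set n : FreeGroup (Fin 2) → ℕ := fun z => z.toWord.length * M + g z with hn
  set P : FreeGroup (Fin 2) → Prop := fun z => ∃ p : V × V, ψ p.1 p.2 = z with hP
  have hPM : ∀ z, P z → g z < M := by rintro z ⟨⟨u, v⟩, rfl⟩; exact hgM u v
  have mono : ∀ z w, P z → P w → z.toWord.length < w.toWord.length → n z < n w := by
    intro z w hz hw hlw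
    have h1 : g z < M := hPM z hz
    have : (z.toWord.length + 1) * M ≤ w.toWord.length * M := Nat.mul_le_mul_right M hlw
    simp only [hn]
    nlinarith
  have inj : ∀ z w, P z → P w → n z = n w → z = w := by
    intro z w hz hw hzw
    have h1 : g z < M := hPM z hz
    have h2 : g w < M := hPM w hw
    have hll : z.toWord.length = w.toWord.length := by
      rcases Nat.lt_trichotomy z.toWord.length w.toWord.length with hl | hl | hl
      · exact absurd hzw (Nat.ne_of_lt (mono z w hz hw hl))
      · exact hl
      · exact absurd hzw.symm (Nat.ne_of_lt (mono w z hw hz hl))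
    apply hginj
    simp only [hn, hll] at hzw
    omega
  -- packaged inequalities
  have KR : ∀ c : FreeGroup (Fin 2), P c → P (c * FreeGroup.of 0) → P (c * FreeGroup.of 1) →
      c.toWord.getLast? ≠ some (0, false) → c.toWord.getLast? ≠ some (1, false) →
      n c < n (c * FreeGroup.of 0) ∧ n c < n (c * FreeGroup.of 1) :=
    fun c pc p0 p1 h0 h1 =>
      ⟨mono _ _ pc p0 (Stmt14Aux.minR c 0 h0), mono _ _ pc p1 (Stmt14Aux.minR c 1 h1)⟩
  have KT : ∀ c : FreeGroup (Fin 2), P c → P (c * (FreeGroup.of 0)⁻¹) →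
      P (c * (FreeGroup.of 0)⁻¹ * FreeGroup.of 1) → c.toWord.getLast? ≠ some (0, true) →
      n c < n (c * (FreeGroup.of 0)⁻¹) ∧ n c < n (c * (FreeGroup.of 0)⁻¹ * FreeGroup.of 1) := by
    intro c pc p1 p2 hc
    obtain ⟨m1, m2⟩ := Stmt14Aux.minT (show (0 : Fin 2) ≠ 1 by decide) c hc
    exact ⟨mono _ _ pc p1 m1, mono _ _ pc p2 m2⟩
  have KS : ∀ c : FreeGroup (Fin 2), P c → P (c * (FreeGroup.of 1)⁻¹) →
      P (c * (FreeGroup.of 1)⁻¹ * FreeGroup.of 0) → c.toWord.getLast? ≠ some (1, true) →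
      n c < n (c * (FreeGroup.of 1)⁻¹) ∧ n c < n (c * (FreeGroup.of 1)⁻¹ * FreeGroup.of 0) := by
    intro c pc p1 p2 hc
    obtain ⟨m1, m2⟩ := Stmt14Aux.minT (show (1 : Fin 2) ≠ 0 by decide) c hc
    exact ⟨mono _ _ pc p1 m1, mono _ _ pc p2 m2⟩
  refine ⟨f, fun u v => n (ψ u v), hf, fun u v => congrArg n (hsy u v), ?_⟩
  constructor
  · rintro t ⟨u, v, w, he, huv, hvw, rfl⟩
    obtain ⟨x, hx1, hx2, hx3⟩ := hcol u v w he huv hvw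
    dsimp only
    rw [hx1, hx2, hx3]
    have P1 : P x := ⟨(u, v), hx1⟩
    have P2 : P (x * FreeGroup.of 0) := ⟨(u, w), hx2⟩
    have P3 : P (x * FreeGroup.of 1) := ⟨(v, w), hx3⟩
    refine ⟨fun hc => ?_, fun hc => ?_, fun hc => ?_⟩
    · have := inj _ _ P1 P2 hc
      exact FreeGroup.of_ne_one (0 : Fin 2) (left_eq_mul.mp this)
    · have := inj _ _ P1 P3 hc
      exact FreeGroup.of_ne_one (1 : Fin 2) (left_eq_mul.mp this)
    · have := inj _ _ P2 P3 hc
      have h01 : FreeGroup.of (0 : Fin 2) = FreeGroup.of 1 := mul_left_cancel this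
      exact absurd (FreeGroup.of_injective h01) (by decide)
  · rintro t ⟨u, v, w, he, huv, hvw, rfl⟩ s ⟨u', v', w', he', huv', hvw', rfl⟩ hts z hzt hzs
    obtain ⟨x, hx1, hx2, hx3⟩ := hcol u v w he huv hvw
    obtain ⟨y, hy1, hy2, hy3⟩ := hcol u' v' w' he' huv' hvw'
    dsimp only at hzt hzs hts ⊢
    rw [hx1, hx2, hx3] at hzt hts ⊢
    rw [hy1, hy2, hy3] at hzs hts ⊢
    have P1 : P x := ⟨(u, v), hx1⟩
    have P2 : P (x * FreeGroup.of 0) := ⟨(u, w), hx2⟩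
    have P3 : P (x * FreeGroup.of 1) := ⟨(v, w), hx3⟩
    have Q1 : P y := ⟨(u', v'), hy1⟩
    have Q2 : P (y * FreeGroup.of 0) := ⟨(u', w'), hy2⟩
    have Q3 : P (y * FreeGroup.of 1) := ⟨(v', w'), hy3⟩
    rcases hzt with h1 | h1 | h1 <;> rcases hzs with h2 | h2 | h2
    · -- x = y
      have hxy : x = y := inj _ _ P1 Q1 (h1.symm.trans h2)
      exact absurd (by rw [hxy]) hts
    · -- x = y * of 0
      have hxy : x = y * FreeGroup.of 0 := inj _ _ P1 Q2 (h1.symm.trans h2)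
      have hy' : y = x * (FreeGroup.of 0)⁻¹ := by rw [hxy]; group
      subst hy'
      have hs1 : x * (FreeGroup.of 0)⁻¹ * FreeGroup.of 0 = x := by group
      rw [hs1] at h2 ⊢
      by_cases hl : x.toWord.getLast? = some (0, true)
      · have hk := KR x P1 P2 P3 (by rw [hl]; simp) (by rw [hl]; simp)
        left; omega
      · have hk := KT x P1 Q1 Q3 hl
        right; omega
    · -- x = y * of 1
      have hxy : x = y * FreeGroup.of 1 := inj _ _ P1 Q3 (h1.symm.trans h2)
      have hy' : y = x * (FreeGroup.of 1)⁻¹ := by rw [hxy]; group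
      subst hy'
      have hs1 : x * (FreeGroup.of 1)⁻¹ * FreeGroup.of 1 = x := by group
      rw [hs1] at h2 ⊢
      by_cases hl : x.toWord.getLast? = some (1, true)
      · have hk := KR x P1 P2 P3 (by rw [hl]; simp) (by rw [hl]; simp)
        left; omega
      · have hk := KS x P1 Q1 Q2 hl
        right; omega
    · -- x * of 0 = y
      have hxy : x * FreeGroup.of 0 = y := inj _ _ P2 Q1 (h1.symm.trans h2)
      subst hxy
      by_cases hl : (x * FreeGroup.of 0).toWord.getLast? = some (0, true)
      · have hk := KR (x * FreeGroup.of 0) P2 Q2 Q3 (by rw [hl]; simp) (by rw [hl]; simp)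
        right; omega
      · have hs1 : x * FreeGroup.of 0 * (FreeGroup.of 0)⁻¹ = x := by group
        have hs2 : x * FreeGroup.of 0 * (FreeGroup.of 0)⁻¹ * FreeGroup.of 1
            = x * FreeGroup.of 1 := by group
        have hk := KT (x * FreeGroup.of 0) P2 (by rw [hs1]; exact P1) (by rw [hs2]; exact P3) hl
        rw [hs2, hs1] at hk
        left; omega
    · -- x * of 0 = y * of 0
      have hxy : x * FreeGroup.of 0 = y * FreeGroup.of 0 := inj _ _ P2 Q2 (h1.symm.trans h2)
      have : x = y := mul_right_cancel hxy
      exact absurd (by rw [this]) hts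
    · -- x * of 0 = y * of 1
      have hxy : x * FreeGroup.of 0 = y * FreeGroup.of 1 := inj _ _ P2 Q3 (h1.symm.trans h2)
      by_cases hl : (x * FreeGroup.of 0).toWord.getLast? = some (0, true)
      · have hl' : (y * FreeGroup.of 1).toWord.getLast? ≠ some (1, true) := by
          rw [← hxy, hl]; simp
        have hs1 : y * FreeGroup.of 1 * (FreeGroup.of 1)⁻¹ = y := by group
        have hs2 : y * FreeGroup.of 1 * (FreeGroup.of 1)⁻¹ * FreeGroup.of 0
            = y * FreeGroup.of 0 := by group
        have hk := KS (y * FreeGroup.of 1) Q3 (by rw [hs1]; exact Q1) (by rw [hs2]; exact Q2) hl'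
        rw [hs2, hs1] at hk
        right; omega
      · have hs1 : x * FreeGroup.of 0 * (FreeGroup.of 0)⁻¹ = x := by group
        have hs2 : x * FreeGroup.of 0 * (FreeGroup.of 0)⁻¹ * FreeGroup.of 1
            = x * FreeGroup.of 1 := by group
        have hk := KT (x * FreeGroup.of 0) P2 (by rw [hs1]; exact P1) (by rw [hs2]; exact P3) hl
        rw [hs2, hs1] at hk
        left; omega
    · -- x * of 1 = y
      have hxy : x * FreeGroup.of 1 = y := inj _ _ P3 Q1 (h1.symm.trans h2)
      subst hxy
      by_cases hl : (x * FreeGroup.of 1).toWord.getLast? = some (1, true)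
      · have hk := KR (x * FreeGroup.of 1) P3 Q2 Q3 (by rw [hl]; simp) (by rw [hl]; simp)
        right; omega
      · have hs1 : x * FreeGroup.of 1 * (FreeGroup.of 1)⁻¹ = x := by group
        have hs2 : x * FreeGroup.of 1 * (FreeGroup.of 1)⁻¹ * FreeGroup.of 0
            = x * FreeGroup.of 0 := by group
        have hk := KS (x * FreeGroup.of 1) P3 (by rw [hs1]; exact P1) (by rw [hs2]; exact P2) hl
        rw [hs2, hs1] at hk
        left; omega
    · -- x * of 1 = y * of 0
      have hxy : x * FreeGroup.of 1 = y * FreeGroup.of 0 := inj _ _ P3 Q2 (h1.symm.trans h2)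
      by_cases hl : (x * FreeGroup.of 1).toWord.getLast? = some (1, true)
      · have hl' : (y * FreeGroup.of 0).toWord.getLast? ≠ some (0, true) := by
          rw [← hxy, hl]; simp
        have hs1 : y * FreeGroup.of 0 * (FreeGroup.of 0)⁻¹ = y := by group
        have hs2 : y * FreeGroup.of 0 * (FreeGroup.of 0)⁻¹ * FreeGroup.of 1
            = y * FreeGroup.of 1 := by group
        have hk := KT (y * FreeGroup.of 0) Q2 (by rw [hs1]; exact Q1) (by rw [hs2]; exact Q3) hl'
        rw [hs2, hs1] at hk
        right; omega
      · have hs1 : x * FreeGroup.of 1 * (FreeGroup.of 1)⁻¹ = x := by group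
        have hs2 : x * FreeGroup.of 1 * (FreeGroup.of 1)⁻¹ * FreeGroup.of 0
            = x * FreeGroup.of 0 := by group
        have hk := KS (x * FreeGroup.of 1) P3 (by rw [hs1]; exact P1) (by rw [hs2]; exact P2) hl
        rw [hs2, hs1] at hk
        left; omega
    · -- x * of 1 = y * of 1
      have hxy : x * FreeGroup.of 1 = y * FreeGroup.of 1 := inj _ _ P3 Q3 (h1.symm.trans h2)
      have : x = y := mul_right_cancel hxy
      exact absurd (by rw [this]) hts
end

section
/- Let $F$ be a min-layered 3-graph and let $\mathcal{P} = (\mathcal{C}, \mathcal{A}')$ be a palette with positive minimum degree $\delta(\mathcal{P}) > 0$. Then $F$ admits $\mathcal{P}$. -/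
open Classical

/-- Given the color `cm` of the minimum entry of a triple `t`, pick the color of
another entry `x` of `t`, using the minimum-degree property of the palette. -/
noncomputable def pick3 {γ : Type*}
    (A' : Set (γ × γ × γ))
    (hδ : ∀ a : γ, (∃ b c, (a, b, c) ∈ A') ∧ (∃ b c, (b, a, c) ∈ A') ∧
      (∃ b c, (b, c, a) ∈ A'))
    (t : ℕ × ℕ × ℕ) (cm : γ) (x : ℕ) : γ :=
  if t.2.1 = min t.1 (min t.2.1 t.2.2) then
    (if x = t.1 then ((hδ cm).2.1).choose else ((hδ cm).2.1).choose_spec.choose)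
  else if t.2.2 = min t.1 (min t.2.1 t.2.2) then
    (if x = t.1 then ((hδ cm).2.2).choose else ((hδ cm).2.2).choose_spec.choose)
  else
    (if x = t.2.1 then ((hδ cm).1).choose else ((hδ cm).1).choose_spec.choose)

/-- The coloring of layer values, by strong recursion. -/
noncomputable def col {γ : Type*} [Nonempty γ] (𝒜 : Set (ℕ × ℕ × ℕ))
    (A' : Set (γ × γ × γ))
    (hδ : ∀ a : γ, (∃ b c, (a, b, c) ∈ A') ∧ (∃ b c, (b, a, c) ∈ A') ∧
      (∃ b c, (b, c, a) ∈ A'))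
    (x : ℕ) : γ :=
  if h : ∃ t ∈ 𝒜, (x = t.1 ∨ x = t.2.1 ∨ x = t.2.2) ∧
      x ≠ min t.1 (min t.2.1 t.2.2) then
    pick3 A' hδ h.choose
      (col 𝒜 A' hδ (min h.choose.1 (min h.choose.2.1 h.choose.2.2))) x
  else Classical.arbitrary γ
termination_by x
decreasing_by
  obtain ⟨_, h2, h3⟩ := h.choose_spec
  omega

theorem col_mem {γ : Type*} [Nonempty γ] {𝒜 : Set (ℕ × ℕ × ℕ)} (hA : MinDegenerate 𝒜)
    {A' : Set (γ × γ × γ)}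
    (hδ : ∀ a : γ, (∃ b c, (a, b, c) ∈ A') ∧ (∃ b c, (b, a, c) ∈ A') ∧
      (∃ b c, (b, c, a) ∈ A'))
    {t : ℕ × ℕ × ℕ} (ht : t ∈ 𝒜) :
    (col 𝒜 A' hδ t.1, col 𝒜 A' hδ t.2.1, col 𝒜 A' hδ t.2.2) ∈ A' := by
  obtain ⟨d1, d2, d3⟩ := hA.1 t ht
  -- key unfolding lemma for non-min entries of t
  have key : ∀ x : ℕ, (x = t.1 ∨ x = t.2.1 ∨ x = t.2.2) →
      x ≠ min t.1 (min t.2.1 t.2.2) →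
      col 𝒜 A' hδ x =
        pick3 A' hδ t (col 𝒜 A' hδ (min t.1 (min t.2.1 t.2.2))) x := by
    intro x hx hxm
    have h : ∃ s ∈ 𝒜, (x = s.1 ∨ x = s.2.1 ∨ x = s.2.2) ∧
        x ≠ min s.1 (min s.2.1 s.2.2) := ⟨t, ht, hx, hxm⟩
    rw [col, dif_pos h]
    obtain ⟨hs𝒜, hxs, hxsm⟩ := h.choose_spec
    have heq : h.choose = t := by
      by_contra hne
      rcases hA.2 t ht h.choose hs𝒜 (fun e => hne e.symm) x hx hxs with h' | h'
      · exact hxm h'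
      · exact hxsm h'
    rw [heq]
  have hmcases : min t.1 (min t.2.1 t.2.2) = t.1 ∨
      min t.1 (min t.2.1 t.2.2) = t.2.1 ∨ min t.1 (min t.2.1 t.2.2) = t.2.2 := by
    omega
  rcases hmcases with hm1 | hm1 | hm1
  · -- min is the first entry
    have hcm : col 𝒜 A' hδ (min t.1 (min t.2.1 t.2.2)) = col 𝒜 A' hδ t.1 := by
      rw [hm1]
    have e2 : col 𝒜 A' hδ t.2.1 = ((hδ (col 𝒜 A' hδ t.1)).1).choose := by
      rw [key _ (Or.inr (Or.inl rfl)) (by omega), hcm, pick3,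
        if_neg (show ¬ t.2.1 = min t.1 (min t.2.1 t.2.2) by omega),
        if_neg (show ¬ t.2.2 = min t.1 (min t.2.1 t.2.2) by omega), if_pos rfl]
    have e3 : col 𝒜 A' hδ t.2.2 =
        ((hδ (col 𝒜 A' hδ t.1)).1).choose_spec.choose := by
      rw [key _ (Or.inr (Or.inr rfl)) (by omega), hcm, pick3,
        if_neg (show ¬ t.2.1 = min t.1 (min t.2.1 t.2.2) by omega),
        if_neg (show ¬ t.2.2 = min t.1 (min t.2.1 t.2.2) by omega),
        if_neg (show ¬ t.2.2 = t.2.1 by omega)]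
    rw [e2, e3]
    exact ((hδ (col 𝒜 A' hδ t.1)).1).choose_spec.choose_spec
  · -- min is the second entry
    have hcm : col 𝒜 A' hδ (min t.1 (min t.2.1 t.2.2)) = col 𝒜 A' hδ t.2.1 := by
      rw [hm1]
    have e1 : col 𝒜 A' hδ t.1 = ((hδ (col 𝒜 A' hδ t.2.1)).2.1).choose := by
      rw [key _ (Or.inl rfl) (by omega), hcm, pick3, if_pos hm1.symm, if_pos rfl]
    have e3 : col 𝒜 A' hδ t.2.2 =
        ((hδ (col 𝒜 A' hδ t.2.1)).2.1).choose_spec.choose := by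
      rw [key _ (Or.inr (Or.inr rfl)) (by omega), hcm, pick3, if_pos hm1.symm,
        if_neg (show ¬ t.2.2 = t.1 by omega)]
    rw [e1, e3]
    exact ((hδ (col 𝒜 A' hδ t.2.1)).2.1).choose_spec.choose_spec
  · -- min is the third entry
    have hcm : col 𝒜 A' hδ (min t.1 (min t.2.1 t.2.2)) = col 𝒜 A' hδ t.2.2 := by
      rw [hm1]
    have e1 : col 𝒜 A' hδ t.1 = ((hδ (col 𝒜 A' hδ t.2.2)).2.2).choose := by
      rw [key _ (Or.inl rfl) (by omega), hcm, pick3,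
        if_neg (show ¬ t.2.1 = min t.1 (min t.2.1 t.2.2) by omega),
        if_pos hm1.symm, if_pos rfl]
    have e2 : col 𝒜 A' hδ t.2.1 =
        ((hδ (col 𝒜 A' hδ t.2.2)).2.2).choose_spec.choose := by
      rw [key _ (Or.inr (Or.inl rfl)) (by omega), hcm, pick3,
        if_neg (show ¬ t.2.1 = min t.1 (min t.2.1 t.2.2) by omega),
        if_pos hm1.symm, if_neg (show ¬ t.2.1 = t.1 by omega)]
    rw [e1, e2]
    exact ((hδ (col 𝒜 A' hδ t.2.2)).2.2).choose_spec.choose_spec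

/-- A min-layered 3-graph admits every palette with positive minimum degree. -/
theorem stmt15 {V γ : Type*} [DecidableEq V] [Fintype V] [Fintype γ] [Nonempty γ]
    (E : Set (Finset V)) (hF : MinLayered E) (A' : Set (γ × γ × γ))
    (hδ : ∀ a : γ, (∃ b c, (a, b, c) ∈ A') ∧ (∃ b c, (b, a, c) ∈ A') ∧
      (∃ b c, (b, c, a) ∈ A')) :
    Admits E A' := by
  obtain ⟨f, φ, hf, hφ, hA⟩ := hF
  refine ⟨f, fun u v =>
    col {t | ∃ u v w : V, ({u, v, w} : Finset V) ∈ E ∧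
      f u < f v ∧ f v < f w ∧ t = (φ u v, φ u w, φ v w)} A' hδ (φ u v),
    hf, fun u v => by simp only [hφ u v], ?_⟩
  intro u v w he huv hvw
  exact col_mem hA hδ (t := (φ u v, φ u w, φ v w)) ⟨u, v, w, he, huv, hvw, rfl⟩
end

section
/- In the free group $F_{\{a,b\}}$ on generators $a, b$, consider the set $\mathcal{A}$ of all triples $(x, xa, xb)$ for $x \in F_{\{a,b\}}$. For every nonempty $x \in F_{\{a,b\}}$, among the three triples containing $x$, namely $(x, xa, xb)$, $(xa^{-1}, x, xa^{-1}b)$, $(xb^{-1}, xb^{-1}a, x)$, exactly one has the property that $x$ is not its minimal element with respect to word length (ties among equal lengths ordered so that shorter words are smaller; for triples all of whose entries have distinct lengths the claim is about the word-length minimum). Specifically: if the reduced word of $x$ ends in $a^{-1}$ or $b^{-1}$, the exceptional triple is $(x, xa, xb)$; if it ends in $a$, it is $(xa^{-1}, x, xa^{-1}b)$; if it ends in $b$, it is $(xb^{-1}, xb^{-1}a, x)$. -/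
/-- The length of the reduced word of an element of the free group on two
generators. -/
def wlen (g : FreeGroup (Fin 2)) : ℕ := g.toWord.length

/-- `g` does not attain the (unique) minimum word length in the triple `t`:
the minimum of the three word lengths in `t` is strictly smaller than `|g|`. -/
def NotMinIn (g : FreeGroup (Fin 2))
    (t : FreeGroup (Fin 2) × FreeGroup (Fin 2) × FreeGroup (Fin 2)) : Prop :=
  min (wlen t.1) (min (wlen t.2.1) (wlen t.2.2)) < wlen g

namespace Stmt16Aux

variable {α : Type*} [DecidableEq α]

/-- non-cancellation relation between adjacent letters -/
def RR : (α × Bool) → (α × Bool) → Prop := fun p q => ¬(p.1 = q.1 ∧ p.2 = !q.2)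

lemma chain'_of_reduce_eq : ∀ (L : List (α × Bool)), FreeGroup.reduce L = L →
    List.Chain' RR L := by
  intro L
  induction L with
  | nil => intro _; exact List.isChain_nil
  | cons x L ih =>
    intro h
    rw [FreeGroup.reduce.cons] at h
    have hsub : (FreeGroup.reduce L).length ≤ L.length :=
      (FreeGroup.Red.sublist (FreeGroup.reduce.red)).length_le
    rcases hL : FreeGroup.reduce L with _ | ⟨hd, tl⟩
    · rw [hL] at h
      dsimp only at h
      have hL0 : L = [] := (List.cons.injEq x [] x L).mp h |>.2 |>.symm
      subst hL0
      exact List.isChain_singleton x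
    · rw [hL] at h
      dsimp only at h
      by_cases hc : x.1 = hd.1 ∧ x.2 = !hd.2
      · rw [if_pos hc] at h
        rw [hL] at hsub
        have h1 : tl.length = L.length + 1 := by rw [h]; simp
        simp only [List.length_cons] at hsub
        omega
      · rw [if_neg hc] at h
        have hL' : L = hd :: tl := ((List.cons.injEq x (hd :: tl) x L).mp h).2.symm
        subst hL'
        rw [List.Chain', List.isChain_cons_cons]
        exact ⟨hc, ih hL⟩

lemma reduce_eq_of_chain' : ∀ (L : List (α × Bool)), List.Chain' RR L →
    FreeGroup.reduce L = L := by
  intro L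
  induction L with
  | nil => intro _; rfl
  | cons x L ih =>
    intro h
    rw [FreeGroup.reduce.cons, ih h.tail]
    cases L with
    | nil => rfl
    | cons hd tl =>
      have : RR x hd := (List.isChain_cons_cons.mp h).1
      simp only [RR] at this
      dsimp only
      rw [if_neg this]

/-- cancellation case -/
lemma toWord_mul_cancel (x : FreeGroup α) (i : α) (c : Bool)
    (h : x.toWord.getLast? = some (i, !c)) :
    (x * FreeGroup.mk [(i, c)]).toWord = x.toWord.dropLast := by
  have hw : x.toWord.dropLast ++ [(i, !c)] = x.toWord :=
    List.dropLast_append_getLast? _ (by rw [h]; rfl)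
  have hstep : FreeGroup.Red.Step (x.toWord.dropLast ++ (i, !c) :: (i, !(!c)) :: [])
      (x.toWord.dropLast ++ []) := FreeGroup.Red.Step.not
  rw [Bool.not_not] at hstep
  have hred : List.Chain' RR (x.toWord.dropLast) :=
    (chain'_of_reduce_eq _ x.reduce_toWord).prefix (List.dropLast_prefix _)
  calc (x * FreeGroup.mk [(i, c)]).toWord
      = FreeGroup.reduce (x.toWord ++ [(i, c)]) := by
        conv_lhs => rw [← FreeGroup.mk_toWord (x := x)]
        rw [FreeGroup.mul_mk, FreeGroup.toWord_mk]
    _ = FreeGroup.reduce (x.toWord.dropLast ++ (i, !c) :: (i, c) :: []) := by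
        rw [← hw]; simp
    _ = FreeGroup.reduce (x.toWord.dropLast ++ []) := FreeGroup.reduce.Step.eq hstep
    _ = x.toWord.dropLast := by rw [List.append_nil]; exact reduce_eq_of_chain' _ hred

/-- extension case -/
lemma toWord_mul_ext (x : FreeGroup α) (i : α) (c : Bool)
    (h : x.toWord.getLast? ≠ some (i, !c)) :
    (x * FreeGroup.mk [(i, c)]).toWord = x.toWord ++ [(i, c)] := by
  have hred : List.Chain' RR (x.toWord ++ [(i, c)]) := by
    rw [List.Chain', List.isChain_append]
    refine ⟨chain'_of_reduce_eq _ x.reduce_toWord, List.isChain_singleton _, ?_⟩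
    intro p hp q hq
    simp at hq
    subst hq
    intro ⟨h1, h2⟩
    apply h
    have hp' : x.toWord.getLast? = some p := hp
    rw [hp']
    have : p = (i, !c) := Prod.ext h1 h2
    rw [this]
  calc (x * FreeGroup.mk [(i, c)]).toWord
      = FreeGroup.reduce (x.toWord ++ [(i, c)]) := by
        conv_lhs => rw [← FreeGroup.mk_toWord (x := x)]
        rw [FreeGroup.mul_mk, FreeGroup.toWord_mk]
    _ = x.toWord ++ [(i, c)] := reduce_eq_of_chain' _ hred

lemma wlen_mul_cancel (x : FreeGroup (Fin 2)) (i : Fin 2) (c : Bool)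
    (h : x.toWord.getLast? = some (i, !c)) :
    wlen (x * FreeGroup.mk [(i, c)]) + 1 = wlen x := by
  have hne : x.toWord ≠ [] := by intro h0; rw [h0] at h; simp at h
  have hpos : 1 ≤ x.toWord.length := List.length_pos_iff.mpr hne
  rw [wlen, wlen, toWord_mul_cancel x i c h, List.length_dropLast]
  omega

lemma wlen_mul_ext (x : FreeGroup (Fin 2)) (i : Fin 2) (c : Bool)
    (h : x.toWord.getLast? ≠ some (i, !c)) :
    wlen (x * FreeGroup.mk [(i, c)]) = wlen x + 1 := by
  rw [wlen, wlen, toWord_mul_ext x i c h]; simp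

lemma wlen_double (x : FreeGroup (Fin 2)) (i k : Fin 2) (hik : i ≠ k)
    (h : x.toWord.getLast? ≠ some (i, true)) :
    wlen (x * FreeGroup.mk [(i, false)] * FreeGroup.mk [(k, true)]) = wlen x + 2 := by
  have h' : x.toWord.getLast? ≠ some (i, !false) := by simpa using h
  have e1 : (x * FreeGroup.mk [(i, false)]).toWord = x.toWord ++ [(i, false)] :=
    toWord_mul_ext x i false h'
  have e2 : (x * FreeGroup.mk [(i, false)]).toWord.getLast? = some (i, false) := by
    rw [e1]; simp
  rw [wlen_mul_ext _ k true (by rw [e2]; simp [hik]), wlen_mul_ext _ i false h']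

end Stmt16Aux

/-- For every nonempty `x` in the free group on `a, b`, among the three triples
`(x, xa, xb)`, `(xa⁻¹, x, xa⁻¹b)`, `(xb⁻¹, xb⁻¹a, x)` of the family
`{(z, za, zb)}`, exactly one has `x` not minimal with respect to word length,
determined by the last letter of `x`: the first if `x` ends in `a⁻¹` or `b⁻¹`,
the second if it ends in `a`, the third if it ends in `b`. -/
theorem stmt16 (x : FreeGroup (Fin 2)) (hx : x ≠ 1)
    (a b : FreeGroup (Fin 2)) (ha : a = FreeGroup.of 0) (hb : b = FreeGroup.of 1) :
    ((x.toWord.getLast? = some (0, false) ∨ x.toWord.getLast? = some (1, false)) →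
      (NotMinIn x (x, x * a, x * b) ∧
        ¬ NotMinIn x (x * a⁻¹, x, x * a⁻¹ * b) ∧
        ¬ NotMinIn x (x * b⁻¹, x * b⁻¹ * a, x))) ∧
    (x.toWord.getLast? = some (0, true) →
      (¬ NotMinIn x (x, x * a, x * b) ∧
        NotMinIn x (x * a⁻¹, x, x * a⁻¹ * b) ∧
        ¬ NotMinIn x (x * b⁻¹, x * b⁻¹ * a, x))) ∧
    (x.toWord.getLast? = some (1, true) →
      (¬ NotMinIn x (x, x * a, x * b) ∧
        ¬ NotMinIn x (x * a⁻¹, x, x * a⁻¹ * b) ∧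
        NotMinIn x (x * b⁻¹, x * b⁻¹ * a, x))) := by
  subst ha hb
  open Stmt16Aux in
  have hinv0 : (FreeGroup.of (0 : Fin 2))⁻¹ = FreeGroup.mk [((0 : Fin 2), false)] := rfl
  have hinv1 : (FreeGroup.of (1 : Fin 2))⁻¹ = FreeGroup.mk [((1 : Fin 2), false)] := rfl
  have hof0 : FreeGroup.of (0 : Fin 2) = FreeGroup.mk [((0 : Fin 2), true)] := rfl
  have hof1 : FreeGroup.of (1 : Fin 2) = FreeGroup.mk [((1 : Fin 2), true)] := rfl
  rw [hinv0, hinv1, hof0, hof1]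
  have hx1 : 1 ≤ wlen x := by
    rw [wlen]
    have : x.toWord ≠ [] := fun h0 => hx (FreeGroup.toWord_eq_nil_iff.mp h0)
    exact List.length_pos_iff.mpr this
  refine ⟨?_, ?_, ?_⟩
  · rintro (h | h)
    · have c1 : wlen (x * FreeGroup.mk [((0:Fin 2), true)]) + 1 = wlen x :=
        Stmt16Aux.wlen_mul_cancel x 0 true (by rw [h]; rfl)
      have e1 : wlen (x * FreeGroup.mk [((0:Fin 2), false)]) = wlen x + 1 :=
        Stmt16Aux.wlen_mul_ext x 0 false (by rw [h]; decide)
      have d1 : wlen (x * FreeGroup.mk [((0:Fin 2), false)] * FreeGroup.mk [((1:Fin 2), true)])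
          = wlen x + 2 := Stmt16Aux.wlen_double x 0 1 (by decide) (by rw [h]; decide)
      have e2 : wlen (x * FreeGroup.mk [((1:Fin 2), false)]) = wlen x + 1 :=
        Stmt16Aux.wlen_mul_ext x 1 false (by rw [h]; decide)
      have d2 : wlen (x * FreeGroup.mk [((1:Fin 2), false)] * FreeGroup.mk [((0:Fin 2), true)])
          = wlen x + 2 := Stmt16Aux.wlen_double x 1 0 (by decide) (by rw [h]; decide)
      refine ⟨?_, ?_, ?_⟩ <;> unfold NotMinIn <;> dsimp only <;> omega
    · have c1 : wlen (x * FreeGroup.mk [((1:Fin 2), true)]) + 1 = wlen x :=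
        Stmt16Aux.wlen_mul_cancel x 1 true (by rw [h]; rfl)
      have e1 : wlen (x * FreeGroup.mk [((0:Fin 2), false)]) = wlen x + 1 :=
        Stmt16Aux.wlen_mul_ext x 0 false (by rw [h]; decide)
      have d1 : wlen (x * FreeGroup.mk [((0:Fin 2), false)] * FreeGroup.mk [((1:Fin 2), true)])
          = wlen x + 2 := Stmt16Aux.wlen_double x 0 1 (by decide) (by rw [h]; decide)
      have e2 : wlen (x * FreeGroup.mk [((1:Fin 2), false)]) = wlen x + 1 :=
        Stmt16Aux.wlen_mul_ext x 1 false (by rw [h]; decide)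
      have d2 : wlen (x * FreeGroup.mk [((1:Fin 2), false)] * FreeGroup.mk [((0:Fin 2), true)])
          = wlen x + 2 := Stmt16Aux.wlen_double x 1 0 (by decide) (by rw [h]; decide)
      refine ⟨?_, ?_, ?_⟩ <;> unfold NotMinIn <;> dsimp only <;> omega
  · intro h
    have e0 : wlen (x * FreeGroup.mk [((0:Fin 2), true)]) = wlen x + 1 :=
      Stmt16Aux.wlen_mul_ext x 0 true (by rw [h]; decide)
    have e1 : wlen (x * FreeGroup.mk [((1:Fin 2), true)]) = wlen x + 1 :=
      Stmt16Aux.wlen_mul_ext x 1 true (by rw [h]; decide)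
    have c1 : wlen (x * FreeGroup.mk [((0:Fin 2), false)]) + 1 = wlen x :=
      Stmt16Aux.wlen_mul_cancel x 0 false (by rw [h]; rfl)
    have e2 : wlen (x * FreeGroup.mk [((1:Fin 2), false)]) = wlen x + 1 :=
      Stmt16Aux.wlen_mul_ext x 1 false (by rw [h]; decide)
    have d2 : wlen (x * FreeGroup.mk [((1:Fin 2), false)] * FreeGroup.mk [((0:Fin 2), true)])
        = wlen x + 2 := Stmt16Aux.wlen_double x 1 0 (by decide) (by rw [h]; decide)
    refine ⟨?_, ?_, ?_⟩ <;> unfold NotMinIn <;> dsimp only <;> omega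
  · intro h
    have e0 : wlen (x * FreeGroup.mk [((0:Fin 2), true)]) = wlen x + 1 :=
      Stmt16Aux.wlen_mul_ext x 0 true (by rw [h]; decide)
    have e1 : wlen (x * FreeGroup.mk [((1:Fin 2), true)]) = wlen x + 1 :=
      Stmt16Aux.wlen_mul_ext x 1 true (by rw [h]; decide)
    have c1 : wlen (x * FreeGroup.mk [((1:Fin 2), false)]) + 1 = wlen x :=
      Stmt16Aux.wlen_mul_cancel x 1 false (by rw [h]; rfl)
    have e2 : wlen (x * FreeGroup.mk [((0:Fin 2), false)]) = wlen x + 1 :=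
      Stmt16Aux.wlen_mul_ext x 0 false (by rw [h]; decide)
    have d1 : wlen (x * FreeGroup.mk [((0:Fin 2), false)] * FreeGroup.mk [((1:Fin 2), true)])
        = wlen x + 2 := Stmt16Aux.wlen_double x 0 1 (by decide) (by rw [h]; decide)
    refine ⟨?_, ?_, ?_⟩ <;> unfold NotMinIn <;> dsimp only <;> omega
end

section
/- Let $F$ be a 3-graph admitting a max-layered structure: a linear order $\preceq$ on $V(F)$ and $\varphi : \binom{V(F)}{2} \to \mathbb{N}$ such that in the set $\mathcal{A} = \{(\varphi(uv), \varphi(uw), \varphi(vw)) : uvw \in E(F), u \prec v \prec w\}$, each triple has a unique maximal entry and distinct triples have distinct maxima. Then $F$ admits every palette $\mathcal{Q} = (\mathcal{C}, \mathcal{A}')$ with positive minimum codegree, i.e., such that for all $a, b \in \mathcal{C}$ each of the sets $\{c : (a,b,c) \in \mathcal{A}'\}$, $\{c : (a,c,b) \in \mathcal{A}'\}$, $\{c : (c,a,b) \in \mathcal{A}'\}$ is nonempty. -/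
/-- A set `A ⊆ ℕ³` is max-degenerate: each triple has a unique maximal entry, and
distinct triples have distinct maxima. -/
def MaxDegenerate (A : Set (ℕ × ℕ × ℕ)) : Prop :=
  (∀ t ∈ A,
    (t.2.1 < t.1 ∧ t.2.2 < t.1) ∨ (t.1 < t.2.1 ∧ t.2.2 < t.2.1) ∨
    (t.1 < t.2.2 ∧ t.2.1 < t.2.2)) ∧
  ∀ t ∈ A, ∀ s ∈ A, t ≠ s →
    max t.1 (max t.2.1 t.2.2) ≠ max s.1 (max s.2.1 s.2.2)

open scoped Classical

/-- The greedy coloring: assign to each natural number `n` (a `φ`-value of a pair) a color,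
by strong recursion on `n`.  If `n` is the maximum entry of some (necessarily unique) triple
in `A`, choose a color completing the colors already assigned to the two smaller entries,
using the positive-codegree hypothesis; otherwise pick an arbitrary color. -/
noncomputable def greedy {γ : Type*} [Nonempty γ] (A : Set (ℕ × ℕ × ℕ)) (A' : Set (γ × γ × γ))
    (hδ : ∀ a b : γ, (∃ c, (a, b, c) ∈ A') ∧ (∃ c, (a, c, b) ∈ A') ∧ (∃ c, (c, a, b) ∈ A'))
    (hA : ∀ t ∈ A, (t.2.1 < t.1 ∧ t.2.2 < t.1) ∨ (t.1 < t.2.1 ∧ t.2.2 < t.2.1) ∨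
      (t.1 < t.2.2 ∧ t.2.1 < t.2.2)) : ℕ → γ
  | n =>
    if h : ∃ t, t ∈ A ∧ max t.1 (max t.2.1 t.2.2) = n then
      if h1 : h.choose.2.1 < h.choose.1 ∧ h.choose.2.2 < h.choose.1 then
        have l1 : h.choose.2.1 < n := by have := h.choose_spec.2; omega
        have l2 : h.choose.2.2 < n := by have := h.choose_spec.2; omega
        (hδ (greedy A A' hδ hA h.choose.2.1) (greedy A A' hδ hA h.choose.2.2)).2.2.choose
      else if h2 : h.choose.1 < h.choose.2.1 ∧ h.choose.2.2 < h.choose.2.1 then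
        have l1 : h.choose.1 < n := by have := h.choose_spec.2; omega
        have l2 : h.choose.2.2 < n := by have := h.choose_spec.2; omega
        (hδ (greedy A A' hδ hA h.choose.1) (greedy A A' hδ hA h.choose.2.2)).2.1.choose
      else
        have h3 : h.choose.1 < h.choose.2.2 ∧ h.choose.2.1 < h.choose.2.2 := by
          rcases hA _ h.choose_spec.1 with a | a | a
          · exact absurd a h1
          · exact absurd a h2
          · exact a
        have l1 : h.choose.1 < n := by have := h.choose_spec.2; omega
        have l2 : h.choose.2.1 < n := by have := h.choose_spec.2; omega
        (hδ (greedy A A' hδ hA h.choose.1) (greedy A A' hδ hA h.choose.2.1)).1.choose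
    else Classical.arbitrary γ
termination_by n => n

open scoped Classical

/-- The greedy coloring works: every triple in a max-degenerate set `A` is mapped to an
admissible triple of `A'`. -/
theorem greedy_spec {γ : Type*} [Nonempty γ] (A : Set (ℕ × ℕ × ℕ)) (A' : Set (γ × γ × γ))
    (hδ : ∀ a b : γ, (∃ c, (a, b, c) ∈ A') ∧ (∃ c, (a, c, b) ∈ A') ∧ (∃ c, (c, a, b) ∈ A'))
    (hM : MaxDegenerate A) :
    ∀ t ∈ A,
      (greedy A A' hδ hM.1 t.1, greedy A A' hδ hM.1 t.2.1, greedy A A' hδ hM.1 t.2.2) ∈ A' := by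
  classical
  intro t ht
  set g := greedy A A' hδ hM.1 with hgdef
  set n := max t.1 (max t.2.1 t.2.2) with hn
  have h : ∃ s, s ∈ A ∧ max s.1 (max s.2.1 s.2.2) = n := ⟨t, ht, rfl⟩
  have hts : h.choose = t := by
    by_contra hne
    exact hM.2 _ h.choose_spec.1 t ht hne h.choose_spec.2
  have hgn : g n = if h1 : h.choose.2.1 < h.choose.1 ∧ h.choose.2.2 < h.choose.1 then
        (hδ (g h.choose.2.1) (g h.choose.2.2)).2.2.choose
      else if h2 : h.choose.1 < h.choose.2.1 ∧ h.choose.2.2 < h.choose.2.1 then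
        (hδ (g h.choose.1) (g h.choose.2.2)).2.1.choose
      else
        (hδ (g h.choose.1) (g h.choose.2.1)).1.choose := by
    rw [hgdef, greedy]
    rw [dif_pos h]
  rcases hM.1 t ht with hc | hc | hc
  · have e : t.1 = n := by omega
    rw [dif_pos (hts ▸ hc : h.choose.2.1 < h.choose.1 ∧ h.choose.2.2 < h.choose.1), hts] at hgn
    have := (hδ (g t.2.1) (g t.2.2)).2.2.choose_spec
    rw [← hgn, ← e] at this
    exact this
  · have e : t.2.1 = n := by omega
    have nh1 : ¬(h.choose.2.1 < h.choose.1 ∧ h.choose.2.2 < h.choose.1) := by rw [hts]; omega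
    rw [dif_neg nh1,
      dif_pos (hts ▸ hc : h.choose.1 < h.choose.2.1 ∧ h.choose.2.2 < h.choose.2.1), hts] at hgn
    have := (hδ (g t.1) (g t.2.2)).2.1.choose_spec
    rw [← hgn, ← e] at this
    exact this
  · have e : t.2.2 = n := by omega
    have nh1 : ¬(h.choose.2.1 < h.choose.1 ∧ h.choose.2.2 < h.choose.1) := by rw [hts]; omega
    have nh2 : ¬(h.choose.1 < h.choose.2.1 ∧ h.choose.2.2 < h.choose.2.1) := by rw [hts]; omega
    rw [dif_neg nh1, dif_neg nh2, hts] at hgn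
    have := (hδ (g t.1) (g t.2.1)).1.choose_spec
    rw [← hgn, ← e] at this
    exact this

/-- A 3-graph with a max-layered structure admits every palette with positive
minimum codegree (for all `a, b` each of the three codegree sets is nonempty). -/
theorem stmt19 {V γ : Type*} [DecidableEq V] [Fintype V] [Nonempty γ]
    (E : Set (Finset V))
    (h : ∃ (f : V → ℕ) (φ : V → V → ℕ), Function.Injective f ∧
      (∀ u v, φ u v = φ v u) ∧
      MaxDegenerate {t | ∃ u v w : V, ({u, v, w} : Finset V) ∈ E ∧
        f u < f v ∧ f v < f w ∧ t = (φ u v, φ u w, φ v w)})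
    (A' : Set (γ × γ × γ))
    (hδ : ∀ a b : γ, (∃ c, (a, b, c) ∈ A') ∧ (∃ c, (a, c, b) ∈ A') ∧
      (∃ c, (c, a, b) ∈ A')) :
    Admits E A' := by
  obtain ⟨f, φ, hf, hφ, hM⟩ := h
  set A : Set (ℕ × ℕ × ℕ) := {t | ∃ u v w : V, ({u, v, w} : Finset V) ∈ E ∧
    f u < f v ∧ f v < f w ∧ t = (φ u v, φ u w, φ v w)} with hA
  refine ⟨f, fun u v => greedy A A' hδ hM.1 (φ u v), hf, fun u v => congrArg (greedy A A' hδ hM.1) (hφ u v), ?_⟩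
  intro u v w he huv hvw
  have hmem : ((φ u v, φ u w, φ v w) : ℕ × ℕ × ℕ) ∈ A := ⟨u, v, w, he, huv, hvw, rfl⟩
  exact greedy_spec A A' hδ hM _ hmem
end
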